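/- arXiv:1207.5258 — 8 statements merged into one kernel-verified Lean document; each statement's English description precedes it below -/
import Mathlib

section
/- Let M ⊆ ℝⁿ be a C² manifold and let V be an open set containing M. For y ∈ M and ε > 0 set V_ε(y) := {z + v : z ∈ M, v ∈ N_zM, |y − z| < ε, |v| < ε}, and assume that for every y ∈ M there exists ε > 0 with V_ε(y) ⊆ V. Then for every real κ > 0 there exists a strictly positive κ-Lipschitz function δ : M → ℝ such that the set U_δ := {y + v : y ∈ M, v ∈ N_yM, |v| < δ(y)} is contained in V. -/
open Filter Topology Metric

noncomputable section

/-- `M ⊆ ℝⁿ` is a `C^p` manifold of dimension `d`: around each of its points it is the zero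
set of a `C^p` map into `ℝ^(n-d)` whose derivative is surjective. -/
def IsCpManifold (n : ℕ) (p : ℕ∞) (d : ℕ) (M : Set (EuclideanSpace ℝ (Fin n))) : Prop :=
  ∀ x ∈ M, ∃ (U : Set (EuclideanSpace ℝ (Fin n)))
    (F : EuclideanSpace ℝ (Fin n) → EuclideanSpace ℝ (Fin (n - d))),
    IsOpen U ∧ x ∈ U ∧ ContDiffOn ℝ p F U ∧ M ∩ U = U ∩ F ⁻¹' {0} ∧
      Function.Surjective (fderiv ℝ F x)

/-- The tangent space of `M` at `x`: the linear span of the tangent cone. -/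
def tangentSp (n : ℕ) (M : Set (EuclideanSpace ℝ (Fin n))) (x : EuclideanSpace ℝ (Fin n)) :
    Submodule ℝ (EuclideanSpace ℝ (Fin n)) :=
  Submodule.span ℝ (tangentConeAt ℝ M x)

/-- The normal space of `M` at `x`: the orthogonal complement of the tangent space. -/
def normalSp (n : ℕ) (M : Set (EuclideanSpace ℝ (Fin n))) (x : EuclideanSpace ℝ (Fin n)) :
    Submodule ℝ (EuclideanSpace ℝ (Fin n)) :=
  (tangentSp n M x)ᗮ


/-- **Existence of a tubular neighborhood of prescribed Lipschitz width.** -/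
theorem exists_tubular_neighborhood
    (n : ℕ) (M V : Set (EuclideanSpace ℝ (Fin n)))
    (hM : ∃ d : ℕ, IsCpManifold n 2 d M)
    (hV : IsOpen V) (hMV : M ⊆ V)
    (hloc : ∀ y ∈ M, ∃ ε > (0 : ℝ), ∀ z ∈ M, ∀ v ∈ normalSp n M z,
      ‖y - z‖ < ε → ‖v‖ < ε → z + v ∈ V)
    (κ : ℝ) (hκ : 0 < κ) :
    ∃ δ : EuclideanSpace ℝ (Fin n) → ℝ,
      (∀ y ∈ M, 0 < δ y) ∧
      (∀ x ∈ M, ∀ y ∈ M, |δ x - δ y| ≤ κ * ‖x - y‖) ∧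
      (∀ y ∈ M, ∀ v ∈ normalSp n M y, ‖v‖ < δ y → y + v ∈ V) := by
  classical
  choose! ρ hρpos hρ using hloc
  rcases M.eq_empty_or_nonempty with hMe | hne
  · exact ⟨fun _ => 1, by simp [hMe], by simp [hMe], by simp [hMe]⟩
  haveI : Nonempty M := hne.to_subtype
  set c : ℝ := min κ 1 with hc
  have hc0 : 0 < c := lt_min hκ one_pos
  have hcκ : c ≤ κ := min_le_left _ _
  have hc1 : c ≤ 1 := min_le_right _ _
  set f : M → EuclideanSpace ℝ (Fin n) → ℝ :=
    fun w y => max 0 (min (c * ρ w) 1 - κ * ‖y - (w : EuclideanSpace ℝ (Fin n))‖) with hf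
  have hbdd : ∀ y, BddAbove (Set.range fun w : M => f w y) := by
    intro y
    refine ⟨1, ?_⟩
    rintro _ ⟨w, rfl⟩
    have h1 : min (c * ρ w) 1 - κ * ‖y - (w : EuclideanSpace ℝ (Fin n))‖ ≤ 1 := by
      have h2 := min_le_right (c * ρ w) 1
      nlinarith [norm_nonneg (y - (w : EuclideanSpace ℝ (Fin n))), hκ.le]
    exact max_le (by norm_num) h1
  set δ : EuclideanSpace ℝ (Fin n) → ℝ := fun y => ⨆ w : M, f w y with hδ
  have hlip : ∀ x y, δ x ≤ δ y + κ * ‖x - y‖ := by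
    intro x y
    refine ciSup_le fun w => ?_
    have htri : ‖y - (w : EuclideanSpace ℝ (Fin n))‖ ≤ ‖y - x‖ + ‖x - (w : EuclideanSpace ℝ (Fin n))‖ := by
      simpa [dist_eq_norm] using dist_triangle y x (w : EuclideanSpace ℝ (Fin n))
    have hyx : ‖y - x‖ = ‖x - y‖ := norm_sub_rev y x
    have h1 : f w x ≤ f w y + κ * ‖x - y‖ := by
      have ha : min (c * ρ w) 1 - κ * ‖x - (w : EuclideanSpace ℝ (Fin n))‖ ≤
          (min (c * ρ w) 1 - κ * ‖y - (w : EuclideanSpace ℝ (Fin n))‖) + κ * ‖x - y‖ := by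
        nlinarith [hκ.le]
      refine max_le ?_ ?_
      · positivity
      · exact ha.trans (add_le_add (le_max_right _ _) le_rfl)
    exact h1.trans (add_le_add (le_ciSup (hbdd y) w) le_rfl)
  refine ⟨δ, ?_, ?_, ?_⟩
  · intro y hy
    have h1 : f ⟨y, hy⟩ y ≤ δ y := le_ciSup (hbdd y) ⟨y, hy⟩
    have h2 : (0 : ℝ) < f ⟨y, hy⟩ y := by
      have : 0 < min (c * ρ y) 1 := lt_min (mul_pos hc0 (hρpos y hy)) one_pos
      simp only [hf, sub_self, norm_zero]
      simp only [mul_zero, sub_zero]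
      exact lt_max_of_lt_right this
    exact h2.trans_le h1
  · intro x hx y hy
    rw [abs_sub_le_iff]
    constructor
    · linarith [hlip x y]
    · have := hlip y x
      rw [norm_sub_rev] at this
      linarith
  · intro y hy v hv hvδ
    obtain ⟨w, hw⟩ := (lt_ciSup_iff (hbdd y)).1 hvδ
    have hv0 : (0 : ℝ) ≤ ‖v‖ := norm_nonneg v
    have hw' : ‖v‖ < min (c * ρ w) 1 - κ * ‖y - (w : EuclideanSpace ℝ (Fin n))‖ := by
      rcases max_cases (0 : ℝ) (min (c * ρ w) 1 - κ * ‖y - (w : EuclideanSpace ℝ (Fin n))‖) with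
        ⟨h1, h2⟩ | ⟨h1, h2⟩
      · exfalso; rw [hf] at hw; simp only at hw; rw [h1] at hw; linarith
      · rw [hf] at hw; simp only at hw; linarith
    have hmin : min (c * ρ w) 1 ≤ c * ρ w := min_le_left _ _
    have hnn : 0 ≤ κ * ‖y - (w : EuclideanSpace ℝ (Fin n))‖ := by positivity
    have hvρ : ‖v‖ < c * ρ w := by linarith
    have hρw0 : 0 < ρ w := by nlinarith
    have hvρ' : ‖v‖ < ρ w := by nlinarith
    have hyw : ‖(w : EuclideanSpace ℝ (Fin n)) - y‖ < ρ w := by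
      rw [norm_sub_rev]
      have hk : κ * ‖y - (w : EuclideanSpace ℝ (Fin n))‖ < c * ρ w := by linarith
      have : κ * ‖y - (w : EuclideanSpace ℝ (Fin n))‖ < κ * ρ w := by nlinarith
      exact lt_of_mul_lt_mul_left this hκ.le
    exact hρ w w.2 y hy v hv hyw hvρ'

end
end

section
/- Let L and M be C² manifolds in ℝⁿ with L ⊆ (cl M) \ M, and let V be a neighborhood of L and U a neighborhood of M such that for every w ∈ V ∩ U the set equality P_L(w) = ⋃_{z ∈ P_M(w)} P_L(z) holds. Let x ∈ M ∩ V and v ∈ N_xM, and suppose t > 0 is such that x + t·v ∈ V ∩ U and P_M(x + t·v) = {x}. Then v ∈ N_yL for every y ∈ P_L(x). -/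
open Filter Topology Metric

noncomputable section

/-- The metric projection of `x` onto a set `S`: the set of nearest points of `S` to `x`. -/
def metricProj {n : ℕ} (S : Set (EuclideanSpace ℝ (Fin n))) (x : EuclideanSpace ℝ (Fin n)) :
    Set (EuclideanSpace ℝ (Fin n)) :=
  {y ∈ S | dist x y = Metric.infDist x S}

/- Auxiliary lemmas -/

/-- Through each kernel vector of the defining submersion there is a differentiable curve
inside the manifold. -/
lemma exists_curve_aux {n m : ℕ} {L : Set (EuclideanSpace ℝ (Fin n))}
    {y : EuclideanSpace ℝ (Fin n)}
    {U : Set (EuclideanSpace ℝ (Fin n))} {F : EuclideanSpace ℝ (Fin n) → EuclideanSpace ℝ (Fin m)}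
    (hyL : y ∈ L) (hUo : IsOpen U) (hyU : y ∈ U)
    (hF : ContDiffOn ℝ 2 F U) (hLU : L ∩ U = U ∩ F ⁻¹' {0})
    (hsurj : Function.Surjective (fderiv ℝ F y))
    {u : EuclideanSpace ℝ (Fin n)} (hu : fderiv ℝ F y u = 0) :
    ∃ γ : ℝ → EuclideanSpace ℝ (Fin n),
      γ 0 = y ∧ HasDerivAt γ u 0 ∧ ∀ᶠ s in 𝓝 (0:ℝ), γ s ∈ L := by
  have hFy : F y = 0 := by
    have : y ∈ U ∩ F ⁻¹' {0} := hLU ▸ ⟨hyL, hyU⟩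
    simpa using this.2
  set f' := fderiv ℝ F y with hf'def
  have hstrict : HasStrictFDerivAt F f' y :=
    (hF.contDiffAt (hUo.mem_nhds hyU)).hasStrictFDerivAt (by norm_num)
  have hrange : f'.range = ⊤ := LinearMap.range_eq_top.2 hsurj
  set uk : f'.ker := ⟨u, hu⟩ with hukdef
  set ψ := hstrict.implicitFunction F f' hrange with hψdef
  refine ⟨fun s => ψ (F y) (s • uk), ?_, ?_, ?_⟩
  · simp [hψdef]
  · have hd : HasStrictFDerivAt (ψ (F y)) (f'.ker).subtypeL 0 :=
      hstrict.to_implicitFunction hrange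
    have h1 : HasDerivAt (fun s : ℝ => s • uk) uk 0 := by
      simpa using (hasDerivAt_id (0:ℝ)).smul_const uk
    have hd' : HasFDerivAt (ψ (F y)) (f'.ker).subtypeL ((0:ℝ) • uk) := by
      rw [zero_smul]; exact hd.hasFDerivAt
    have := hd'.comp_hasDerivAt 0 h1
    exact this
  · have hmap := hstrict.map_implicitFunction_eq hrange
    have htend : Tendsto (fun s : ℝ => ((F y, s • uk) : EuclideanSpace ℝ (Fin m) × f'.ker))
        (𝓝 0) (𝓝 (F y, 0)) := by
      refine Tendsto.prodMk_nhds tendsto_const_nhds ?_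
      have : Tendsto (fun s : ℝ => s • uk) (𝓝 0) (𝓝 ((0:ℝ) • uk)) :=
        ((continuous_id.smul continuous_const).tendsto (0:ℝ))
      simpa using this
    have h2 : ∀ᶠ s in 𝓝 (0:ℝ), F (ψ (F y) (s • uk)) = F y := htend.eventually hmap
    have hcont : ContinuousAt (fun s : ℝ => ψ (F y) (s • uk)) 0 := by
      have hd : HasStrictFDerivAt (ψ (F y)) (f'.ker).subtypeL 0 :=
        hstrict.to_implicitFunction hrange
      have h1 : HasDerivAt (fun s : ℝ => s • uk) uk 0 := by
        simpa using (hasDerivAt_id (0:ℝ)).smul_const uk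
      have hd' : HasFDerivAt (ψ (F y)) (f'.ker).subtypeL ((0:ℝ) • uk) := by
        rw [zero_smul]; exact hd.hasFDerivAt
      exact (hd'.comp_hasDerivAt 0 h1).continuousAt
    have h0 : ψ (F y) ((0:ℝ) • uk) = y := by simp [hψdef]
    have hU' : ∀ᶠ s in 𝓝 (0:ℝ), ψ (F y) (s • uk) ∈ U := by
      have := hcont.preimage_mem_nhds (hUo.mem_nhds (by rw [h0] at *; simpa [h0] using hyU))
      · exact this
    filter_upwards [h2, hU'] with s hs hsU
    have : ψ (F y) (s • uk) ∈ U ∩ F ⁻¹' {0} :=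
      ⟨hsU, by simp only [Set.mem_preimage, Set.mem_singleton_iff]; rw [hs, hFy]⟩
    rw [← hLU] at this
    exact this.1

/-- First-order optimality: a nearest point direction is orthogonal to any differentiable curve
in the set through the nearest point. -/
lemma inner_eq_zero_of_proj_aux {n : ℕ} {L : Set (EuclideanSpace ℝ (Fin n))}
    {p y : EuclideanSpace ℝ (Fin n)} (hy : y ∈ metricProj L p)
    {γ : ℝ → EuclideanSpace ℝ (Fin n)} {u : EuclideanSpace ℝ (Fin n)}
    (h0 : γ 0 = y) (hγ : HasDerivAt γ u 0) (hmem : ∀ᶠ s in 𝓝 (0:ℝ), γ s ∈ L) :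
    inner (𝕜 := ℝ) (p - y) u = 0 := by
  have hg : HasDerivAt (fun s => p - γ s) (0 - u) 0 := (hasDerivAt_const 0 p).sub hγ
  have hf : HasDerivAt (fun s => inner (𝕜 := ℝ) (p - γ s) (p - γ s))
      (inner (𝕜 := ℝ) (p - γ 0) (0 - u) + inner (𝕜 := ℝ) (0 - u) (p - γ 0)) 0 :=
    HasDerivAt.inner ℝ hg hg
  have hmin : IsLocalMin (fun s => inner (𝕜 := ℝ) (p - γ s) (p - γ s)) 0 := by
    filter_upwards [hmem] with s hs
    have h1 : inner (𝕜 := ℝ) (p - γ 0) (p - γ 0) = (Metric.infDist p L)^2 := by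
      rw [real_inner_self_eq_norm_sq, ← dist_eq_norm, h0, hy.2]
    have h2 : inner (𝕜 := ℝ) (p - γ s) (p - γ s) = (dist p (γ s))^2 := by
      rw [real_inner_self_eq_norm_sq, ← dist_eq_norm]
    rw [h1, h2]
    exact pow_le_pow_left₀ Metric.infDist_nonneg (Metric.infDist_le_dist_of_mem hs) 2
  have hz := hmin.hasDerivAt_eq_zero hf
  rw [h0] at hz
  simp only [zero_sub, inner_neg_left, inner_neg_right] at hz
  have hcomm : inner (𝕜 := ℝ) u (p - y) = inner (𝕜 := ℝ) (p - y) u := real_inner_comm _ _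
  rw [hcomm] at hz
  linarith

/-- The tangent cone of a level set is contained in the kernel of the derivative. -/
lemma tangentCone_subset_ker_aux {n m : ℕ} {L : Set (EuclideanSpace ℝ (Fin n))}
    {y : EuclideanSpace ℝ (Fin n)}
    {U : Set (EuclideanSpace ℝ (Fin n))} {F : EuclideanSpace ℝ (Fin n) → EuclideanSpace ℝ (Fin m)}
    (hyL : y ∈ L) (hUo : IsOpen U) (hyU : y ∈ U)
    (hF : ContDiffOn ℝ 2 F U) (hLU : L ∩ U = U ∩ F ⁻¹' {0}) :
    ∀ u ∈ tangentConeAt ℝ L y, fderiv ℝ F y u = 0 := by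
  have hdiff : DifferentiableAt ℝ F y :=
    (hF.contDiffAt (hUo.mem_nhds hyU)).differentiableAt (by norm_num)
  have h1 : HasFDerivWithinAt F (fderiv ℝ F y) (L ∩ U) y :=
    hdiff.hasFDerivAt.hasFDerivWithinAt
  have hzero : ∀ z ∈ L ∩ U, F z = 0 := by
    intro z hz
    have : z ∈ U ∩ F ⁻¹' {0} := hLU ▸ hz
    simpa using this.2
  have h2 : HasFDerivWithinAt F (0 : EuclideanSpace ℝ (Fin n) →L[ℝ] EuclideanSpace ℝ (Fin m))
      (L ∩ U) y := by
    have hc : HasFDerivWithinAt (fun _ => F y)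
        (0 : EuclideanSpace ℝ (Fin n) →L[ℝ] EuclideanSpace ℝ (Fin m)) (L ∩ U) y :=
      hasFDerivWithinAt_const (F y) y (L ∩ U)
    exact hc.congr (fun z hz => by rw [hzero z hz, hzero y ⟨hyL, hyU⟩]) rfl
  have := h1.unique_on h2
  rw [tangentConeAt_inter_nhds (hUo.mem_nhds hyU)] at this
  intro u hu
  simpa using this hu

/-- **Normal flatness propagates normal vectors.** -/
theorem normal_vector_of_normally_flat
    (n : ℕ) (L M : Set (EuclideanSpace ℝ (Fin n)))
    (hL : ∃ d : ℕ, IsCpManifold n 2 d L) (hM : ∃ d : ℕ, IsCpManifold n 2 d M)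
    (hLM : L ⊆ closure M \ M)
    (V U : Set (EuclideanSpace ℝ (Fin n)))
    (hV : IsOpen V) (hU : IsOpen U) (hLV : L ⊆ V) (hMU : M ⊆ U)
    (hflat : ∀ w ∈ V ∩ U, metricProj L w = ⋃ z ∈ metricProj M w, metricProj L z)
    (x : EuclideanSpace ℝ (Fin n)) (hx : x ∈ M ∩ V)
    (v : EuclideanSpace ℝ (Fin n)) (hv : v ∈ normalSp n M x)
    (t : ℝ) (ht : 0 < t) (htv : x + t • v ∈ V ∩ U)
    (hproj : metricProj M (x + t • v) = {x}) :
    ∀ y ∈ metricProj L x, v ∈ normalSp n L y := by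
  intro y hy
  obtain ⟨dL, hLm⟩ := hL
  obtain ⟨UL, F, hUo, hyU, hF, hLU, hsurj⟩ := hLm y hy.1
  -- `y` is also a nearest point of `L` to `x + t • v`
  have hyw : y ∈ metricProj L (x + t • v) := by
    rw [hflat _ htv, hproj]
    simpa using hy
  -- for every kernel vector `u`, the inner product with `v` vanishes
  have key : ∀ u : EuclideanSpace ℝ (Fin n), fderiv ℝ F y u = 0 → inner (𝕜 := ℝ) u v = 0 := by
    intro u hu
    obtain ⟨γ, h0, hγ, hmem⟩ := exists_curve_aux hy.1 hUo hyU hF hLU hsurj hu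
    have e1 : inner (𝕜 := ℝ) (x - y) u = 0 :=
      inner_eq_zero_of_proj_aux hy h0 hγ hmem
    have e2 : inner (𝕜 := ℝ) (x + t • v - y) u = 0 :=
      inner_eq_zero_of_proj_aux hyw h0 hγ hmem
    have hsplit : (x + t • v - y : EuclideanSpace ℝ (Fin n)) = (x - y) + t • v := by abel
    rw [hsplit, inner_add_left, e1, zero_add, real_inner_smul_left] at e2
    have hvu : inner (𝕜 := ℝ) v u = 0 := by
      rcases mul_eq_zero.1 e2 with h | h
      · exact absurd h ht.ne'
      · exact h
    rw [real_inner_comm] at hvu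
    exact hvu
  -- conclude
  have hker := tangentCone_subset_ker_aux hy.1 hUo hyU hF hLU
  rw [normalSp, tangentSp, Submodule.mem_orthogonal]
  intro w hw
  refine Submodule.span_induction (p := fun w _ => inner (𝕜 := ℝ) w v = 0)
    (fun z hz => key z (hker z hz)) (by simp) ?_ ?_ hw
  · intro a b _ _ ha hb
    rw [inner_add_left, ha, hb, add_zero]
  · intro c a _ ha
    rw [real_inner_smul_left, ha, mul_zero]

end
end

section
/- Let L and M be relatively open polyhedra in ℝⁿ, i.e., each is the relative interior of a nonempty set of the form {x ∈ ℝⁿ : ⟨aᵢ, x⟩ ≤ bᵢ for i = 1,…,k}, and suppose L ⊆ (cl M) \ M. Then there exist open neighborhoods V of L and U of M such that for every x ∈ V ∩ U: the nearest point of M to x is unique, call it z; the nearest point of L to x is unique; the nearest point of L to z is unique; and these satisfy P_L(x) = P_L(z), i.e., the nearest point of L to x coincides with the nearest point of L to the nearest point of M to x. -/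
open RealInnerProductSpace

noncomputable section

/-- A relatively open polyhedron: the relative interior of a nonempty finite intersection of
closed half-spaces. -/
def IsRelOpenPolyhedron (n : ℕ) (L : Set (EuclideanSpace ℝ (Fin n))) : Prop :=
  ∃ (k : ℕ) (a : Fin k → EuclideanSpace ℝ (Fin n)) (b : Fin k → ℝ),
    ({x : EuclideanSpace ℝ (Fin n) | ∀ i, ⟪a i, x⟫ ≤ b i}).Nonempty ∧
    L = intrinsicInterior ℝ {x : EuclideanSpace ℝ (Fin n) | ∀ i, ⟪a i, x⟫ ≤ b i}

namespace PNFaux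

variable {n : ℕ}

lemma poly_convex {k : ℕ} (a : Fin k → EuclideanSpace ℝ (Fin n)) (b : Fin k → ℝ) :
    Convex ℝ {x : EuclideanSpace ℝ (Fin n) | ∀ i, ⟪a i, x⟫ ≤ b i} := by
  have h : {x : EuclideanSpace ℝ (Fin n) | ∀ i, ⟪a i, x⟫ ≤ b i}
      = ⋂ i, {x : EuclideanSpace ℝ (Fin n) | ⟪a i, x⟫ ≤ b i} := by ext; simp
  rw [h]
  exact convex_iInter fun i => convex_halfSpace_le
    ⟨fun x y => inner_add_right _ _ _, fun c x => real_inner_smul_right _ _ _⟩ (b i)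

lemma poly_closed {k : ℕ} (a : Fin k → EuclideanSpace ℝ (Fin n)) (b : Fin k → ℝ) :
    IsClosed {x : EuclideanSpace ℝ (Fin n) | ∀ i, ⟪a i, x⟫ ≤ b i} := by
  have h : {x : EuclideanSpace ℝ (Fin n) | ∀ i, ⟪a i, x⟫ ≤ b i}
      = ⋂ i, {x : EuclideanSpace ℝ (Fin n) | ⟪a i, x⟫ ≤ b i} := by ext; simp
  rw [h]
  exact isClosed_iInter fun i =>
    isClosed_le (Continuous.inner continuous_const continuous_id) continuous_const

/-- Around any point, there is a ball on which all constraints that are strict at the point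
remain strict. -/
lemma slack_ball {k : ℕ} (a : Fin k → EuclideanSpace ℝ (Fin n)) (b : Fin k → ℝ)
    (p : EuclideanSpace ℝ (Fin n)) :
    ∃ ε > 0, ∀ y, dist y p < ε → ∀ i, ⟪a i, p⟫ < b i → ⟪a i, y⟫ < b i := by
  have hopen : IsOpen {y : EuclideanSpace ℝ (Fin n) | ∀ i, ⟪a i, p⟫ < b i → ⟪a i, y⟫ < b i} := by
    have h : {y : EuclideanSpace ℝ (Fin n) | ∀ i, ⟪a i, p⟫ < b i → ⟪a i, y⟫ < b i}
        = ⋂ i, {y : EuclideanSpace ℝ (Fin n) | ⟪a i, p⟫ < b i → ⟪a i, y⟫ < b i} := by ext; simp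
    rw [h]
    refine isOpen_iInter_of_finite fun i => ?_
    by_cases hi : ⟪a i, p⟫ < b i
    · simp only [hi, true_implies]
      exact isOpen_lt (Continuous.inner continuous_const continuous_id) continuous_const
    · simp only [hi, false_implies, Set.setOf_true]
      exact isOpen_univ
  have hp : p ∈ {y : EuclideanSpace ℝ (Fin n) | ∀ i, ⟪a i, p⟫ < b i → ⟪a i, y⟫ < b i} :=
    fun _ hi => hi
  rcases Metric.isOpen_iff.1 hopen p hp with ⟨ε, hε, hball⟩
  exact ⟨ε, hε, fun y hy i hi => hball (Metric.mem_ball.2 hy) i hi⟩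

/-- Membership in the intrinsic interior gives a relative ball inside the intrinsic interior. -/
lemma intrinsic_ball {Q : Set (EuclideanSpace ℝ (Fin n))} {p : EuclideanSpace ℝ (Fin n)}
    (hp : p ∈ intrinsicInterior ℝ Q) :
    ∃ ε > 0, ∀ y ∈ (affineSpan ℝ Q : Set (EuclideanSpace ℝ (Fin n))), dist y p < ε →
      y ∈ intrinsicInterior ℝ Q := by
  obtain ⟨q, hq, rfl⟩ := hp
  rcases Metric.isOpen_iff.1 isOpen_interior q hq with ⟨ε, hε, hball⟩
  refine ⟨ε, hε, fun y hy hdist => ?_⟩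
  exact ⟨⟨y, hy⟩, hball (by rw [Metric.mem_ball, Subtype.dist_eq]; exact hdist), rfl⟩

/-- The part of a closed set outside its intrinsic interior is closed. -/
lemma diff_closed {Q : Set (EuclideanSpace ℝ (Fin n))} (hQc : IsClosed Q) :
    IsClosed (Q \ intrinsicInterior ℝ Q) := by
  apply isClosed_of_closure_subset
  intro x hx
  have hxQ : x ∈ Q := hQc.closure_subset (closure_mono Set.diff_subset hx)
  refine ⟨hxQ, fun hxM => ?_⟩
  obtain ⟨ε, hε, hball⟩ := intrinsic_ball hxM
  obtain ⟨y, hy, hyd⟩ := Metric.mem_closure_iff.1 hx ε hε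
  exact hy.2 (hball y (subset_affineSpan ℝ Q hy.1) (by rw [dist_comm]; exact hyd))

/-- Existence and variational characterization of the nearest point on a nonempty closed
convex set. -/
lemma proj_char {S : Set (EuclideanSpace ℝ (Fin n))} (hne : S.Nonempty) (hc : IsClosed S)
    (hconv : Convex ℝ S) (x : EuclideanSpace ℝ (Fin n)) :
    ∃ z ∈ S, dist x z = Metric.infDist x S ∧ ∀ y ∈ S, ⟪x - z, y - z⟫ ≤ 0 := by
  obtain ⟨z, hzS, hz⟩ := exists_norm_eq_iInf_of_complete_convex hne hc.isComplete hconv x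
  have hvar := (norm_eq_iInf_iff_real_inner_le_zero hconv hzS).1 hz
  refine ⟨z, hzS, ?_, hvar⟩
  rw [Metric.infDist_eq_iInf]
  simp only [dist_eq_norm]
  exact hz

/-- Uniqueness of the nearest point, from the variational inequality. -/
lemma proj_unique {S : Set (EuclideanSpace ℝ (Fin n))} {x z y : EuclideanSpace ℝ (Fin n)}
    (hvar : ∀ w ∈ S, ⟪x - z, w - z⟫ ≤ 0) (hyS : y ∈ S) (hyd : dist x y ≤ dist x z) : y = z := by
  have h1 : ⟪x - z, y - z⟫ ≤ 0 := hvar y hyS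
  have e : x - y = (x - z) - (y - z) := by abel
  have h2 : ‖x - y‖ ^ 2 = ‖x - z‖ ^ 2 - 2 * ⟪x - z, y - z⟫ + ‖y - z‖ ^ 2 := by
    rw [e, @norm_sub_sq_real]
  have h3 : ‖x - y‖ ≤ ‖x - z‖ := by rwa [dist_eq_norm, dist_eq_norm] at hyd
  have h4 : ‖y - z‖ ^ 2 ≤ 0 := by nlinarith [norm_nonneg (x - y), norm_nonneg (x - z)]
  have h5 : y - z = 0 := by
    have h6 : ‖y - z‖ = 0 := le_antisymm (by nlinarith [norm_nonneg (y - z)]) (norm_nonneg _)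
    exact norm_eq_zero.1 h6
  exact sub_eq_zero.1 h5

/-- If `w ∈ T ⊆ A` (an affine subspace) and `x - w` is orthogonal to the direction of `A`,
then the metric projection of `x` onto `T` is exactly `{w}`. -/
lemma affine_proj_metricProj {A : AffineSubspace ℝ (EuclideanSpace ℝ (Fin n))}
    {T : Set (EuclideanSpace ℝ (Fin n))} (hTA : T ⊆ (A : Set (EuclideanSpace ℝ (Fin n))))
    {x w : EuclideanSpace ℝ (Fin n)} (hwT : w ∈ T) (hwA : w ∈ A)
    (horth : ∀ v ∈ A.direction, ⟪x - w, v⟫ = 0) :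
    metricProj T x = {w} := by
  have key : ∀ y ∈ T, dist x y ^ 2 = dist x w ^ 2 + dist w y ^ 2 := by
    intro y hy
    have hv : y - w ∈ A.direction := by
      have := AffineSubspace.vsub_mem_direction (hTA hy) hwA
      simpa [vsub_eq_sub] using this
    have h0 : ⟪x - w, y - w⟫ = 0 := horth _ hv
    have e : x - y = (x - w) - (y - w) := by abel
    calc dist x y ^ 2 = ‖x - y‖ ^ 2 := by rw [dist_eq_norm]
      _ = ‖x - w‖ ^ 2 + ‖y - w‖ ^ 2 := by rw [e, @norm_sub_sq_real, h0]; ring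
      _ = dist x w ^ 2 + dist w y ^ 2 := by
          rw [dist_eq_norm, dist_eq_norm, norm_sub_rev y w]
  have hinf : Metric.infDist x T = dist x w := by
    refine le_antisymm (Metric.infDist_le_dist_of_mem hwT) (le_of_not_gt fun hlt => ?_)
    obtain ⟨y, hy, hylt⟩ := (Metric.infDist_lt_iff ⟨w, hwT⟩).1 hlt
    have := key y hy
    nlinarith [dist_nonneg (x := x) (y := y), dist_nonneg (x := x) (y := w),
      sq_nonneg (dist w y)]
  ext y
  simp only [metricProj, Set.mem_setOf_eq, Set.mem_singleton_iff]
  constructor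
  · rintro ⟨hyT, hyd⟩
    rw [hinf] at hyd
    have h2 := key y hyT
    rw [hyd] at h2
    have h3 : dist w y ^ 2 = 0 := by linarith
    have h4 : dist w y = 0 := by
      have := dist_nonneg (x := w) (y := y); nlinarith
    exact (dist_eq_zero.1 h4).symm
  · rintro rfl
    exact ⟨hwT, hinf.symm⟩

end PNFaux

open PNFaux in
/-- **Polyhedral strata are normally flat.** -/
theorem polyhedral_normally_flat
    (n : ℕ) (L M : Set (EuclideanSpace ℝ (Fin n)))
    (hL : IsRelOpenPolyhedron n L) (hM : IsRelOpenPolyhedron n M)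
    (hLM : L ⊆ closure M \ M) :
    ∃ V U : Set (EuclideanSpace ℝ (Fin n)), IsOpen V ∧ IsOpen U ∧ L ⊆ V ∧ M ⊆ U ∧
      ∀ x ∈ V ∩ U, ∃ z w : EuclideanSpace ℝ (Fin n),
        metricProj M x = {z} ∧ metricProj L x = {w} ∧ metricProj L z = {w} := by
  classical
  obtain ⟨kL, aL, bL, hQLne, hLdef⟩ := hL
  obtain ⟨kM, aM, bM, hQMne, hMdef⟩ := hM
  set QL := {x : EuclideanSpace ℝ (Fin n) | ∀ i, ⟪aL i, x⟫ ≤ bL i} with hQLdef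
  set QM := {x : EuclideanSpace ℝ (Fin n) | ∀ i, ⟪aM i, x⟫ ≤ bM i} with hQMdef
  have hQMc : IsClosed QM := poly_closed aM bM
  have hQMconv : Convex ℝ QM := poly_convex aM bM
  have hLne : L.Nonempty := by
    rw [hLdef]; exact hQLne.intrinsicInterior (poly_convex aL bL)
  have hMQM : M ⊆ QM := by rw [hMdef]; exact intrinsicInterior_subset
  have hclM : closure M ⊆ QM := closure_minimal hMQM hQMc
  have hLQM : L ⊆ QM := fun p hp => hclM (hLM hp).1
  set A := affineSpan ℝ QL with hA
  have hLA : L ⊆ (A : Set (EuclideanSpace ℝ (Fin n))) := by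
    rw [hLdef]; exact intrinsicInterior_subset.trans (subset_affineSpan ℝ QL)
  -- the closed "boundary" set
  set B := QM \ M with hBdef
  have hBc : IsClosed B := by rw [hBdef, hMdef]; exact diff_closed hQMc
  have hLB : L ⊆ B := fun p hp => ⟨hLQM hp, (hLM hp).2⟩
  have hBne : B.Nonempty := hLne.mono hLB
  -- radii around points of L
  have key : ∀ p ∈ L, ∃ r > 0,
      (∀ y ∈ (A : Set (EuclideanSpace ℝ (Fin n))), dist y p < 3 * r → y ∈ L) ∧
      (∀ y, dist y p < 3 * r → ∀ i, ⟪aM i, p⟫ < bM i → ⟪aM i, y⟫ < bM i) := by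
    intro p hp
    obtain ⟨ε₁, hε₁, h₁⟩ := intrinsic_ball (Q := QL) (by rw [hLdef] at hp; exact hp)
    obtain ⟨ε₂, hε₂, h₂⟩ := slack_ball aM bM p
    refine ⟨min ε₁ ε₂ / 6, by positivity, fun y hy hd => ?_, fun y hd => ?_⟩
    · rw [hLdef]
      exact h₁ y hy (lt_of_lt_of_le hd (by
        have := min_le_left ε₁ ε₂; linarith))
    · exact h₂ y (lt_of_lt_of_le hd (by have := min_le_right ε₁ ε₂; linarith))
  choose! r hr0 hr1 hr2 using key
  refine ⟨⋃ p ∈ L, Metric.ball p (r p), ⋃ m ∈ M, Metric.ball m (Metric.infDist m B / 2),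
    isOpen_biUnion fun _ _ => Metric.isOpen_ball, isOpen_biUnion fun _ _ => Metric.isOpen_ball,
    fun p hp => Set.mem_biUnion hp (Metric.mem_ball_self (hr0 p hp)),
    fun m hm => Set.mem_biUnion hm (Metric.mem_ball_self (by
      have : m ∉ B := fun h => h.2 hm
      have := (hBc.notMem_iff_infDist_pos hBne).1 this
      linarith)), ?_⟩
  rintro x ⟨hxV, hxU⟩
  obtain ⟨p, hp, hxp⟩ := Set.mem_iUnion₂.1 hxV
  obtain ⟨m, hm, hxm⟩ := Set.mem_iUnion₂.1 hxU
  rw [Metric.mem_ball] at hxp hxm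
  -- the nearest point z of QM to x
  obtain ⟨z, hzQM, hzd, hvarM⟩ := proj_char hQMne hQMc hQMconv x
  have hdxz : dist x z ≤ dist x m := hzd ▸ Metric.infDist_le_dist_of_mem (hMQM hm)
  have hzM : z ∈ M := by
    by_contra hzM
    have hzB : z ∈ B := ⟨hzQM, hzM⟩
    have h1 : Metric.infDist m B ≤ dist m z := Metric.infDist_le_dist_of_mem hzB
    have h2 : dist m z ≤ dist m x + dist x z := dist_triangle m x z
    rw [dist_comm m x] at h2
    linarith
  -- z is within the slack ball around p
  have hdxp : dist x z ≤ dist x p := hzd ▸ Metric.infDist_le_dist_of_mem (hLQM hp)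
  have hzp : dist z p < 3 * r p := by
    have htri := dist_triangle z x p
    rw [dist_comm z x] at htri
    have hrp := hr0 p hp
    linarith
  -- metricProj M x = {z}
  have hMx : metricProj M x = {z} := by
    have hinfM : Metric.infDist x M = dist x z := by
      refine le_antisymm (Metric.infDist_le_dist_of_mem hzM) ?_
      rw [hzd]
      exact Metric.infDist_le_infDist_of_subset hMQM ⟨m, hm⟩
    ext y
    simp only [metricProj, Set.mem_setOf_eq, Set.mem_singleton_iff]
    constructor
    · rintro ⟨hyM, hyd⟩
      exact proj_unique hvarM (hMQM hyM) (by rw [hyd, hinfM])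
    · rintro rfl
      exact ⟨hzM, hinfM.symm⟩
  -- the orthogonal projection w of x onto A
  haveI : Nonempty A := ⟨⟨hQLne.choose, subset_affineSpan ℝ QL hQLne.choose_spec⟩⟩
  set w : EuclideanSpace ℝ (Fin n) :=
    (EuclideanGeometry.orthogonalProjection A x : EuclideanSpace ℝ (Fin n)) with hwdef
  have hwA : w ∈ A := (EuclideanGeometry.orthogonalProjection A x).2
  have horthx : ∀ v ∈ A.direction, ⟪x - w, v⟫ = 0 := by
    intro v hv
    have h := EuclideanGeometry.vsub_orthogonalProjection_mem_direction_orthogonal A x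
    rw [Submodule.mem_orthogonal] at h
    have := h v hv
    rw [real_inner_comm]
    simpa [vsub_eq_sub] using this
  have hpA : p ∈ A := hLA hp
  -- w ∈ L
  have hwp : dist w p ≤ dist x p := by
    have hv : w - p ∈ A.direction := by
      have := AffineSubspace.vsub_mem_direction hwA hpA
      simpa [vsub_eq_sub] using this
    have h0 : ⟪x - w, w - p⟫ = 0 := horthx _ hv
    have e : x - p = (x - w) + (w - p) := by abel
    have h2 : ‖x - p‖ ^ 2 = ‖x - w‖ ^ 2 + ‖w - p‖ ^ 2 := by
      rw [e, @norm_add_sq_real, h0]; ring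
    rw [dist_eq_norm, dist_eq_norm]
    nlinarith [norm_nonneg (x - w), norm_nonneg (w - p), norm_nonneg (x - p)]
  have hwL : w ∈ L := hr1 p hp w hwA (lt_of_le_of_lt hwp (by
    have := hr0 p hp; linarith))
  -- orthogonality of x - z to the direction of A
  have horthz' : ∀ v ∈ A.direction, ⟪x - z, v⟫ = 0 := by
    intro v hv
    by_cases hv0 : v = 0
    · simp [hv0]
    have hvn : (0:ℝ) < ‖v‖ := norm_pos_iff.2 hv0
    -- Step a: constraints active at p annihilate v
    have stepa : ∀ i, ⟪aM i, p⟫ = bM i → ⟪aM i, v⟫ = 0 := by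
      intro i hi
      set t := r p / ‖v‖ with htdef
      have ht : 0 < t := div_pos (hr0 p hp) hvn
      have hmem : ∀ s : ℝ, |s| ≤ t → s • v + p ∈ L := by
        intro s hs
        refine hr1 p hp _ ?_ ?_
        · exact AffineSubspace.vadd_mem_of_mem_direction (A.direction.smul_mem s hv) hpA
        · have : dist (s • v + p) p = |s| * ‖v‖ := by
            rw [dist_eq_norm]
            simp [norm_smul, abs_of_nonneg, Real.norm_eq_abs]
          rw [this]
          have h1 : |s| * ‖v‖ ≤ t * ‖v‖ := mul_le_mul_of_nonneg_right hs (le_of_lt hvn)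
          have h2 : t * ‖v‖ = r p := by
            rw [htdef]; field_simp
          have := hr0 p hp
          nlinarith
      have hplus := hLQM (hmem t (by rw [abs_of_pos ht])) i
      have hminus := hLQM (hmem (-t) (by rw [abs_neg, abs_of_pos ht])) i
      simp only [inner_add_right, real_inner_smul_right] at hplus hminus
      have h3 : t * ⟪aM i, v⟫ ≤ 0 := by rw [hi] at hplus; linarith
      have h4 : -t * ⟪aM i, v⟫ ≤ 0 := by rw [hi] at hminus; linarith
      nlinarith
    -- Step b: move from z in directions ±v within QM
    obtain ⟨ε', hε', hsz⟩ := slack_ball aM bM z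
    set t' := ε' / (2 * (‖v‖ + 1)) with ht'def
    have ht' : 0 < t' := by positivity
    have hmemz : ∀ s : ℝ, |s| ≤ t' → s • v + z ∈ QM := by
      intro s hs i
      rcases lt_or_eq_of_le (hzQM i) with hlt | heq
      · have hd : dist (s • v + z) z < ε' := by
          have : dist (s • v + z) z = |s| * ‖v‖ := by
            rw [dist_eq_norm]
            simp [norm_smul, Real.norm_eq_abs]
          rw [this]
          have h1 : |s| * ‖v‖ ≤ t' * ‖v‖ :=
            mul_le_mul_of_nonneg_right hs (norm_nonneg v)
          have h2 : t' * ‖v‖ < ε' := by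
            rw [ht'def]
            rw [div_mul_eq_mul_div, div_lt_iff₀ (by positivity)]
            nlinarith [norm_nonneg v]
          linarith
        exact le_of_lt (hsz _ hd i hlt)
      · -- constraint active at z, hence active at p, hence kills v
        have hip : ⟪aM i, p⟫ = bM i := by
          rcases lt_or_eq_of_le (hLQM hp i) with hplt | hpeq
          · exact absurd (hr2 p hp z hzp i hplt) (by rw [heq]; exact lt_irrefl _)
          · exact hpeq
        have := stepa i hip
        simp only [inner_add_right, real_inner_smul_right, this]
        rw [heq]; simp
    have hplus := hvarM _ (hmemz t' (by rw [abs_of_pos ht']))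
    have hminus := hvarM _ (hmemz (-t') (by rw [abs_neg, abs_of_pos ht']))
    simp only [add_sub_cancel_right] at hplus hminus
    rw [real_inner_smul_right] at hplus hminus
    nlinarith
  -- x - w and x - z orthogonal to direction A gives z - w orthogonal too
  have horthz : ∀ v ∈ A.direction, ⟪z - w, v⟫ = 0 := by
    intro v hv
    have e : z - w = (x - w) - (x - z) := by abel
    rw [e, inner_sub_left, horthx v hv, horthz' v hv]
    ring
  exact ⟨z, w, hMx, affine_proj_metricProj hLA hwL hwA horthx,
    affine_proj_metricProj hLA hwL hwA horthz⟩

end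
end

section
/- Let Q ⊆ ℝⁿ be permutation-invariant, and let Λ := {V·(diag q)·Vᵀ : V an n×n orthogonal matrix, q ∈ Q} be the associated spectral set of real symmetric n×n matrices. Let X = U·(diag x)·Uᵀ where U is orthogonal and x ∈ ℝⁿ satisfies x₁ ≥ x₂ ≥ … ≥ xₙ. If z ∈ Q satisfies |x − z| = d(x, Q), then the matrix Y := U·(diag z)·Uᵀ lies in Λ and satisfies ‖X − Y‖ = d(X, Λ), where ‖·‖ is the Frobenius norm and d(X, Λ) := inf_{Z∈Λ}‖X − Z‖. -/
open Matrix

section Helpers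
open Finset

lemma conj_apply' {n : ℕ} (d : Fin n → ℝ) (W : Matrix (Fin n) (Fin n) ℝ) (i j : Fin n) :
    (W * Matrix.diagonal d * Wᵀ) i j = ∑ k, W i k * d k * W j k := by
  rw [Matrix.mul_apply]
  simp [Matrix.mul_diagonal]

lemma sum_mul_expand' {n : ℕ} (x q : Fin n → ℝ) (U V : Matrix (Fin n) (Fin n) ℝ) :
  ∑ i, ∑ j, (U * Matrix.diagonal x * Uᵀ) i j * (V * Matrix.diagonal q * Vᵀ) i j
    = ∑ k, ∑ l, x k * q l * ((Uᵀ * V) k l)^2 := by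
  have hW : ∀ k l, (Uᵀ * V) k l = ∑ i, U i k * V i l := by
    intro k l; rw [Matrix.mul_apply]; simp [Matrix.transpose_apply]
  set T : Fin n → Fin n → Fin n → Fin n → ℝ :=
    fun i j k l => (U i k * x k * U j k) * (V i l * q l * V j l) with hT
  calc ∑ i, ∑ j, (U * Matrix.diagonal x * Uᵀ) i j * (V * Matrix.diagonal q * Vᵀ) i j
      = ∑ i, ∑ j, ∑ k, ∑ l, T i j k l := by
        simp only [conj_apply', Finset.sum_mul_sum, hT]
    _ = ∑ i, ∑ k, ∑ j, ∑ l, T i j k l :=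
        Finset.sum_congr rfl fun i _ => Finset.sum_comm
    _ = ∑ k, ∑ i, ∑ j, ∑ l, T i j k l := Finset.sum_comm
    _ = ∑ k, ∑ i, ∑ l, ∑ j, T i j k l :=
        Finset.sum_congr rfl fun k _ => Finset.sum_congr rfl fun i _ => Finset.sum_comm
    _ = ∑ k, ∑ l, ∑ i, ∑ j, T i j k l :=
        Finset.sum_congr rfl fun k _ => Finset.sum_comm
    _ = ∑ k, ∑ l, x k * q l * ((Uᵀ * V) k l)^2 := by
        refine Finset.sum_congr rfl fun k _ => Finset.sum_congr rfl fun l _ => ?_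
        rw [hW, sq, Finset.sum_mul_sum, Finset.mul_sum]
        refine Finset.sum_congr rfl fun i _ => ?_
        rw [Finset.mul_sum]
        exact Finset.sum_congr rfl fun j _ => by simp only [hT]; ring

/-- sum of entrywise products of two conjugated diagonals, orthogonal case with U = V. -/
lemma sum_mul_one' {n : ℕ} (x q : Fin n → ℝ) (U : Matrix (Fin n) (Fin n) ℝ)
    (hU : Uᵀ * U = 1) :
    ∑ i, ∑ j, (U * Matrix.diagonal x * Uᵀ) i j * (U * Matrix.diagonal q * Uᵀ) i j
      = ∑ k, x k * q k := by
  rw [sum_mul_expand', hU]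
  simp [Matrix.one_apply, apply_ite (· ^ 2)]

/-- squared-entry matrix of an orthogonal matrix is doubly stochastic -/
lemma sq_mem_ds {n : ℕ} (W : Matrix (Fin n) (Fin n) ℝ) (hW : W * Wᵀ = 1) :
    Matrix.of (fun k l => (W k l) ^ 2) ∈ doublyStochastic ℝ (Fin n) := by
  have hW' : Wᵀ * W = 1 := mul_eq_one_comm.mp hW
  rw [mem_doublyStochastic_iff_sum]
  refine ⟨fun i j => sq_nonneg _, fun i => ?_, fun j => ?_⟩
  · have := congrArg (fun M => M i i) hW
    simpa [Matrix.mul_apply, Matrix.one_apply, sq] using this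
  · have := congrArg (fun M => M j j) hW'
    simpa [Matrix.mul_apply, Matrix.one_apply, sq] using this

lemma ds_sum_le {n : ℕ} (x q : Fin n → ℝ) (D : Matrix (Fin n) (Fin n) ℝ)
    (hD : D ∈ doublyStochastic ℝ (Fin n)) (c : ℝ)
    (hc : ∀ σ : Equiv.Perm (Fin n), ∑ k, x k * q (σ k) ≤ c) :
    ∑ k, ∑ l, x k * q l * D k l ≤ c := by
  obtain ⟨w, hw0, hw1, hwD⟩ := exists_eq_sum_perm_of_mem_doublyStochastic hD
  have hD' : ∀ k l, D k l = ∑ σ : Equiv.Perm (Fin n), w σ * (σ.permMatrix ℝ) k l := by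
    intro k l; rw [← hwD, Matrix.sum_apply]; simp only [Matrix.smul_apply, smul_eq_mul]
  have key : ∑ k, ∑ l, x k * q l * D k l
      = ∑ σ : Equiv.Perm (Fin n), w σ * ∑ k, x k * q (σ k) := by
    calc ∑ k, ∑ l, x k * q l * D k l
        = ∑ k, ∑ l, ∑ σ : Equiv.Perm (Fin n), x k * q l * (w σ * (σ.permMatrix ℝ) k l) := by
          refine Finset.sum_congr rfl fun k _ => Finset.sum_congr rfl fun l _ => ?_
          rw [hD', Finset.mul_sum]
      _ = ∑ k, ∑ σ : Equiv.Perm (Fin n), ∑ l, x k * q l * (w σ * (σ.permMatrix ℝ) k l) :=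
          Finset.sum_congr rfl fun k _ => Finset.sum_comm
      _ = ∑ σ : Equiv.Perm (Fin n), ∑ k, ∑ l, x k * q l * (w σ * (σ.permMatrix ℝ) k l) :=
          Finset.sum_comm
      _ = ∑ σ : Equiv.Perm (Fin n), w σ * ∑ k, x k * q (σ k) := by
          refine Finset.sum_congr rfl fun σ _ => ?_
          rw [Finset.mul_sum]
          refine Finset.sum_congr rfl fun k _ => ?_
          have hperm : ∀ l, (σ.permMatrix ℝ) k l = if l = σ k then (1:ℝ) else 0 := by
            intro l
            simp [Equiv.Perm.permMatrix, PEquiv.toMatrix_apply, Equiv.toPEquiv_apply, eq_comm]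
          simp only [hperm, mul_ite, mul_one, mul_zero, Finset.sum_ite_eq,
            Finset.sum_ite_eq', Finset.mem_univ, if_true]
          ring
  rw [key]
  calc ∑ σ : Equiv.Perm (Fin n), w σ * ∑ k, x k * q (σ k)
      ≤ ∑ σ : Equiv.Perm (Fin n), w σ * c :=
        Finset.sum_le_sum fun σ _ => mul_le_mul_of_nonneg_left (hc σ) (hw0 σ)
    _ = c := by rw [← Finset.sum_mul, hw1, one_mul]

end Helpers

noncomputable section

/-- The Euclidean norm on `ℝⁿ` (vectors as functions). -/
def vnorm {n : ℕ} (x : Fin n → ℝ) : ℝ := Real.sqrt (∑ i, x i ^ 2)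

/-- Euclidean distance from a point to a set in `ℝⁿ`. -/
def vdistSet {n : ℕ} (x : Fin n → ℝ) (Q : Set (Fin n → ℝ)) : ℝ :=
  sInf ((fun y => vnorm (x - y)) '' Q)

/-- The Frobenius norm of a real matrix. -/
def frobNorm {n m : ℕ} (A : Matrix (Fin n) (Fin m) ℝ) : ℝ :=
  Real.sqrt (∑ i, ∑ j, A i j ^ 2)

/-- Frobenius distance from a matrix to a set of matrices. -/
def frobDistSet {n m : ℕ} (X : Matrix (Fin n) (Fin m) ℝ)
    (S : Set (Matrix (Fin n) (Fin m) ℝ)) : ℝ :=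
  sInf ((fun Z => frobNorm (X - Z)) '' S)

/-- **Projection onto spectral sets (symmetric case).** -/
theorem projection_onto_spectral_set_symm
    (n : ℕ) (Q : Set (Fin n → ℝ))
    (hQ : ∀ π : Equiv.Perm (Fin n), ∀ x ∈ Q, (x ∘ π) ∈ Q)
    (Λ : Set (Matrix (Fin n) (Fin n) ℝ))
    (hΛ : Λ = {A | ∃ V : Matrix (Fin n) (Fin n) ℝ, V * Vᵀ = 1 ∧
      ∃ q ∈ Q, A = V * Matrix.diagonal q * Vᵀ})
    (U : Matrix (Fin n) (Fin n) ℝ) (hU : U * Uᵀ = 1)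
    (x : Fin n → ℝ) (hx : ∀ i j : Fin n, i ≤ j → x j ≤ x i)
    (X : Matrix (Fin n) (Fin n) ℝ) (hX : X = U * Matrix.diagonal x * Uᵀ)
    (z : Fin n → ℝ) (hz : z ∈ Q) (hzx : vnorm (x - z) = vdistSet x Q) :
    U * Matrix.diagonal z * Uᵀ ∈ Λ ∧
      frobNorm (X - U * Matrix.diagonal z * Uᵀ) = frobDistSet X Λ := by
  have hUtU : Uᵀ * U = 1 := mul_eq_one_comm.mp hU
  set Y := U * Matrix.diagonal z * Uᵀ with hY
  have hYmem : Y ∈ Λ := by rw [hΛ]; exact ⟨U, hU, z, hz, rfl⟩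
  -- frobNorm (X - Y) = vnorm (x - z)
  have hXY : X - Y = U * Matrix.diagonal (x - z) * Uᵀ := by
    rw [hX, hY]
    have : Matrix.diagonal (x - z) = Matrix.diagonal x - Matrix.diagonal z := by
      rw [Matrix.diagonal_sub]; rfl
    rw [this, Matrix.mul_sub, Matrix.sub_mul]
  have hfrobXY : frobNorm (X - Y) = vnorm (x - z) := by
    rw [hXY]
    unfold frobNorm vnorm
    congr 1
    have := sum_mul_one' (x - z) (x - z) U hUtU
    calc ∑ i, ∑ j, (U * Matrix.diagonal (x - z) * Uᵀ) i j ^ 2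
        = ∑ i, ∑ j, (U * Matrix.diagonal (x - z) * Uᵀ) i j
            * (U * Matrix.diagonal (x - z) * Uᵀ) i j := by
          simp [sq]
      _ = ∑ k, (x - z) k * (x - z) k := this
      _ = ∑ k, (x - z) k ^ 2 := by simp [sq]
  -- lower bound for an arbitrary element of Λ
  have hlow : ∀ Z ∈ Λ, vnorm (x - z) ≤ frobNorm (X - Z) := by
    intro Z hZ
    rw [hΛ] at hZ
    obtain ⟨V, hV, q, hq, rfl⟩ := hZ
    have hVtV : Vᵀ * V = 1 := mul_eq_one_comm.mp hV
    set W := Uᵀ * V with hWdef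
    have hWWt : W * Wᵀ = 1 := by
      rw [hWdef, Matrix.transpose_mul, Matrix.transpose_transpose,
        Matrix.mul_assoc, ← Matrix.mul_assoc V, hV, Matrix.one_mul, hUtU]
    have hDS := sq_mem_ds W hWWt
    -- the bound c
    have hbdd : BddBelow ((fun y => vnorm (x - y)) '' Q) :=
      ⟨0, by rintro r ⟨y, -, rfl⟩; exact Real.sqrt_nonneg _⟩
    have hsum_nonneg : ∀ (a : Fin n → ℝ), (0:ℝ) ≤ ∑ i, a i ^ 2 :=
      fun a => Finset.sum_nonneg fun i _ => sq_nonneg _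
    have hvz : vnorm (x - z) ^ 2 = ∑ i, (x - z) i ^ 2 := Real.sq_sqrt (hsum_nonneg _)
    have hc : ∀ σ : Equiv.Perm (Fin n), ∑ k, x k * q (σ k)
        ≤ (∑ k, x k ^ 2 + ∑ k, q k ^ 2 - ∑ i, (x - z) i ^ 2) / 2 := by
      intro σ
      have hmem : q ∘ σ ∈ Q := hQ σ q hq
      have h1 : vnorm (x - z) ≤ vnorm (x - q ∘ σ) := by
        rw [hzx]; exact csInf_le hbdd ⟨q ∘ σ, hmem, rfl⟩
      have h2 : ∑ i, (x - z) i ^ 2 ≤ ∑ i, (x - q ∘ σ) i ^ 2 := by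
        rwa [vnorm, vnorm, Real.sqrt_le_sqrt_iff (hsum_nonneg _)] at h1
      have h3 : ∑ i, (x - q ∘ σ) i ^ 2
          = ∑ k, x k ^ 2 + ∑ k, q k ^ 2 - 2 * ∑ k, x k * q (σ k) := by
        have hqs : ∑ k, q (σ k) ^ 2 = ∑ k, q k ^ 2 := Equiv.sum_comp σ (fun k => q k ^ 2)
        calc ∑ i, (x - q ∘ σ) i ^ 2
            = ∑ i, (x i ^ 2 + q (σ i) ^ 2 - 2 * (x i * q (σ i))) := by
              refine Finset.sum_congr rfl fun i _ => ?_
              simp [Pi.sub_apply, Function.comp]; ring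
          _ = ∑ k, x k ^ 2 + ∑ k, q (σ k) ^ 2 - 2 * ∑ k, x k * q (σ k) := by
              rw [Finset.sum_sub_distrib, Finset.sum_add_distrib, ← Finset.mul_sum]
          _ = ∑ k, x k ^ 2 + ∑ k, q k ^ 2 - 2 * ∑ k, x k * q (σ k) := by rw [hqs]
      linarith
    have hds := ds_sum_le x q (Matrix.of fun k l => (W k l) ^ 2) hDS _ hc
    -- expand the Frobenius norm of the difference
    have hXX : ∑ i, ∑ j, X i j * X i j = ∑ k, x k ^ 2 := by
      rw [hX]
      rw [sum_mul_one' x x U hUtU]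
      simp [sq]
    have hZZ : ∑ i, ∑ j, (V * Matrix.diagonal q * Vᵀ) i j * (V * Matrix.diagonal q * Vᵀ) i j
        = ∑ k, q k ^ 2 := by
      rw [sum_mul_one' q q V hVtV]
      simp [sq]
    have hXZ : ∑ i, ∑ j, X i j * (V * Matrix.diagonal q * Vᵀ) i j
        = ∑ k, ∑ l, x k * q l * (W k l) ^ 2 := by
      rw [hX, sum_mul_expand' x q U V]
    have hS : ∑ i, ∑ j, (X - V * Matrix.diagonal q * Vᵀ) i j ^ 2
        = ∑ k, x k ^ 2 + ∑ k, q k ^ 2 - 2 * ∑ k, ∑ l, x k * q l * (W k l) ^ 2 := by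
      have expand : ∀ i j, (X - V * Matrix.diagonal q * Vᵀ) i j ^ 2
          = X i j * X i j + (V * Matrix.diagonal q * Vᵀ) i j * (V * Matrix.diagonal q * Vᵀ) i j
            - 2 * (X i j * (V * Matrix.diagonal q * Vᵀ) i j) := by
        intro i j; simp [Matrix.sub_apply]; ring
      calc ∑ i, ∑ j, (X - V * Matrix.diagonal q * Vᵀ) i j ^ 2
          = ∑ i, (∑ j, X i j * X i j
              + ∑ j, (V * Matrix.diagonal q * Vᵀ) i j * (V * Matrix.diagonal q * Vᵀ) i j
              - 2 * ∑ j, X i j * (V * Matrix.diagonal q * Vᵀ) i j) := by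
            refine Finset.sum_congr rfl fun i _ => ?_
            simp only [expand]
            rw [Finset.sum_sub_distrib, Finset.sum_add_distrib, ← Finset.mul_sum]
        _ = ∑ i, ∑ j, X i j * X i j
              + ∑ i, ∑ j, (V * Matrix.diagonal q * Vᵀ) i j * (V * Matrix.diagonal q * Vᵀ) i j
              - 2 * ∑ i, ∑ j, X i j * (V * Matrix.diagonal q * Vᵀ) i j := by
            rw [Finset.sum_sub_distrib, Finset.sum_add_distrib, ← Finset.mul_sum]
        _ = _ := by rw [hXX, hZZ, hXZ]
    -- conclude
    have hds' : ∑ k, ∑ l, x k * q l * (W k l) ^ 2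
        ≤ (∑ k, x k ^ 2 + ∑ k, q k ^ 2 - ∑ i, (x - z) i ^ 2) / 2 := hds
    have hfinal : ∑ i, (x - z) i ^ 2 ≤ ∑ i, ∑ j, (X - V * Matrix.diagonal q * Vᵀ) i j ^ 2 := by
      rw [hS]; linarith
    rw [vnorm, frobNorm]
    exact Real.sqrt_le_sqrt hfinal
  refine ⟨hYmem, le_antisymm ?_ ?_⟩
  · refine le_csInf ⟨_, ⟨Y, hYmem, rfl⟩⟩ ?_
    rintro b ⟨Z, hZ, rfl⟩
    rw [hfrobXY]
    exact hlow Z hZ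
  · refine csInf_le ⟨0, ?_⟩ ⟨Y, hYmem, rfl⟩
    rintro r ⟨Z, -, rfl⟩
    exact Real.sqrt_nonneg _


end
end

section
/- Let n ≤ m and let Q ⊆ ℝⁿ be absolutely permutation-invariant. Let Σ(Q) := {U·(Diag s)·Vᵀ : U an n×n orthogonal matrix, V an m×m orthogonal matrix, s ∈ Q} be the associated spectral set of real n×m matrices, where Diag s is the n×m matrix whose (i,i) entries are sᵢ and all other entries are zero. Let X = U·(Diag x)·Vᵀ with U, V orthogonal and x ∈ ℝⁿ satisfying x₁ ≥ x₂ ≥ … ≥ xₙ ≥ 0. If z ∈ Q satisfies |x − z| = d(x, Q), then Y := U·(Diag z)·Vᵀ lies in Σ(Q) and satisfies ‖X − Y‖ = d(X, Σ(Q)), where ‖·‖ is the Frobenius norm and d(X, Σ(Q)) := inf_{Z∈Σ(Q)}‖X − Z‖. -/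
open Matrix

noncomputable section

/-- `Q ⊆ ℝⁿ` is absolutely permutation-invariant: stable under permutations of coordinates
and coordinate-wise changes of sign. -/
def AbsPermInv {n : ℕ} (Q : Set (Fin n → ℝ)) : Prop :=
  ∀ (π : Equiv.Perm (Fin n)) (e : Fin n → ℝ), (∀ i, e i = 1 ∨ e i = -1) →
    ∀ x ∈ Q, (fun i => e i * x (π i)) ∈ Q

/-- The `n × m` matrix with `(i,i)` entries `s i` and all other entries zero. -/
def rdiag (n m : ℕ) (s : Fin n → ℝ) : Matrix (Fin n) (Fin m) ℝ :=
  Matrix.of fun i j => if (j : ℕ) = (i : ℕ) then s i else 0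

section Aux
open Finset

lemma telescope (n : ℕ) (x : ℕ → ℝ) (hxn : x n = 0) {i : ℕ} (hi : i ≤ n) :
    ∑ k ∈ Finset.Ico i n, (x k - x (k+1)) = x i := by
  rw [Finset.sum_Ico_eq_sub _ hi, Finset.sum_range_sub', Finset.sum_range_sub', hxn]
  ring

lemma ind_eq (n : ℕ) (x : ℕ → ℝ) (hxn : x n = 0) {i : ℕ} (hi : i < n) :
    x i = ∑ k ∈ Finset.range n, (if i ≤ k then x k - x (k+1) else 0) := by
  rw [← Finset.sum_filter]
  have h : Finset.filter (fun k => i ≤ k) (Finset.range n) = Finset.Ico i n := by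
    ext k; simp [Finset.mem_Ico, and_comm]
  rw [h, telescope n x hxn hi.le]

lemma count_eq (n K : ℕ) (hK : K < n) :
    ∑ i ∈ Finset.range n, (if i ≤ K then (1:ℝ) else 0) = (K : ℝ) + 1 := by
  rw [← Finset.sum_filter]
  have h : Finset.filter (fun i => i ≤ K) (Finset.range n) = Finset.range (K+1) := by
    ext k; simp [Nat.lt_succ_iff]; omega
  simp [h]

lemma swap4 (s : Finset ℕ) (f : ℕ → ℕ → ℕ → ℕ → ℝ) :
    ∑ i ∈ s, ∑ j ∈ s, ∑ k ∈ s, ∑ l ∈ s, f i j k l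
      = ∑ k ∈ s, ∑ l ∈ s, ∑ i ∈ s, ∑ j ∈ s, f i j k l := by
  have h1 : ∑ i ∈ s, ∑ j ∈ s, ∑ k ∈ s, ∑ l ∈ s, f i j k l
      = ∑ i ∈ s, ∑ k ∈ s, ∑ j ∈ s, ∑ l ∈ s, f i j k l :=
    Finset.sum_congr rfl fun i _ => Finset.sum_comm
  have h2 : ∑ i ∈ s, ∑ k ∈ s, ∑ j ∈ s, ∑ l ∈ s, f i j k l
      = ∑ k ∈ s, ∑ i ∈ s, ∑ j ∈ s, ∑ l ∈ s, f i j k l := Finset.sum_comm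
  have h3 : ∑ k ∈ s, ∑ i ∈ s, ∑ j ∈ s, ∑ l ∈ s, f i j k l
      = ∑ k ∈ s, ∑ l ∈ s, ∑ i ∈ s, ∑ j ∈ s, f i j k l := by
    refine Finset.sum_congr rfl fun k _ => ?_
    have h4 : ∑ i ∈ s, ∑ j ∈ s, ∑ l ∈ s, f i j k l
        = ∑ i ∈ s, ∑ l ∈ s, ∑ j ∈ s, f i j k l :=
      Finset.sum_congr rfl fun i _ => Finset.sum_comm
    rw [h4]; exact Finset.sum_comm
  rw [h1, h2, h3]

lemma Sbound_row (n K L : ℕ) (hK : K < n) (D : ℕ → ℕ → ℝ) (hD : ∀ i j, 0 ≤ D i j)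
    (hrow : ∀ i, ∑ j ∈ Finset.range n, D i j ≤ 1) :
    ∑ i ∈ Finset.range n, ∑ j ∈ Finset.range n,
        (if i ≤ K then (1:ℝ) else 0) * (if j ≤ L then (1:ℝ) else 0) * D i j
      ≤ (K : ℝ) + 1 := by
  have h1 : ∀ i ∈ Finset.range n,
      ∑ j ∈ Finset.range n, (if i ≤ K then (1:ℝ) else 0) * (if j ≤ L then (1:ℝ) else 0) * D i j
        ≤ (if i ≤ K then (1:ℝ) else 0) := by
    intro i _
    by_cases h : i ≤ K
    · simp only [h, if_true, one_mul]
      calc ∑ j ∈ Finset.range n, (if j ≤ L then (1:ℝ) else 0) * D i j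
          ≤ ∑ j ∈ Finset.range n, D i j :=
            Finset.sum_le_sum fun j _ => by split_ifs <;> simp [hD i j]
        _ ≤ 1 := hrow i
    · simp [h]
  calc _ ≤ ∑ i ∈ Finset.range n, (if i ≤ K then (1:ℝ) else 0) := Finset.sum_le_sum h1
    _ = (K : ℝ) + 1 := count_eq n K hK

lemma Sbound (n K L : ℕ) (hK : K < n) (hL : L < n) (D : ℕ → ℕ → ℝ) (hD : ∀ i j, 0 ≤ D i j)
    (hrow : ∀ i, ∑ j ∈ Finset.range n, D i j ≤ 1)
    (hcol : ∀ j, ∑ i ∈ Finset.range n, D i j ≤ 1) :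
    ∑ i ∈ Finset.range n, ∑ j ∈ Finset.range n,
        (if i ≤ K then (1:ℝ) else 0) * (if j ≤ L then (1:ℝ) else 0) * D i j
      ≤ (min K L : ℕ) + 1 := by
  have hcolb : ∑ i ∈ Finset.range n, ∑ j ∈ Finset.range n,
      (if i ≤ K then (1:ℝ) else 0) * (if j ≤ L then (1:ℝ) else 0) * D i j ≤ (L : ℝ) + 1 := by
    rw [Finset.sum_comm]
    have := Sbound_row n L K hL (fun j i => D i j) (fun j i => hD i j) hcol
    calc ∑ j ∈ Finset.range n, ∑ i ∈ Finset.range n,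
          (if i ≤ K then (1:ℝ) else 0) * (if j ≤ L then (1:ℝ) else 0) * D i j
        = ∑ j ∈ Finset.range n, ∑ i ∈ Finset.range n,
          (if j ≤ L then (1:ℝ) else 0) * (if i ≤ K then (1:ℝ) else 0) * D i j := by
          refine Finset.sum_congr rfl fun j _ => Finset.sum_congr rfl fun i _ => by ring
      _ ≤ (L : ℝ) + 1 := this
  have hrowb := Sbound_row n K L hK D hD hrow
  rcases Nat.le_total K L with h | h
  · rw [min_eq_left h]; exact hrowb
  · rw [min_eq_right h]; exact hcolb

lemma abel_key (n : ℕ) (x y : ℕ → ℝ) (hx : Antitone x) (hy : Antitone y)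
    (hxn : x n = 0) (hyn : y n = 0)
    (D : ℕ → ℕ → ℝ) (hD : ∀ i j, 0 ≤ D i j)
    (hrow : ∀ i, ∑ j ∈ Finset.range n, D i j ≤ 1)
    (hcol : ∀ j, ∑ i ∈ Finset.range n, D i j ≤ 1) :
    ∑ i ∈ Finset.range n, ∑ j ∈ Finset.range n, x i * y j * D i j
      ≤ ∑ i ∈ Finset.range n, x i * y i := by
  have hδ0 : ∀ k, (0:ℝ) ≤ x k - x (k+1) := fun k => sub_nonneg.2 (hx (Nat.le_succ k))
  have hε0 : ∀ l, (0:ℝ) ≤ y l - y (l+1) := fun l => sub_nonneg.2 (hy (Nat.le_succ l))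
  have hL : ∑ i ∈ range n, ∑ j ∈ range n, x i * y j * D i j
      = ∑ k ∈ range n, ∑ l ∈ range n, (x k - x (k+1)) * (y l - y (l+1)) *
          (∑ i ∈ range n, ∑ j ∈ range n,
            (if i ≤ k then (1:ℝ) else 0) * (if j ≤ l then (1:ℝ) else 0) * D i j) := by
    have step : ∀ i ∈ range n, ∀ j ∈ range n, x i * y j * D i j
        = ∑ k ∈ range n, ∑ l ∈ range n,
            (x k - x (k+1)) * (y l - y (l+1)) *
              ((if i ≤ k then (1:ℝ) else 0) * (if j ≤ l then (1:ℝ) else 0) * D i j) := by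
      intro i hi j hj
      rw [Finset.mem_range] at hi hj
      nth_rewrite 1 [ind_eq n x hxn hi, ind_eq n y hyn hj]
      rw [Finset.sum_mul_sum, Finset.sum_mul]
      refine Finset.sum_congr rfl fun k _ => ?_
      rw [Finset.sum_mul]
      refine Finset.sum_congr rfl fun l _ => ?_
      split_ifs <;> ring
    calc ∑ i ∈ range n, ∑ j ∈ range n, x i * y j * D i j
        = ∑ i ∈ range n, ∑ j ∈ range n, ∑ k ∈ range n, ∑ l ∈ range n,
            (x k - x (k+1)) * (y l - y (l+1)) *
              ((if i ≤ k then (1:ℝ) else 0) * (if j ≤ l then (1:ℝ) else 0) * D i j) :=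
          Finset.sum_congr rfl fun i hi => Finset.sum_congr rfl fun j hj => step i hi j hj
      _ = ∑ k ∈ range n, ∑ l ∈ range n, ∑ i ∈ range n, ∑ j ∈ range n,
            (x k - x (k+1)) * (y l - y (l+1)) *
              ((if i ≤ k then (1:ℝ) else 0) * (if j ≤ l then (1:ℝ) else 0) * D i j) :=
          swap4 _ _
      _ = _ := by
          refine Finset.sum_congr rfl fun k _ => Finset.sum_congr rfl fun l _ => ?_
          rw [Finset.mul_sum]
          refine Finset.sum_congr rfl fun i _ => ?_
          rw [Finset.mul_sum]
  have hR : ∑ i ∈ range n, x i * y i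
      = ∑ k ∈ range n, ∑ l ∈ range n, (x k - x (k+1)) * (y l - y (l+1)) *
          ((min k l : ℕ) + 1 : ℝ) := by
    have step : ∀ i ∈ range n, x i * y i
        = ∑ k ∈ range n, ∑ l ∈ range n,
            (x k - x (k+1)) * (y l - y (l+1)) *
              (if i ≤ min k l then (1:ℝ) else 0) := by
      intro i hi
      rw [Finset.mem_range] at hi
      nth_rewrite 1 [ind_eq n x hxn hi, ind_eq n y hyn hi]
      rw [Finset.sum_mul_sum]
      refine Finset.sum_congr rfl fun k _ => Finset.sum_congr rfl fun l _ => ?_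
      rcases Nat.le_total k l with h | h
      · rw [min_eq_left h]
        by_cases hik : i ≤ k
        · simp [hik, le_trans hik h]
        · simp [hik]
      · rw [min_eq_right h]
        by_cases hil : i ≤ l
        · simp [hil, le_trans hil h]
        · by_cases hik : i ≤ k <;> simp [hik, hil]
    calc ∑ i ∈ range n, x i * y i
        = ∑ i ∈ range n, ∑ k ∈ range n, ∑ l ∈ range n,
            (x k - x (k+1)) * (y l - y (l+1)) * (if i ≤ min k l then (1:ℝ) else 0) :=
          Finset.sum_congr rfl fun i hi => step i hi
      _ = ∑ k ∈ range n, ∑ i ∈ range n, ∑ l ∈ range n,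
            (x k - x (k+1)) * (y l - y (l+1)) * (if i ≤ min k l then (1:ℝ) else 0) :=
          Finset.sum_comm
      _ = ∑ k ∈ range n, ∑ l ∈ range n, ∑ i ∈ range n,
            (x k - x (k+1)) * (y l - y (l+1)) * (if i ≤ min k l then (1:ℝ) else 0) :=
          Finset.sum_congr rfl fun k _ => Finset.sum_comm
      _ = _ := by
          refine Finset.sum_congr rfl fun k hk => Finset.sum_congr rfl fun l hl => ?_
          rw [Finset.mem_range] at hk hl
          rw [← Finset.mul_sum, count_eq n (min k l) (by omega)]
  rw [hL, hR]
  refine Finset.sum_le_sum fun k hk => Finset.sum_le_sum fun l hl => ?_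
  rw [Finset.mem_range] at hk hl
  exact mul_le_mul_of_nonneg_left (Sbound n k l hk hl D hD hrow hcol)
    (mul_nonneg (hδ0 k) (hε0 l))

lemma fin_key (n : ℕ) (x y : Fin n → ℝ)
    (hx : ∀ i j : Fin n, i ≤ j → x j ≤ x i) (hx0 : ∀ i, 0 ≤ x i)
    (hy : ∀ i j : Fin n, i ≤ j → y j ≤ y i) (hy0 : ∀ i, 0 ≤ y i)
    (D : Fin n → Fin n → ℝ) (hD : ∀ i j, 0 ≤ D i j)
    (hrow : ∀ i, ∑ j, D i j ≤ 1) (hcol : ∀ j, ∑ i, D i j ≤ 1) :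
    ∑ i, ∑ j, x i * y j * D i j ≤ ∑ i, x i * y i := by
  set x' : ℕ → ℝ := fun k => if h : k < n then x ⟨k, h⟩ else 0 with hx'
  set y' : ℕ → ℝ := fun k => if h : k < n then y ⟨k, h⟩ else 0 with hy'
  set D' : ℕ → ℕ → ℝ := fun i j =>
    if h : i < n ∧ j < n then D ⟨i, h.1⟩ ⟨j, h.2⟩ else 0 with hD'
  have ext_anti : ∀ (u : Fin n → ℝ), (∀ i j : Fin n, i ≤ j → u j ≤ u i) → (∀ i, 0 ≤ u i) →
      Antitone (fun k => if h : k < n then u ⟨k, h⟩ else 0) := by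
    intro u hu hu0 a b hab
    dsimp only
    by_cases hb : b < n
    · have ha : a < n := lt_of_le_of_lt hab hb
      rw [dif_pos ha, dif_pos hb]
      exact hu ⟨a, ha⟩ ⟨b, hb⟩ hab
    · rw [dif_neg hb]
      by_cases ha : a < n
      · rw [dif_pos ha]; exact hu0 _
      · rw [dif_neg ha]
  have hax : Antitone x' := ext_anti x hx hx0
  have hay : Antitone y' := ext_anti y hy hy0
  have hxn : x' n = 0 := dif_neg (lt_irrefl n)
  have hyn : y' n = 0 := dif_neg (lt_irrefl n)
  have hD0 : ∀ i j, 0 ≤ D' i j := by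
    intro i j; simp only [hD']; split_ifs; exacts [hD _ _, le_refl 0]
  have sum_ext : ∀ (f : Fin n → ℝ) (g : ℕ → ℝ), (∀ i : Fin n, g ↑i = f i) →
      ∑ i ∈ range n, g i = ∑ i, f i := by
    intro f g hfg
    rw [← Fin.sum_univ_eq_sum_range g n]
    exact Finset.sum_congr rfl fun i _ => hfg i
  have hrow' : ∀ i, ∑ j ∈ range n, D' i j ≤ 1 := by
    intro i
    by_cases hi : i < n
    · have : ∑ j ∈ range n, D' i j = ∑ j, D ⟨i, hi⟩ j := by
        refine sum_ext _ _ fun j => ?_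
        simp [hD', hi, j.isLt]
      rw [this]; exact hrow _
    · have : ∑ j ∈ range n, D' i j = 0 := by
        refine Finset.sum_eq_zero fun j _ => ?_
        simp [hD', hi]
      rw [this]; norm_num
  have hcol' : ∀ j, ∑ i ∈ range n, D' i j ≤ 1 := by
    intro j
    by_cases hj : j < n
    · have : ∑ i ∈ range n, D' i j = ∑ i, D i ⟨j, hj⟩ := by
        refine sum_ext _ _ fun i => ?_
        simp [hD', hj, i.isLt]
      rw [this]; exact hcol _
    · have : ∑ i ∈ range n, D' i j = 0 := by
        refine Finset.sum_eq_zero fun i _ => ?_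
        simp [hD', hj]
      rw [this]; norm_num
  have key := abel_key n x' y' hax hay hxn hyn D' hD0 hrow' hcol'
  have e1 : ∑ i ∈ range n, ∑ j ∈ range n, x' i * y' j * D' i j
      = ∑ i, ∑ j, x i * y j * D i j := by
    refine sum_ext _ _ fun i => ?_
    refine sum_ext _ _ fun j => ?_
    simp [hx', hy', hD', i.isLt, j.isLt]
  have e2 : ∑ i ∈ range n, x' i * y' i = ∑ i, x i * y i := by
    refine sum_ext _ _ fun i => ?_
    simp [hx', hy', i.isLt]
  rw [e1, e2] at key
  exact key



lemma udv_apply {n m : ℕ} (hnm : n ≤ m) (U : Matrix (Fin n) (Fin n) ℝ)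
    (V : Matrix (Fin m) (Fin m) ℝ) (s : Fin n → ℝ) (i : Fin n) (j : Fin m) :
    (U * rdiag n m s * Vᵀ) i j = ∑ a, U i a * s a * V j (Fin.castLE hnm a) := by
  simp only [Matrix.mul_apply, Matrix.transpose_apply, rdiag, Matrix.of_apply,
    Finset.sum_mul]
  rw [Finset.sum_comm]
  refine Finset.sum_congr rfl fun a _ => ?_
  have h : ∀ b : Fin m, (U i a * if (b:ℕ) = (a:ℕ) then s a else 0) * V j b
      = if b = Fin.castLE hnm a then U i a * s a * V j b else 0 := by
    intro b
    have : ((b : ℕ) = (a : ℕ)) ↔ (b = Fin.castLE hnm a) := by rw [Fin.ext_iff]; simp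
    by_cases hb : b = Fin.castLE hnm a
    · rw [if_pos hb, if_pos (this.2 hb)]
    · rw [if_neg hb, if_neg (fun hc => hb (this.1 hc))]; ring
  rw [Finset.sum_congr rfl fun b _ => h b, Finset.sum_ite_eq' univ]
  simp

lemma pairing {n m : ℕ} (hnm : n ≤ m) (U U' : Matrix (Fin n) (Fin n) ℝ)
    (V V' : Matrix (Fin m) (Fin m) ℝ) (x s : Fin n → ℝ) :
    ∑ i, ∑ j, (U * rdiag n m x * Vᵀ) i j * (U' * rdiag n m s * V'ᵀ) i j
      = ∑ a, ∑ c, x a * s c * ((Uᵀ * U') a c) *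
          ((Vᵀ * V') (Fin.castLE hnm a) (Fin.castLE hnm c)) := by
  simp only [udv_apply hnm]
  calc ∑ i, ∑ j, (∑ a, U i a * x a * V j (Fin.castLE hnm a)) *
        (∑ c, U' i c * s c * V' j (Fin.castLE hnm c))
      = ∑ i, ∑ j, ∑ a, ∑ c, (U i a * x a * V j (Fin.castLE hnm a)) *
          (U' i c * s c * V' j (Fin.castLE hnm c)) := by
        refine Finset.sum_congr rfl fun i _ => Finset.sum_congr rfl fun j _ => ?_
        rw [Finset.sum_mul_sum]
    _ = ∑ a, ∑ c, ∑ i, ∑ j, (U i a * x a * V j (Fin.castLE hnm a)) *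
          (U' i c * s c * V' j (Fin.castLE hnm c)) := by
        rw [show (∑ i : Fin n, ∑ j : Fin m, ∑ a : Fin n, ∑ c : Fin n,
            (U i a * x a * V j (Fin.castLE hnm a)) * (U' i c * s c * V' j (Fin.castLE hnm c)))
          = ∑ i : Fin n, ∑ a : Fin n, ∑ j : Fin m, ∑ c : Fin n,
            (U i a * x a * V j (Fin.castLE hnm a)) * (U' i c * s c * V' j (Fin.castLE hnm c))
          from Finset.sum_congr rfl fun i _ => Finset.sum_comm]
        rw [Finset.sum_comm]
        refine Finset.sum_congr rfl fun a _ => ?_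
        rw [show (∑ i : Fin n, ∑ j : Fin m, ∑ c : Fin n,
            (U i a * x a * V j (Fin.castLE hnm a)) * (U' i c * s c * V' j (Fin.castLE hnm c)))
          = ∑ i : Fin n, ∑ c : Fin n, ∑ j : Fin m,
            (U i a * x a * V j (Fin.castLE hnm a)) * (U' i c * s c * V' j (Fin.castLE hnm c))
          from Finset.sum_congr rfl fun i _ => Finset.sum_comm]
        exact Finset.sum_comm
    _ = ∑ a, ∑ c, x a * s c * ((Uᵀ * U') a c) *
          ((Vᵀ * V') (Fin.castLE hnm a) (Fin.castLE hnm c)) := by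
        refine Finset.sum_congr rfl fun a _ => Finset.sum_congr rfl fun c _ => ?_
        simp only [Matrix.mul_apply, Matrix.transpose_apply]
        calc ∑ i, ∑ j, (U i a * x a * V j (Fin.castLE hnm a)) *
              (U' i c * s c * V' j (Fin.castLE hnm c))
            = ∑ i, ∑ j, (x a * s c * (U i a * U' i c)) *
              (V j (Fin.castLE hnm a) * V' j (Fin.castLE hnm c)) := by
              refine Finset.sum_congr rfl fun i _ => Finset.sum_congr rfl fun j _ => by ring
          _ = (∑ i, x a * s c * (U i a * U' i c)) *
              (∑ j, V j (Fin.castLE hnm a) * V' j (Fin.castLE hnm c)) :=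
              (Finset.sum_mul_sum _ _ _ _).symm
          _ = x a * s c * (∑ i, U i a * U' i c) *
              (∑ j, V j (Fin.castLE hnm a) * V' j (Fin.castLE hnm c)) := by
              rw [← Finset.mul_sum]

lemma row_sq {k : ℕ} (A : Matrix (Fin k) (Fin k) ℝ) (hA : A * Aᵀ = 1) (a : Fin k) :
    ∑ c, A a c ^ 2 = 1 := by
  have h := congrArg (fun M => M a a) hA
  simp only [Matrix.mul_apply, Matrix.transpose_apply, Matrix.one_apply_eq] at h
  rw [← h]
  exact Finset.sum_congr rfl fun c _ => (sq (A a c)).symm ▸ rfl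

lemma col_sq {k : ℕ} (A : Matrix (Fin k) (Fin k) ℝ) (hA : Aᵀ * A = 1) (c : Fin k) :
    ∑ a, A a c ^ 2 = 1 := by
  have h := congrArg (fun M => M c c) hA
  simp only [Matrix.mul_apply, Matrix.transpose_apply, Matrix.one_apply_eq] at h
  rw [← h]
  exact Finset.sum_congr rfl fun a _ => (sq (A a c)).symm ▸ rfl

lemma emb_sum_le {n m : ℕ} (hnm : n ≤ m) (g : Fin m → ℝ) (hg : ∀ j, 0 ≤ g j) :
    ∑ c : Fin n, g (Fin.castLE hnm c) ≤ ∑ j : Fin m, g j := by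
  have hinj : Function.Injective (Fin.castLE hnm) := Fin.castLE_injective hnm
  rw [← Finset.sum_image (fun a _ b _ h => hinj h)]
  exact Finset.sum_le_sum_of_subset_of_nonneg (Finset.subset_univ _)
    (fun j _ _ => hg j)

lemma trace_ineq {n m : ℕ} (hnm : n ≤ m) (x s : Fin n → ℝ)
    (hx : ∀ i j : Fin n, i ≤ j → x j ≤ x i) (hx0 : ∀ i, 0 ≤ x i)
    (A : Matrix (Fin n) (Fin n) ℝ) (hA1 : A * Aᵀ = 1) (hA2 : Aᵀ * A = 1)
    (B : Matrix (Fin m) (Fin m) ℝ) (hB1 : B * Bᵀ = 1) (hB2 : Bᵀ * B = 1)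
    (τ : Equiv.Perm (Fin n))
    (hσ : ∀ i j : Fin n, i ≤ j → |s (τ j)| ≤ |s (τ i)|) :
    ∑ a, ∑ c, x a * s c * A a c * B (Fin.castLE hnm a) (Fin.castLE hnm c)
      ≤ ∑ i, x i * |s (τ i)| := by
  set σ : Fin n → ℝ := fun i => |s (τ i)| with hσdef
  set D : Fin n → Fin n → ℝ :=
    fun i j => |A i (τ j) * B (Fin.castLE hnm i) (Fin.castLE hnm (τ j))| with hDdef
  -- reindex inner sums by τ
  have reindex : ∑ a, ∑ c, x a * s c * A a c * B (Fin.castLE hnm a) (Fin.castLE hnm c)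
      = ∑ a, ∑ c, x a * s (τ c) * A a (τ c) * B (Fin.castLE hnm a) (Fin.castLE hnm (τ c)) := by
    refine Finset.sum_congr rfl fun a _ => ?_
    exact (Equiv.sum_comp τ fun c =>
      x a * s c * A a c * B (Fin.castLE hnm a) (Fin.castLE hnm c)).symm
  rw [reindex]
  have hterm : ∀ a c : Fin n,
      x a * s (τ c) * A a (τ c) * B (Fin.castLE hnm a) (Fin.castLE hnm (τ c))
        ≤ x a * σ c * D a c := by
    intro a c
    have h1 : s (τ c) * (A a (τ c) * B (Fin.castLE hnm a) (Fin.castLE hnm (τ c)))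
        ≤ σ c * D a c := by
      calc s (τ c) * (A a (τ c) * B (Fin.castLE hnm a) (Fin.castLE hnm (τ c)))
          ≤ |s (τ c) * (A a (τ c) * B (Fin.castLE hnm a) (Fin.castLE hnm (τ c)))| :=
            le_abs_self _
        _ = σ c * D a c := by rw [abs_mul]
    calc x a * s (τ c) * A a (τ c) * B (Fin.castLE hnm a) (Fin.castLE hnm (τ c))
        = x a * (s (τ c) * (A a (τ c) * B (Fin.castLE hnm a) (Fin.castLE hnm (τ c)))) := by
          ring
      _ ≤ x a * (σ c * D a c) := mul_le_mul_of_nonneg_left h1 (hx0 a)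
      _ = x a * σ c * D a c := by ring
  have hDbound : ∀ i j : Fin n, D i j
      ≤ (A i (τ j) ^ 2 + B (Fin.castLE hnm i) (Fin.castLE hnm (τ j)) ^ 2) / 2 := by
    intro i j
    rw [hDdef]
    dsimp only
    rw [abs_mul]
    nlinarith [abs_nonneg (A i (τ j)), abs_nonneg (B (Fin.castLE hnm i) (Fin.castLE hnm (τ j))),
      sq_abs (A i (τ j)), sq_abs (B (Fin.castLE hnm i) (Fin.castLE hnm (τ j))),
      sq_nonneg (|A i (τ j)| - |B (Fin.castLE hnm i) (Fin.castLE hnm (τ j))|)]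
  have hrow : ∀ i, ∑ j, D i j ≤ 1 := by
    intro i
    calc ∑ j, D i j
        ≤ ∑ j, (A i (τ j) ^ 2 + B (Fin.castLE hnm i) (Fin.castLE hnm (τ j)) ^ 2) / 2 :=
          Finset.sum_le_sum fun j _ => hDbound i j
      _ = ((∑ j, A i (τ j) ^ 2) + ∑ j, B (Fin.castLE hnm i) (Fin.castLE hnm (τ j)) ^ 2) / 2 := by
          rw [← Finset.sum_div, Finset.sum_add_distrib]
      _ ≤ (1 + 1) / 2 := by
          have e1 : ∑ j, A i (τ j) ^ 2 = ∑ j, A i j ^ 2 :=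
            Equiv.sum_comp τ (fun j => A i j ^ 2)
          have e2 : ∑ j, B (Fin.castLE hnm i) (Fin.castLE hnm (τ j)) ^ 2
              = ∑ j, B (Fin.castLE hnm i) (Fin.castLE hnm j) ^ 2 :=
            Equiv.sum_comp τ (fun j => B (Fin.castLE hnm i) (Fin.castLE hnm j) ^ 2)
          have e3 : ∑ j : Fin n, B (Fin.castLE hnm i) (Fin.castLE hnm j) ^ 2
              ≤ ∑ j : Fin m, B (Fin.castLE hnm i) j ^ 2 :=
            emb_sum_le hnm (fun j => B (Fin.castLE hnm i) j ^ 2) (fun j => sq_nonneg _)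
          have e4 : ∑ j : Fin m, B (Fin.castLE hnm i) j ^ 2 = 1 := row_sq B hB1 _
          rw [e1, e2, row_sq A hA1 i]
          linarith
      _ = 1 := by norm_num
  have hcol : ∀ j, ∑ i, D i j ≤ 1 := by
    intro j
    calc ∑ i, D i j
        ≤ ∑ i, (A i (τ j) ^ 2 + B (Fin.castLE hnm i) (Fin.castLE hnm (τ j)) ^ 2) / 2 :=
          Finset.sum_le_sum fun i _ => hDbound i j
      _ = ((∑ i, A i (τ j) ^ 2) + ∑ i, B (Fin.castLE hnm i) (Fin.castLE hnm (τ j)) ^ 2) / 2 := by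
          rw [← Finset.sum_div, Finset.sum_add_distrib]
      _ ≤ (1 + 1) / 2 := by
          have e3 : ∑ i : Fin n, B (Fin.castLE hnm i) (Fin.castLE hnm (τ j)) ^ 2
              ≤ ∑ i : Fin m, B i (Fin.castLE hnm (τ j)) ^ 2 :=
            emb_sum_le hnm (fun i => B i (Fin.castLE hnm (τ j)) ^ 2) (fun i => sq_nonneg _)
          have e4 : ∑ i : Fin m, B i (Fin.castLE hnm (τ j)) ^ 2 = 1 := col_sq B hB2 _
          rw [col_sq A hA2 (τ j)]
          linarith
      _ = 1 := by norm_num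
  have hD0 : ∀ i j, 0 ≤ D i j := fun i j => abs_nonneg _
  have hσ0 : ∀ i, 0 ≤ σ i := fun i => abs_nonneg _
  calc ∑ a, ∑ c, x a * s (τ c) * A a (τ c) * B (Fin.castLE hnm a) (Fin.castLE hnm (τ c))
      ≤ ∑ a, ∑ c, x a * σ c * D a c :=
        Finset.sum_le_sum fun a _ => Finset.sum_le_sum fun c _ => hterm a c
    _ ≤ ∑ i, x i * σ i := fin_key n x σ hx hx0 hσ hσ0 D hD0 hrow hcol

lemma sorted_abs_exists (n : ℕ) (s : Fin n → ℝ) :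
    ∃ τ : Equiv.Perm (Fin n), ∀ i j : Fin n, i ≤ j → |s (τ j)| ≤ |s (τ i)| := by
  refine ⟨Tuple.sort (fun i => -|s i|), fun i j hij => ?_⟩
  have := Tuple.monotone_sort (fun i => -|s i|) hij
  simp only [Function.comp_apply] at this
  linarith

lemma sq_sum_eq {n m : ℕ} (hnm : n ≤ m) (U : Matrix (Fin n) (Fin n) ℝ)
    (V : Matrix (Fin m) (Fin m) ℝ) (hUt : Uᵀ * U = 1) (hVt : Vᵀ * V = 1)
    (w : Fin n → ℝ) :
    ∑ i, ∑ j, ((U * rdiag n m w * Vᵀ) i j) ^ 2 = ∑ a, w a ^ 2 := by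
  calc ∑ i, ∑ j, ((U * rdiag n m w * Vᵀ) i j) ^ 2
      = ∑ i, ∑ j, (U * rdiag n m w * Vᵀ) i j * (U * rdiag n m w * Vᵀ) i j := by
        refine Finset.sum_congr rfl fun i _ => Finset.sum_congr rfl fun j _ => sq _
    _ = ∑ a, ∑ c, w a * w c * ((Uᵀ * U) a c) *
          ((Vᵀ * V) (Fin.castLE hnm a) (Fin.castLE hnm c)) := pairing hnm U U V V w w
    _ = ∑ a, w a ^ 2 := by
        rw [hUt, hVt]
        have h : ∀ a c : Fin n, w a * w c * ((1 : Matrix (Fin n) (Fin n) ℝ) a c) *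
            ((1 : Matrix (Fin m) (Fin m) ℝ) (Fin.castLE hnm a) (Fin.castLE hnm c))
            = if c = a then w a ^ 2 else 0 := by
          intro a c
          by_cases hca : c = a
          · subst hca; rw [if_pos rfl, Matrix.one_apply_eq, Matrix.one_apply_eq]; ring
          · rw [if_neg hca, Matrix.one_apply_ne (fun h => hca h.symm)]; ring
        refine Finset.sum_congr rfl fun a _ => ?_
        rw [Finset.sum_congr rfl fun c _ => h a c, Finset.sum_ite_eq' univ]
        simp

lemma rdiag_sub (n m : ℕ) (x z : Fin n → ℝ) :
    rdiag n m (x - z) = rdiag n m x - rdiag n m z := by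
  ext i j
  simp only [rdiag, Matrix.of_apply, Matrix.sub_apply, Pi.sub_apply]
  split_ifs <;> simp

lemma expand_sq {n m : ℕ} (M N : Matrix (Fin n) (Fin m) ℝ) :
    ∑ i, ∑ j, (M i j - N i j) ^ 2
      = (∑ i, ∑ j, M i j ^ 2) + (∑ i, ∑ j, N i j ^ 2)
        - 2 * (∑ i, ∑ j, M i j * N i j) := by
  have h : ∀ i : Fin n, ∑ j, (M i j - N i j) ^ 2
      = (∑ j, M i j ^ 2) + (∑ j, N i j ^ 2) - 2 * (∑ j, M i j * N i j) := by
    intro i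
    rw [Finset.mul_sum, ← Finset.sum_add_distrib, ← Finset.sum_sub_distrib]
    refine Finset.sum_congr rfl fun j _ => by ring
  rw [Finset.sum_congr rfl fun i _ => h i, Finset.mul_sum, ← Finset.sum_add_distrib,
    ← Finset.sum_sub_distrib]

lemma frob_ge {n m : ℕ} (hnm : n ≤ m) (Q : Set (Fin n → ℝ)) (hQ : AbsPermInv Q)
    (U U' : Matrix (Fin n) (Fin n) ℝ) (V V' : Matrix (Fin m) (Fin m) ℝ)
    (hU : U * Uᵀ = 1) (hU' : U' * U'ᵀ = 1) (hV : V * Vᵀ = 1) (hV' : V' * V'ᵀ = 1)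
    (x : Fin n → ℝ) (hx : ∀ i j : Fin n, i ≤ j → x j ≤ x i) (hx0 : ∀ i, 0 ≤ x i)
    (s : Fin n → ℝ) (hs : s ∈ Q) :
    vdistSet x Q ≤ frobNorm (U * rdiag n m x * Vᵀ - U' * rdiag n m s * V'ᵀ) := by
  have hUt : Uᵀ * U = 1 := mul_eq_one_comm.mp hU
  have hU't : U'ᵀ * U' = 1 := mul_eq_one_comm.mp hU'
  have hVt : Vᵀ * V = 1 := mul_eq_one_comm.mp hV
  have hV't : V'ᵀ * V' = 1 := mul_eq_one_comm.mp hV'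
  obtain ⟨τ, hτ⟩ := sorted_abs_exists n s
  set σ : Fin n → ℝ := fun i => |s (τ i)| with hσdef
  have hσQ : σ ∈ Q := by
    have he : ∀ i : Fin n, (if s (τ i) < 0 then (-1:ℝ) else 1) = 1 ∨
        (if s (τ i) < 0 then (-1:ℝ) else 1) = -1 := by
      intro i; by_cases h : s (τ i) < 0 <;> simp [h]
    have hmem := hQ τ (fun i => if s (τ i) < 0 then (-1:ℝ) else 1) he s hs
    have heq : (fun i => (if s (τ i) < 0 then (-1:ℝ) else 1) * s (τ i)) = σ := by
      funext i
      by_cases h : s (τ i) < 0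
      · rw [if_pos h, hσdef]; dsimp only; rw [abs_of_neg h]; ring
      · rw [if_neg h, hσdef]; dsimp only; rw [abs_of_nonneg (not_lt.1 h)]; ring
    rwa [heq] at hmem
  set A : Matrix (Fin n) (Fin n) ℝ := Uᵀ * U' with hAdef
  set B : Matrix (Fin m) (Fin m) ℝ := Vᵀ * V' with hBdef
  have hA1 : A * Aᵀ = 1 := by
    rw [hAdef, Matrix.transpose_mul, Matrix.transpose_transpose, Matrix.mul_assoc,
      ← Matrix.mul_assoc U' U'ᵀ U, hU', Matrix.one_mul, hUt]
  have hA2 : Aᵀ * A = 1 := by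
    rw [hAdef, Matrix.transpose_mul, Matrix.transpose_transpose, Matrix.mul_assoc,
      ← Matrix.mul_assoc U Uᵀ U', hU, Matrix.one_mul, hU't]
  have hB1 : B * Bᵀ = 1 := by
    rw [hBdef, Matrix.transpose_mul, Matrix.transpose_transpose, Matrix.mul_assoc,
      ← Matrix.mul_assoc V' V'ᵀ V, hV', Matrix.one_mul, hVt]
  have hB2 : Bᵀ * B = 1 := by
    rw [hBdef, Matrix.transpose_mul, Matrix.transpose_transpose, Matrix.mul_assoc,
      ← Matrix.mul_assoc V Vᵀ V', hV, Matrix.one_mul, hV't]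
  have hT : ∑ i, ∑ j, (U * rdiag n m x * Vᵀ) i j * (U' * rdiag n m s * V'ᵀ) i j
      ≤ ∑ i, x i * σ i := by
    rw [pairing hnm U U' V V' x s]
    exact trace_ineq hnm x s hx hx0 A hA1 hA2 B hB1 hB2 τ hτ
  have hXsq : ∑ i, ∑ j, ((U * rdiag n m x * Vᵀ) i j) ^ 2 = ∑ a, x a ^ 2 :=
    sq_sum_eq hnm U V hUt hVt x
  have hZsq : ∑ i, ∑ j, ((U' * rdiag n m s * V'ᵀ) i j) ^ 2 = ∑ a, σ a ^ 2 := by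
    rw [sq_sum_eq hnm U' V' hU't hV't s]
    have e1 : ∑ a, σ a ^ 2 = ∑ a, s (τ a) ^ 2 :=
      Finset.sum_congr rfl fun a _ => by rw [hσdef]; exact sq_abs _
    rw [e1, Equiv.sum_comp τ (fun a => s a ^ 2)]
  have hF : ∑ i, ∑ j, ((U * rdiag n m x * Vᵀ) i j - (U' * rdiag n m s * V'ᵀ) i j) ^ 2
      ≥ ∑ i, (x i - σ i) ^ 2 := by
    rw [expand_sq, hXsq, hZsq]
    have e2 : ∑ i, (x i - σ i) ^ 2
        = (∑ a, x a ^ 2) + (∑ a, σ a ^ 2) - 2 * ∑ i, x i * σ i := by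
      rw [Finset.mul_sum, ← Finset.sum_add_distrib, ← Finset.sum_sub_distrib]
      exact Finset.sum_congr rfl fun i _ => by ring
    rw [e2]
    linarith
  have hvd : vdistSet x Q ≤ vnorm (x - σ) := by
    refine csInf_le ⟨0, fun w hw => ?_⟩ ⟨σ, hσQ, rfl⟩
    obtain ⟨y, _, rfl⟩ := hw
    exact Real.sqrt_nonneg _
  refine le_trans hvd ?_
  have : vnorm (x - σ) = Real.sqrt (∑ i, (x i - σ i) ^ 2) := by
    simp only [vnorm, Pi.sub_apply]
  rw [this]
  have hfn : frobNorm (U * rdiag n m x * Vᵀ - U' * rdiag n m s * V'ᵀ)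
      = Real.sqrt (∑ i, ∑ j, ((U * rdiag n m x * Vᵀ) i j - (U' * rdiag n m s * V'ᵀ) i j) ^ 2) := by
    simp only [frobNorm, Matrix.sub_apply]
  rw [hfn]
  exact Real.sqrt_le_sqrt hF

end Aux

/-- **Projection onto spectral sets (rectangular case).** -/
theorem projection_onto_spectral_set_rect
    (n m : ℕ) (hnm : n ≤ m) (Q : Set (Fin n → ℝ)) (hQ : AbsPermInv Q)
    (S : Set (Matrix (Fin n) (Fin m) ℝ))
    (hS : S = {A | ∃ (U : Matrix (Fin n) (Fin n) ℝ) (V : Matrix (Fin m) (Fin m) ℝ),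
      U * Uᵀ = 1 ∧ V * Vᵀ = 1 ∧ ∃ s ∈ Q, A = U * rdiag n m s * Vᵀ})
    (U : Matrix (Fin n) (Fin n) ℝ) (V : Matrix (Fin m) (Fin m) ℝ)
    (hU : U * Uᵀ = 1) (hV : V * Vᵀ = 1)
    (x : Fin n → ℝ) (hx : ∀ i j : Fin n, i ≤ j → x j ≤ x i) (hx0 : ∀ i, 0 ≤ x i)
    (X : Matrix (Fin n) (Fin m) ℝ) (hX : X = U * rdiag n m x * Vᵀ)
    (z : Fin n → ℝ) (hz : z ∈ Q) (hzx : vnorm (x - z) = vdistSet x Q) :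
    U * rdiag n m z * Vᵀ ∈ S ∧
      frobNorm (X - U * rdiag n m z * Vᵀ) = frobDistSet X S := by
  have hUt : Uᵀ * U = 1 := mul_eq_one_comm.mp hU
  have hVt : Vᵀ * V = 1 := mul_eq_one_comm.mp hV
  have hYS : U * rdiag n m z * Vᵀ ∈ S := by
    rw [hS]; exact ⟨U, V, hU, hV, z, hz, rfl⟩
  refine ⟨hYS, ?_⟩
  have hsub : U * rdiag n m (x - z) * Vᵀ = X - U * rdiag n m z * Vᵀ := by
    rw [hX, rdiag_sub, Matrix.mul_sub, Matrix.sub_mul]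
  have hfrobY : frobNorm (X - U * rdiag n m z * Vᵀ) = vnorm (x - z) := by
    rw [← hsub]
    simp only [frobNorm, vnorm]
    rw [sq_sum_eq hnm U V hUt hVt (x - z)]
  have hne : ((fun Z => frobNorm (X - Z)) '' S).Nonempty :=
    ⟨frobNorm (X - U * rdiag n m z * Vᵀ), ⟨_, hYS, rfl⟩⟩
  have hbdd : BddBelow ((fun Z => frobNorm (X - Z)) '' S) := by
    refine ⟨0, fun w hw => ?_⟩
    obtain ⟨Z, _, rfl⟩ := hw
    exact Real.sqrt_nonneg _
  have h1 : frobDistSet X S ≤ vnorm (x - z) := by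
    rw [← hfrobY]
    exact csInf_le hbdd ⟨_, hYS, rfl⟩
  have h2 : vnorm (x - z) ≤ frobDistSet X S := by
    rw [hzx]
    refine le_csInf hne fun w hw => ?_
    obtain ⟨Z, hZS, rfl⟩ := hw
    rw [hS] at hZS
    obtain ⟨U', V', hU', hV', s, hs, rfl⟩ := hZS
    rw [hX]
    exact frob_ge hnm Q hQ U U' V V' hU hU' hV hV' x hx hx0 s hs
  rw [hfrobY]
  exact le_antisymm h2 h1

end
end

section
/- Let Q ⊆ ℝⁿ be absolutely permutation-invariant and let x ∈ ℝⁿ satisfy x₁ ≥ x₂ ≥ … ≥ xₙ ≥ 0. If y ∈ Q satisfies |x − y| = d(x, Q), then there exist a permutation π of {1,…,n} and signs ε ∈ {−1,1}ⁿ such that the vector y' defined by y'ᵢ = εᵢ·y_{π(i)} lies in Q, satisfies y'₁ ≥ y'₂ ≥ … ≥ y'ₙ ≥ 0, and satisfies |x − y'| = d(x, Q). -/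
noncomputable section

/-- **Permutations of projected points.** -/
theorem permutations_of_projected_points
    (n : ℕ) (Q : Set (Fin n → ℝ)) (hQ : AbsPermInv Q)
    (x : Fin n → ℝ) (hx : ∀ i j : Fin n, i ≤ j → x j ≤ x i) (hx0 : ∀ i, 0 ≤ x i)
    (y : Fin n → ℝ) (hy : y ∈ Q) (hyx : vnorm (x - y) = vdistSet x Q) :
    ∃ (π : Equiv.Perm (Fin n)) (e : Fin n → ℝ) (y' : Fin n → ℝ),
      (∀ i, e i = 1 ∨ e i = -1) ∧
      (∀ i, y' i = e i * y (π i)) ∧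
      y' ∈ Q ∧
      (∀ i j : Fin n, i ≤ j → y' j ≤ y' i) ∧ (∀ i, 0 ≤ y' i) ∧
      vnorm (x - y') = vdistSet x Q := by
  classical
  set f : Fin n → ℝ := fun i => |y i| with hf
  set π : Equiv.Perm (Fin n) := Fin.revPerm.trans (Tuple.sort f) with hπ
  have hπi : ∀ i, π i = Tuple.sort f (Fin.rev i) := fun i => rfl
  set e : Fin n → ℝ := fun i => if y (π i) < 0 then -1 else 1 with he
  have hesign : ∀ i, e i = 1 ∨ e i = -1 := by
    intro i; by_cases h : y (π i) < 0 <;> simp [he, h]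
  set y' : Fin n → ℝ := fun i => |y (π i)| with hy'
  have heq : ∀ i, y' i = e i * y (π i) := by
    intro i
    by_cases h : y (π i) < 0
    · simp [hy', he, h, abs_of_neg h]
    · simp [hy', he, h, abs_of_nonneg (not_lt.mp h)]
  have hmem : y' ∈ Q := by
    have := hQ π e hesign y hy
    convert this using 1
    funext i; exact heq i
  -- y' is antitone
  have hanti : ∀ i j : Fin n, i ≤ j → y' j ≤ y' i := by
    intro i j hij
    have hrev : Fin.rev j ≤ Fin.rev i := Fin.rev_le_rev.mpr hij
    have := Tuple.monotone_sort f hrev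
    simpa [hy', hπi, hf] using this
  have hnn : ∀ i, 0 ≤ y' i := fun i => abs_nonneg _
  -- key sum inequality via rearrangement
  have hmono : Monovary x y' := by
    intro i j hij
    by_contra hcon
    push_neg at hcon
    have hji : j ≤ i := by
      by_contra hji
      exact absurd (hanti i j (le_of_not_ge hji)) (not_le.mpr hij)
    exact absurd (hx j i hji) (not_le.mpr hcon)
  have hsum1 : ∑ i, x i * y i ≤ ∑ i, x i * f i := by
    apply Finset.sum_le_sum
    intro i _
    exact mul_le_mul_of_nonneg_left (le_abs_self _) (hx0 i)
  have hsum2 : ∑ i, x i * f i ≤ ∑ i, x i * y' i := by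
    have hcomp : ∀ i, f i = y' (π.symm i) := by
      intro i; simp [hy', hf]
    calc ∑ i, x i * f i = ∑ i, x i * y' (π.symm i) := by
          exact Finset.sum_congr rfl fun i _ => by rw [hcomp]
      _ ≤ ∑ i, x i * y' i := hmono.sum_mul_comp_perm_le_sum_mul
  have hsumy : ∑ i, y' i ^ 2 = ∑ i, y i ^ 2 := by
    have : ∀ i, y' i ^ 2 = (fun j => y j ^ 2) (π i) := by
      intro i; simp [hy', sq_abs]
    rw [Finset.sum_congr rfl fun i _ => this i]
    exact Equiv.sum_comp π (fun j => y j ^ 2)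
  have hexp : ∀ z : Fin n → ℝ,
      ∑ i, (x i - z i) ^ 2 = ∑ i, x i ^ 2 + ∑ i, z i ^ 2 - 2 * ∑ i, x i * z i := by
    intro z
    have : ∀ i, (x i - z i) ^ 2 = x i ^ 2 + z i ^ 2 - 2 * (x i * z i) := by
      intro i; ring
    rw [Finset.sum_congr rfl fun i _ => this i]
    rw [Finset.sum_sub_distrib, Finset.sum_add_distrib, ← Finset.mul_sum]
  have hkey : ∑ i, (x i - y' i) ^ 2 ≤ ∑ i, (x i - y i) ^ 2 := by
    rw [hexp y', hexp y, hsumy]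
    have : ∑ i, x i * y i ≤ ∑ i, x i * y' i := le_trans hsum1 hsum2
    linarith
  have hle : vnorm (x - y') ≤ vnorm (x - y) := by
    apply Real.sqrt_le_sqrt
    simpa [Pi.sub_apply] using hkey
  have hge : vdistSet x Q ≤ vnorm (x - y') := by
    apply csInf_le
    · refine ⟨0, ?_⟩
      rintro r ⟨z, _, rfl⟩
      exact Real.sqrt_nonneg _
    · exact ⟨y', hmem, rfl⟩
  exact ⟨π, e, y', hesign, heq, hmem, hanti, hnn,
    le_antisymm (hyx ▸ hle) hge⟩

end
end

section
/- Let n ≤ m and let L, M ⊆ ℝⁿ be absolutely permutation-invariant sets, and let V ⊇ L and U ⊇ M be open absolutely permutation-invariant sets such that for all x ∈ V ∩ U the set equality P_L(x) = ⋃_{z∈P_M(x)} P_L(z) holds. Define the lifts Σ(S) := {A·(Diag s)·Bᵀ : A ∈ O(n), B ∈ O(m), s ∈ S} for S ∈ {L, M, V, U}, sets of real n×m matrices with the Frobenius norm. Suppose X ∈ Σ(V) ∩ Σ(U) is such that P_{Σ(M)}(X) = {Z} is a singleton, P_{Σ(L)}(X) = {W} is a singleton, and P_{Σ(L)}(Z)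 = {W'} is a singleton. Then W = W'. -/
open Matrix

noncomputable section

/-- The metric projection (set of nearest points) in `ℝⁿ` for the Euclidean norm. -/
def vprojSet {n : ℕ} (S : Set (Fin n → ℝ)) (x : Fin n → ℝ) : Set (Fin n → ℝ) :=
  {y ∈ S | vnorm (x - y) = vdistSet x S}

/-- The metric projection (set of nearest points) for the Frobenius norm on matrices. -/
def mprojSet {n m : ℕ} (S : Set (Matrix (Fin n) (Fin m) ℝ)) (X : Matrix (Fin n) (Fin m) ℝ) :
    Set (Matrix (Fin n) (Fin m) ℝ) :=
  {Y ∈ S | frobNorm (X - Y) = frobDistSet X S}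

/-- The spectral lift of a set `S ⊆ ℝⁿ` to the `n × m` real matrices. -/
def lift (n m : ℕ) (S : Set (Fin n → ℝ)) : Set (Matrix (Fin n) (Fin m) ℝ) :=
  {A | ∃ (U : Matrix (Fin n) (Fin n) ℝ) (V : Matrix (Fin m) (Fin m) ℝ),
    U * Uᵀ = 1 ∧ V * Vᵀ = 1 ∧ ∃ s ∈ S, A = U * rdiag n m s * Vᵀ}

namespace SpecLift
open Finset Polynomial




/-- indicator -/
def chi {k : ℕ} (i a : Fin k) : ℝ := if (i:ℕ) ≤ (a:ℕ) then 1 else 0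

lemma chi_nonneg {k : ℕ} (i a : Fin k) : 0 ≤ chi i a := by
  unfold chi; split <;> norm_num

lemma chi_le_one {k : ℕ} (i a : Fin k) : chi i a ≤ 1 := by
  unfold chi; split <;> norm_num

lemma telescope {k : ℕ} (x : Fin k → ℝ) (i : Fin k) :
    x i = ∑ a : Fin k, chi i a *
      (x a - (if h : (a:ℕ)+1 < k then x ⟨(a:ℕ)+1, h⟩ else 0)) := by
  set xt : ℕ → ℝ := fun j => if h : j < k then x ⟨j, h⟩ else 0 with hxt
  have hx : ∀ a : Fin k, (x a - (if h : (a:ℕ)+1 < k then x ⟨(a:ℕ)+1, h⟩ else 0))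
      = xt a - xt ((a:ℕ)+1) := by
    intro a
    simp only [hxt, a.2, dif_pos, Fin.eta]
  have key : ∑ a : Fin k, chi i a * (xt a - xt ((a:ℕ)+1))
      = ∑ j ∈ range k, (if (i:ℕ) ≤ j then (1:ℝ) else 0) * (xt j - xt (j+1)) := by
    unfold chi
    exact Fin.sum_univ_eq_sum_range (fun j => (if (i:ℕ) ≤ j then (1:ℝ) else 0) * (xt j - xt (j+1))) k
  calc x i = xt i := by simp [hxt, i.2]
    _ = ∑ a : Fin k, chi i a * (xt a - xt ((a:ℕ)+1)) := by
        rw [key]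
        have : ∀ j ∈ range k, (if (i:ℕ) ≤ j then (1:ℝ) else 0) * (xt j - xt (j+1))
            = if (i:ℕ) ≤ j then (xt j - xt (j+1)) else 0 := by
          intro j _; split <;> simp
        rw [Finset.sum_congr rfl this, Finset.sum_ite, Finset.sum_const_zero, add_zero]
        have hfil : Finset.filter (fun j => (i:ℕ) ≤ j) (range k) = Finset.Ico (i:ℕ) k := by
          ext j; simp [Finset.mem_Ico, and_comm]
        rw [hfil, Finset.sum_Ico_eq_sum_range]
        simp only [add_assoc]
        rw [Finset.sum_range_sub' (fun t => xt ((i:ℕ)+t))]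
        have h1 : (i:ℕ) + (k - (i:ℕ)) = k := by omega
        have h2 : xt k = 0 := by simp [hxt]
        simp only [add_zero, h1, h2, sub_zero]
    _ = _ := by
        refine Finset.sum_congr rfl fun a _ => ?_
        rw [hx a]

lemma swap4 {k : ℕ} (f : Fin k → Fin k → Fin k → Fin k → ℝ) :
    ∑ i : Fin k, ∑ j, ∑ a, ∑ b, f i j a b = ∑ a : Fin k, ∑ b, ∑ i, ∑ j, f i j a b := by
  calc ∑ i : Fin k, ∑ j, ∑ a, ∑ b, f i j a b
      = ∑ i : Fin k, ∑ a, ∑ j, ∑ b, f i j a b :=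
        Finset.sum_congr rfl fun i _ => Finset.sum_comm
    _ = ∑ i : Fin k, ∑ a, ∑ b, ∑ j, f i j a b :=
        Finset.sum_congr rfl fun i _ => Finset.sum_congr rfl fun a _ => Finset.sum_comm
    _ = ∑ a : Fin k, ∑ i, ∑ b, ∑ j, f i j a b := Finset.sum_comm
    _ = _ := Finset.sum_congr rfl fun a _ => Finset.sum_comm

lemma inner_bound {k : ℕ} (a b : Fin k) (c : Fin k → Fin k → ℝ)
    (hrow : ∀ i, ∑ j, |c i j| ≤ 1) (hcol : ∀ j, ∑ i, |c i j| ≤ 1) :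
    ∑ i, ∑ j, chi i a * chi j b * c i j ≤ ∑ i, chi i a * chi i b := by
  have habs : ∑ i, ∑ j, chi i a * chi j b * c i j
      ≤ ∑ i, ∑ j, chi i a * chi j b * |c i j| := by
    refine Finset.sum_le_sum fun i _ => Finset.sum_le_sum fun j _ => ?_
    exact mul_le_mul_of_nonneg_left (le_abs_self _)
      (mul_nonneg (chi_nonneg _ _) (chi_nonneg _ _))
  refine le_trans habs ?_
  rcases le_or_gt (a:ℕ) (b:ℕ) with hab | hab
  · have hdiag : ∀ i : Fin k, chi i a * chi i b = chi i a := by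
      intro i; unfold chi
      by_cases h : (i:ℕ) ≤ (a:ℕ)
      · simp [h, le_trans h hab]
      · simp [h]
    calc ∑ i, ∑ j, chi i a * chi j b * |c i j|
        = ∑ i, chi i a * ∑ j, chi j b * |c i j| := by
          refine Finset.sum_congr rfl fun i _ => ?_
          rw [Finset.mul_sum]
          exact Finset.sum_congr rfl fun j _ => by ring
      _ ≤ ∑ i, chi i a * 1 := by
          refine Finset.sum_le_sum fun i _ => ?_
          refine mul_le_mul_of_nonneg_left ?_ (chi_nonneg _ _)
          refine le_trans (Finset.sum_le_sum fun j _ => ?_) (hrow i)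
          exact mul_le_of_le_one_left (abs_nonneg _) (chi_le_one _ _)
      _ = ∑ i, chi i a * chi i b := by
          refine Finset.sum_congr rfl fun i _ => ?_
          rw [hdiag i, mul_one]
  · have hdiag : ∀ i : Fin k, chi i a * chi i b = chi i b := by
      intro i; unfold chi
      by_cases h : (i:ℕ) ≤ (b:ℕ)
      · simp [h, le_trans h hab.le]
      · simp [h]
    calc ∑ i, ∑ j, chi i a * chi j b * |c i j|
        = ∑ j, ∑ i, chi i a * chi j b * |c i j| := Finset.sum_comm
      _ = ∑ j, chi j b * ∑ i, chi i a * |c i j| := by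
          refine Finset.sum_congr rfl fun j _ => ?_
          rw [Finset.mul_sum]
          exact Finset.sum_congr rfl fun i _ => by ring
      _ ≤ ∑ j, chi j b * 1 := by
          refine Finset.sum_le_sum fun j _ => ?_
          refine mul_le_mul_of_nonneg_left ?_ (chi_nonneg _ _)
          refine le_trans (Finset.sum_le_sum fun i _ => ?_) (hcol j)
          exact mul_le_of_le_one_left (abs_nonneg _) (chi_le_one _ _)
      _ = ∑ i, chi i a * chi i b := by
          refine Finset.sum_congr rfl fun i _ => ?_
          rw [hdiag i, mul_one]

/-- Key combinatorial inequality: doubly substochastic rearrangement bound. -/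
lemma key_comb {k : ℕ} (x y : Fin k → ℝ) (hx : Antitone x) (hy : Antitone y)
    (hx0 : ∀ i, 0 ≤ x i) (hy0 : ∀ i, 0 ≤ y i) (c : Fin k → Fin k → ℝ)
    (hrow : ∀ i, ∑ j, |c i j| ≤ 1) (hcol : ∀ j, ∑ i, |c i j| ≤ 1) :
    ∑ i, ∑ j, x i * y j * c i j ≤ ∑ i, x i * y i := by
  set d : Fin k → ℝ := fun a => x a - (if h : (a:ℕ)+1 < k then x ⟨(a:ℕ)+1, h⟩ else 0) with hd
  set e : Fin k → ℝ := fun b => y b - (if h : (b:ℕ)+1 < k then y ⟨(b:ℕ)+1, h⟩ else 0) with he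
  have hd0 : ∀ a, 0 ≤ d a := by
    intro a; simp only [hd]
    split
    · rename_i h
      have : x ⟨(a:ℕ)+1, h⟩ ≤ x a := hx (by simp [Fin.le_def])
      linarith
    · have := hx0 a; linarith
  have he0 : ∀ b, 0 ≤ e b := by
    intro b; simp only [he]
    split
    · rename_i h
      have : y ⟨(b:ℕ)+1, h⟩ ≤ y b := hy (by simp [Fin.le_def])
      linarith
    · have := hy0 b; linarith
  have hxe : ∀ i, x i = ∑ a, chi i a * d a := fun i => telescope x i
  have hye : ∀ j, y j = ∑ b, chi j b * e b := fun j => telescope y j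
  have expand : ∀ (cc : Fin k → Fin k → ℝ),
      ∑ i, ∑ j, x i * y j * cc i j
        = ∑ a, ∑ b, d a * e b * (∑ i, ∑ j, chi i a * chi j b * cc i j) := by
    intro cc
    have step : ∀ i j, x i * y j * cc i j
        = ∑ a, ∑ b, chi i a * chi j b * cc i j * (d a * e b) := by
      intro i j
      rw [hxe i, hye j, Finset.sum_mul_sum]
      rw [Finset.sum_mul]
      refine Finset.sum_congr rfl fun a _ => ?_
      rw [Finset.sum_mul]
      refine Finset.sum_congr rfl fun b _ => ?_
      ring
    calc ∑ i, ∑ j, x i * y j * cc i j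
        = ∑ i, ∑ j, ∑ a, ∑ b, chi i a * chi j b * cc i j * (d a * e b) :=
          Finset.sum_congr rfl fun i _ => Finset.sum_congr rfl fun j _ => step i j
      _ = ∑ a, ∑ b, ∑ i, ∑ j, chi i a * chi j b * cc i j * (d a * e b) := swap4 _
      _ = _ := by
          refine Finset.sum_congr rfl fun a _ => Finset.sum_congr rfl fun b _ => ?_
          rw [Finset.mul_sum]
          refine Finset.sum_congr rfl fun i _ => ?_
          rw [Finset.mul_sum]
          refine Finset.sum_congr rfl fun j _ => ?_
          ring
  have diag : ∑ i, x i * y i = ∑ i, ∑ j, x i * y j * (if i = j then (1:ℝ) else 0) := by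
    refine Finset.sum_congr rfl fun i _ => ?_
    rw [Finset.sum_eq_single i]
    · simp
    · intro j _ hj; simp [Ne.symm hj]
    · simp
  have ddiag : ∀ (a b : Fin k), ∑ i, ∑ j, chi i a * chi j b * (if i = j then (1:ℝ) else 0)
      = ∑ i, chi i a * chi i b := by
    intro a b
    refine Finset.sum_congr rfl fun i _ => ?_
    rw [Finset.sum_eq_single i]
    · simp
    · intro j _ hj; simp [Ne.symm hj]
    · simp
  rw [expand c, diag, expand (fun i j => if i = j then (1:ℝ) else 0)]
  refine Finset.sum_le_sum fun a _ => Finset.sum_le_sum fun b _ => ?_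
  rw [ddiag a b]
  exact mul_le_mul_of_nonneg_left (inner_bound a b c hrow hcol)
    (mul_nonneg (hd0 a) (he0 b))




/-- The multiset of values of a tuple. -/
def mfn {k : ℕ} (f : Fin k → ℝ) : Multiset ℝ := Multiset.map f Finset.univ.val

lemma mfn_eq_coe_ofFn {k : ℕ} (f : Fin k → ℝ) : mfn f = ↑(List.ofFn f) := by
  rw [List.ofFn_eq_map]
  unfold mfn
  rw [Fin.univ_def]
  rfl

lemma mfn_card {k : ℕ} (f : Fin k → ℝ) : Multiset.card (mfn f) = k := by
  simp [mfn]

lemma mfn_comp_perm {k : ℕ} (f : Fin k → ℝ) (π : Equiv.Perm (Fin k)) :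
    mfn (fun i => f (π i)) = mfn f := by
  unfold mfn
  have h1 : Multiset.map (fun i => f (π i)) Finset.univ.val
      = Multiset.map f (Multiset.map π Finset.univ.val) := by
    rw [Multiset.map_map]; rfl
  rw [h1, Multiset.map_univ_val_equiv]

lemma monotone_unique {k : ℕ} {f g : Fin k → ℝ} (hf : Monotone f) (hg : Monotone g)
    (h : mfn f = mfn g) : f = g := by
  rw [mfn_eq_coe_ofFn, mfn_eq_coe_ofFn, Multiset.coe_eq_coe] at h
  exact List.ofFn_injective (List.Perm.eq_of_sortedLE hf.sortedLE_ofFn hg.sortedLE_ofFn h)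

lemma exists_perm_of_mfn_eq {k : ℕ} {f g : Fin k → ℝ} (h : mfn f = mfn g) :
    ∃ π : Equiv.Perm (Fin k), ∀ i, f i = g (π i) := by
  set σ := Tuple.sort f
  set τ := Tuple.sort g
  have h1 : mfn (f ∘ σ) = mfn (g ∘ τ) := by
    rw [show (f ∘ σ) = fun i => f (σ i) from rfl, mfn_comp_perm,
      show (g ∘ τ) = fun i => g (τ i) from rfl, mfn_comp_perm, h]
  have h2 : f ∘ σ = g ∘ τ :=
    monotone_unique (Tuple.monotone_sort f) (Tuple.monotone_sort g) h1
  refine ⟨σ.symm.trans τ, fun i => ?_⟩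
  have := congrFun h2 (σ.symm i)
  simpa using this

/-- Sorted (descending) tuple of a multiset of reals with card `k`. -/
def sortedDesc {k : ℕ} (s : Multiset ℝ) (h : Multiset.card s = k) : Fin k → ℝ :=
  fun i => (Multiset.sort s (· ≥ ·)).get (Fin.cast (by rw [Multiset.length_sort, h]) i)

lemma ofFn_sortedDesc {k : ℕ} (s : Multiset ℝ) (h : Multiset.card s = k) :
    List.ofFn (sortedDesc s h) = Multiset.sort s (· ≥ ·) := by
  apply List.ext_getElem
  · simp [h]
  · intro i h1 h2
    simp [sortedDesc]

lemma mfn_sortedDesc {k : ℕ} (s : Multiset ℝ) (h : Multiset.card s = k) :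
    mfn (sortedDesc s h) = s := by
  rw [mfn_eq_coe_ofFn, ofFn_sortedDesc, Multiset.sort_eq]

lemma antitone_sortedDesc {k : ℕ} (s : Multiset ℝ) (h : Multiset.card s = k) :
    Antitone (sortedDesc s h) := by
  have hs : (Multiset.sort s (· ≥ ·)).Pairwise (· ≥ ·) := Multiset.pairwise_sort s _
  intro i j hij
  rcases eq_or_lt_of_le hij with rfl | hlt
  · exact le_rfl
  · refine hs.rel_get_of_lt (Fin.lt_def.mpr ?_)
    simpa [Fin.coe_cast] using Fin.lt_def.mp hlt

lemma mem_sortedDesc {k : ℕ} (s : Multiset ℝ) (h : Multiset.card s = k) (i : Fin k) :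
    sortedDesc s h i ∈ s := by
  rw [← Multiset.mem_sort (r := (· ≥ ·))]
  apply List.get_mem

lemma antitone_unique {k : ℕ} {f g : Fin k → ℝ} (hf : Antitone f) (hg : Antitone g)
    (h : mfn f = mfn g) : f = g := by
  rw [mfn_eq_coe_ofFn, mfn_eq_coe_ofFn, Multiset.coe_eq_coe] at h
  have hsf : (List.ofFn f).Pairwise (· ≥ ·) :=
    List.pairwise_ofFn.mpr fun i j hij => hf hij.le
  have hsg : (List.ofFn g).Pairwise (· ≥ ·) :=
    List.pairwise_ofFn.mpr fun i j hij => hg hij.le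
  exact List.ofFn_injective (List.Perm.eq_of_pairwise' hsf hsg h)

lemma sortedDesc_unique {k : ℕ} {f : Fin k → ℝ} (hf : Antitone f) {s : Multiset ℝ}
    (hs : mfn f = s) (h : Multiset.card s = k) : f = sortedDesc s h :=
  antitone_unique hf (antitone_sortedDesc s h) (by rw [hs, mfn_sortedDesc])

/-! ### eigenvalue multisets via charpoly -/

/-- The multiset of roots of the characteristic polynomial. -/
def specM {k : ℕ} (P : Matrix (Fin k) (Fin k) ℝ) : Multiset ℝ := P.charpoly.roots

lemma charmatrix_diagonal {k : ℕ} (d : Fin k → ℝ) :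
    charmatrix (diagonal d) = diagonal (fun i => (X : ℝ[X]) - C (d i)) := by
  ext i j
  by_cases h : i = j
  · subst h; simp [charmatrix_apply, diagonal_apply_eq]
  · simp [charmatrix_apply, diagonal_apply_ne _ h, h]

lemma charpoly_diagonal {k : ℕ} (d : Fin k → ℝ) :
    (diagonal d).charpoly = ∏ i, ((X : ℝ[X]) - C (d i)) := by
  unfold Matrix.charpoly
  rw [charmatrix_diagonal, det_diagonal]

lemma specM_diagonal {k : ℕ} (d : Fin k → ℝ) : specM (diagonal d) = mfn d := by
  unfold specM
  rw [charpoly_diagonal]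
  have h : ∏ i, ((X : ℝ[X]) - C (d i)) = ((mfn d).map fun a => X - C a).prod := by
    unfold mfn
    rw [Multiset.map_map]
    rfl
  rw [h, Polynomial.roots_multiset_prod_X_sub_C]

lemma specM_conj {k : ℕ} {A : Matrix (Fin k) (Fin k) ℝ} (P : Matrix (Fin k) (Fin k) ℝ)
    (hA : A * Aᵀ = 1) : specM (A * P * Aᵀ) = specM P := by
  have hA' : Aᵀ * A = 1 := mul_eq_one_comm.mp hA
  suffices h : (A * P * Aᵀ).charpoly = P.charpoly by unfold specM; rw [h]
  unfold Matrix.charpoly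
  set Am : Matrix (Fin k) (Fin k) ℝ[X] := A.map C with hAm
  have hmap : ∀ (M N : Matrix (Fin k) (Fin k) ℝ), (M * N).map (C : ℝ → ℝ[X])
      = M.map C * N.map C := fun M N => Matrix.map_mul
  have hAmT : (Aᵀ).map (C : ℝ → ℝ[X]) = Amᵀ := by
    ext i j; simp [hAm]
  have hAorth : Am * Amᵀ = 1 := by
    rw [← hAmT, ← hmap, hA]
    ext i j
    by_cases h : i = j <;> simp [Matrix.one_apply, h]
  have hAorth' : Amᵀ * Am = 1 := mul_eq_one_comm.mp hAorth
  have hcm : charmatrix (A * P * Aᵀ) = Am * charmatrix P * Amᵀ := by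
    show Matrix.scalar (Fin k) (X : ℝ[X]) - (C : ℝ →+* ℝ[X]).mapMatrix (A * P * Aᵀ)
      = Am * (Matrix.scalar (Fin k) (X : ℝ[X]) - (C : ℝ →+* ℝ[X]).mapMatrix P) * Amᵀ
    have h1 : (C : ℝ →+* ℝ[X]).mapMatrix (A * P * Aᵀ) = Am * (C : ℝ →+* ℝ[X]).mapMatrix P * Amᵀ := by
      show (A * P * Aᵀ).map (C : ℝ → ℝ[X]) = _
      rw [hmap, hmap, hAmT]
      rfl
    have h2 : Am * Matrix.scalar (Fin k) (X : ℝ[X]) * Amᵀ = Matrix.scalar (Fin k) (X : ℝ[X]) := by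
      rw [(Matrix.scalar_commute (X : ℝ[X]) (fun r => mul_comm _ _) Am).symm.eq]
      rw [mul_assoc, hAorth, mul_one]
    rw [mul_sub, sub_mul, h2, h1]
  rw [hcm, det_mul, det_mul]
  have : Am.det * (charmatrix P).det * Amᵀ.det
      = (charmatrix P).det * (Am.det * Amᵀ.det) := by ring
  rw [this, ← det_mul, hAorth, det_one, mul_one]

/-- Spectral theorem, packaged for real symmetric matrices. -/
lemma exists_orth_diag {k : ℕ} {P : Matrix (Fin k) (Fin k) ℝ} (hP : P.IsHermitian) :
    ∃ A : Matrix (Fin k) (Fin k) ℝ, A * Aᵀ = 1 ∧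
      P = A * diagonal hP.eigenvalues * Aᵀ := by
  have hst := hP.spectral_theorem
  set A : Matrix (Fin k) (Fin k) ℝ := (hP.eigenvectorUnitary : Matrix (Fin k) (Fin k) ℝ) with hA
  have hstar : star A = Aᵀ := by
    rw [Matrix.star_eq_conjTranspose, conjTranspose_eq_transpose_of_trivial]
  have hmem := hP.eigenvectorUnitary.2
  rw [Matrix.mem_unitaryGroup_iff] at hmem
  refine ⟨A, by rw [← hstar]; exact hmem, ?_⟩
  rw [Unitary.conjStarAlgAut_apply, ← hA, hstar] at hst
  simpa [RCLike.ofReal_real_eq_id] using hst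


end SpecLift

namespace SpecLift
open Finset Polynomial
open Finset Polynomial

/-! ### Frobenius inner product -/

def finner {n m : ℕ} (X Y : Matrix (Fin n) (Fin m) ℝ) : ℝ := ∑ i, ∑ j, X i j * Y i j

lemma finner_eq_trace {n m : ℕ} (X Y : Matrix (Fin n) (Fin m) ℝ) :
    finner X Y = Matrix.trace (X * Yᵀ) := by
  unfold finner
  simp [Matrix.trace, Matrix.diag, Matrix.mul_apply, Matrix.transpose_apply]

lemma finner_self_nonneg {n m : ℕ} (X : Matrix (Fin n) (Fin m) ℝ) : 0 ≤ finner X X :=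
  Finset.sum_nonneg fun i _ => Finset.sum_nonneg fun j _ => mul_self_nonneg _

lemma frobNorm_eq_sqrt_finner {n m : ℕ} (X : Matrix (Fin n) (Fin m) ℝ) :
    frobNorm X = Real.sqrt (finner X X) := by
  unfold frobNorm finner
  congr 1
  exact Finset.sum_congr rfl fun i _ => Finset.sum_congr rfl fun j _ => by ring

lemma vnorm_eq_sqrt {n : ℕ} (x : Fin n → ℝ) :
    vnorm x = Real.sqrt (∑ i, x i * x i) := by
  unfold vnorm
  congr 1
  exact Finset.sum_congr rfl fun i _ => by ring

lemma finner_expand {n m : ℕ} (X Y : Matrix (Fin n) (Fin m) ℝ) :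
    finner (X - Y) (X - Y) = finner X X + finner Y Y - 2 * finner X Y := by
  unfold finner
  rw [← Finset.sum_add_distrib, Finset.mul_sum, ← Finset.sum_sub_distrib]
  refine Finset.sum_congr rfl fun i _ => ?_
  rw [← Finset.sum_add_distrib, Finset.mul_sum, ← Finset.sum_sub_distrib]
  refine Finset.sum_congr rfl fun j _ => ?_
  simp only [Matrix.sub_apply]
  ring

lemma finner_conj {n m : ℕ} {A : Matrix (Fin n) (Fin n) ℝ} {B : Matrix (Fin m) (Fin m) ℝ}
    (hA : A * Aᵀ = 1) (hB : B * Bᵀ = 1) (M N : Matrix (Fin n) (Fin m) ℝ) :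
    finner (A * M * Bᵀ) (A * N * Bᵀ) = finner M N := by
  have hAt : Aᵀ * A = 1 := mul_eq_one_comm.mp hA
  have hBt : Bᵀ * B = 1 := mul_eq_one_comm.mp hB
  rw [finner_eq_trace, finner_eq_trace]
  have h1 : (A * N * Bᵀ)ᵀ = B * (Nᵀ * Aᵀ) := by
    rw [Matrix.transpose_mul, Matrix.transpose_mul, Matrix.transpose_transpose]
  rw [h1]
  have e1 : A * M * Bᵀ * B = A * M := by
    rw [Matrix.mul_assoc (A * M) Bᵀ B, hBt, Matrix.mul_one]
  have h2 : A * M * Bᵀ * (B * (Nᵀ * Aᵀ)) = A * M * Nᵀ * Aᵀ := by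
    rw [← Matrix.mul_assoc (A * M * Bᵀ) B (Nᵀ * Aᵀ), e1, ← Matrix.mul_assoc]
  rw [h2, Matrix.trace_mul_comm (A * M * Nᵀ) Aᵀ]
  have h3 : Aᵀ * (A * M * Nᵀ) = (Aᵀ * A) * (M * Nᵀ) := by
    rw [Matrix.mul_assoc A M Nᵀ, ← Matrix.mul_assoc Aᵀ A (M * Nᵀ)]
  rw [h3, hAt, Matrix.one_mul]

/-! ### rdiag algebra -/

lemma rdiag_sub {n m : ℕ} (s t : Fin n → ℝ) :
    rdiag n m s - rdiag n m t = rdiag n m (s - t) := by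
  ext i j
  unfold rdiag
  by_cases h : (j : ℕ) = (i : ℕ) <;> simp [h]

lemma finner_rdiag {n m : ℕ} (hnm : n ≤ m) (s t : Fin n → ℝ) :
    finner (rdiag n m s) (rdiag n m t) = ∑ i, s i * t i := by
  unfold finner rdiag
  refine Finset.sum_congr rfl fun i _ => ?_
  rw [Finset.sum_eq_single (⟨(i : ℕ), lt_of_lt_of_le i.2 hnm⟩ : Fin m)]
  · simp
  · intro j _ hj
    have : (j : ℕ) ≠ (i : ℕ) := by
      intro hc
      exact hj (Fin.ext (by simpa using hc))
    simp [this]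
  · simp

lemma frobNorm_conj_rdiag_sub {n m : ℕ} (hnm : n ≤ m)
    {A : Matrix (Fin n) (Fin n) ℝ} {B : Matrix (Fin m) (Fin m) ℝ}
    (hA : A * Aᵀ = 1) (hB : B * Bᵀ = 1) (u s : Fin n → ℝ) :
    frobNorm (A * rdiag n m u * Bᵀ - A * rdiag n m s * Bᵀ) = vnorm (u - s) := by
  have h1 : A * rdiag n m u * Bᵀ - A * rdiag n m s * Bᵀ = A * rdiag n m (u - s) * Bᵀ := by
    rw [← rdiag_sub]
    rw [Matrix.mul_sub, Matrix.sub_mul]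
  rw [h1, frobNorm_eq_sqrt_finner, finner_conj hA hB, finner_rdiag hnm, vnorm_eq_sqrt]

lemma transpose_eq_conjTranspose {k l : ℕ} (X : Matrix (Fin k) (Fin l) ℝ) : Xᴴ = Xᵀ := by
  ext i j; simp [Matrix.conjTranspose_apply]

lemma isHermitian_XXT {k l : ℕ} (X : Matrix (Fin k) (Fin l) ℝ) :
    (X * Xᵀ).IsHermitian := by
  rw [← transpose_eq_conjTranspose]
  exact Matrix.isHermitian_mul_conjTranspose_self X

lemma posSemidef_XXT {k l : ℕ} (X : Matrix (Fin k) (Fin l) ℝ) :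
    (X * Xᵀ).PosSemidef := by
  rw [← transpose_eq_conjTranspose]
  exact Matrix.posSemidef_self_mul_conjTranspose X

/-- Spectral theorem with eigenvalues sorted in descending order. -/
lemma exists_orth_diag_sorted {k : ℕ} {P : Matrix (Fin k) (Fin k) ℝ} (hP : P.IsHermitian) :
    ∃ (A : Matrix (Fin k) (Fin k) ℝ) (μ : Fin k → ℝ), A * Aᵀ = 1 ∧ Antitone μ ∧
      mfn μ = mfn hP.eigenvalues ∧ P = A * Matrix.diagonal μ * Aᵀ := by
  obtain ⟨A0, hA0, hPd⟩ := exists_orth_diag hP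
  set lam := hP.eigenvalues with hlam
  set π : Equiv.Perm (Fin k) := Tuple.sort (fun i => - lam i) with hπ
  have hmono : Monotone ((fun i => - lam i) ∘ π) := Tuple.monotone_sort _
  set μ : Fin k → ℝ := fun i => lam (π i) with hμ
  have hanti : Antitone μ := by
    intro i j hij
    have := hmono hij
    simp only [Function.comp_apply, neg_le_neg_iff] at this
    exact this
  set Pm : Matrix (Fin k) (Fin k) ℝ := Matrix.of fun i j => if π j = i then 1 else 0 with hPmdef
  have hPmT : ∀ i j, Pmᵀ i j = if π i = j then 1 else 0 := by
    intro i j; rfl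
  have hPm : Pm * Pmᵀ = 1 := by
    ext i r
    rw [Matrix.mul_apply]
    rw [Finset.sum_eq_single (π.symm i)]
    · simp only [hPmdef, Matrix.of_apply, hPmT, Equiv.apply_symm_apply, if_pos rfl, one_mul]
      by_cases h : i = r <;> simp [h, Matrix.one_apply]
    · intro j _ hj
      have : π j ≠ i := fun hc => hj (by rw [← hc]; simp)
      simp [hPmdef, this]
    · simp
  have hdiagPm : Pm * Matrix.diagonal μ * Pmᵀ = Matrix.diagonal lam := by
    have hinner : ∀ i l, (Pm * Matrix.diagonal μ) i l = (if π l = i then 1 else 0) * μ l := by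
      intro i l
      rw [Matrix.mul_apply]
      rw [Finset.sum_eq_single l]
      · simp [hPmdef, Matrix.diagonal_apply_eq]
      · intro j _ hj; simp [Matrix.diagonal_apply_ne _ hj]
      · simp
    ext i r
    rw [Matrix.mul_apply]
    rw [Finset.sum_eq_single (π.symm i)]
    · rw [hinner, hPmT]
      simp only [Equiv.apply_symm_apply, if_pos rfl, one_mul]
      by_cases h : i = r
      · subst h
        simp [hμ, Matrix.diagonal_apply_eq]
      · rw [Matrix.diagonal_apply_ne _ h]
        simp [h]
    · intro j _ hj
      rw [hinner]
      have : π j ≠ i := fun hc => hj (by rw [← hc]; simp)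
      simp [this]
    · simp
  have hA : (A0 * Pm) * (A0 * Pm)ᵀ = 1 := by
    rw [Matrix.transpose_mul]
    calc A0 * Pm * (Pmᵀ * A0ᵀ) = A0 * (Pm * Pmᵀ) * A0ᵀ := by
          simp only [Matrix.mul_assoc]
      _ = 1 := by rw [hPm, Matrix.mul_one, hA0]
  refine ⟨A0 * Pm, μ, hA, hanti, mfn_comp_perm lam π, ?_⟩
  rw [Matrix.transpose_mul]
  calc P = A0 * Matrix.diagonal lam * A0ᵀ := hPd
    _ = A0 * (Pm * Matrix.diagonal μ * Pmᵀ) * A0ᵀ := by rw [hdiagPm]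
    _ = A0 * Pm * Matrix.diagonal μ * (Pmᵀ * A0ᵀ) := by
        simp only [Matrix.mul_assoc]

lemma specM_herm {k : ℕ} {P : Matrix (Fin k) (Fin k) ℝ} (hP : P.IsHermitian) :
    specM P = mfn hP.eigenvalues := by
  obtain ⟨A, hA, hPd⟩ := exists_orth_diag hP
  conv_lhs => rw [hPd]
  rw [specM_conj _ hA, specM_diagonal]

lemma card_sqrt_specM {n m : ℕ} (X : Matrix (Fin n) (Fin m) ℝ) :
    Multiset.card ((specM (X * Xᵀ)).map Real.sqrt) = n := by
  rw [Multiset.card_map, specM_herm (isHermitian_XXT X), mfn_card]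

/-- The (descending) singular values of a rectangular matrix. -/
def sigma {n m : ℕ} (X : Matrix (Fin n) (Fin m) ℝ) : Fin n → ℝ :=
  sortedDesc ((specM (X * Xᵀ)).map Real.sqrt) (card_sqrt_specM X)

lemma sigma_antitone {n m : ℕ} (X : Matrix (Fin n) (Fin m) ℝ) : Antitone (sigma X) :=
  antitone_sortedDesc _ _

lemma sigma_nonneg {n m : ℕ} (X : Matrix (Fin n) (Fin m) ℝ) (i : Fin n) : 0 ≤ sigma X i := by
  have h := mem_sortedDesc ((specM (X * Xᵀ)).map Real.sqrt) (card_sqrt_specM X) i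
  obtain ⟨a, _, ha⟩ := Multiset.mem_map.mp h
  rw [show sigma X i = sortedDesc _ (card_sqrt_specM X) i from rfl, ← ha]
  exact Real.sqrt_nonneg a

lemma sortedDesc_congr {k : ℕ} {s t : Multiset ℝ} (h : s = t) (hs : Multiset.card s = k)
    (ht : Multiset.card t = k) : sortedDesc s hs = sortedDesc t ht := by
  subst h; rfl

lemma rdiag_mul_rdiag_transpose {n m : ℕ} (hnm : n ≤ m) (s t : Fin n → ℝ) :
    rdiag n m s * (rdiag n m t)ᵀ = Matrix.diagonal (fun i => s i * t i) := by
  ext i j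
  rw [Matrix.mul_apply]
  by_cases h : i = j
  · subst h
    rw [Finset.sum_eq_single (⟨(i : ℕ), lt_of_lt_of_le i.2 hnm⟩ : Fin m)]
    · simp [rdiag]
    · intro k _ hk
      have : (k : ℕ) ≠ (i : ℕ) := fun hc => hk (Fin.ext (by simpa using hc))
      simp [rdiag, this]
    · simp
  · rw [Matrix.diagonal_apply_ne _ h]
    apply Finset.sum_eq_zero
    intro k _
    by_cases h1 : (k : ℕ) = (i : ℕ)
    · have h2 : (k : ℕ) ≠ (j : ℕ) := by
        intro hc
        exact h (Fin.ext (by rw [← h1, hc]))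
      simp [rdiag, h2]
    · simp [rdiag, h1]

lemma XXT_of_svd {n m : ℕ} (hnm : n ≤ m) {A : Matrix (Fin n) (Fin n) ℝ}
    {B : Matrix (Fin m) (Fin m) ℝ} (hB : B * Bᵀ = 1) (s : Fin n → ℝ) :
    (A * rdiag n m s * Bᵀ) * (A * rdiag n m s * Bᵀ)ᵀ
      = A * Matrix.diagonal (fun i => s i * s i) * Aᵀ := by
  have hBt : Bᵀ * B = 1 := mul_eq_one_comm.mp hB
  have h1 : (A * rdiag n m s * Bᵀ)ᵀ = B * ((rdiag n m s)ᵀ * Aᵀ) := by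
    rw [Matrix.transpose_mul, Matrix.transpose_mul, Matrix.transpose_transpose]
  rw [h1]
  have h2 : A * rdiag n m s * Bᵀ * (B * ((rdiag n m s)ᵀ * Aᵀ))
      = A * rdiag n m s * Bᵀ * B * ((rdiag n m s)ᵀ * Aᵀ) := by
    rw [Matrix.mul_assoc (A * rdiag n m s * Bᵀ) B _]
  rw [h2, Matrix.mul_assoc (A * rdiag n m s) Bᵀ B, hBt, Matrix.mul_one]
  rw [Matrix.mul_assoc A (rdiag n m s) _, ← Matrix.mul_assoc (rdiag n m s) _ Aᵀ,
    rdiag_mul_rdiag_transpose hnm, ← Matrix.mul_assoc]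

lemma sigma_of_svd {n m : ℕ} (hnm : n ≤ m) {A : Matrix (Fin n) (Fin n) ℝ}
    {B : Matrix (Fin m) (Fin m) ℝ} (hA : A * Aᵀ = 1) (hB : B * Bᵀ = 1) (s : Fin n → ℝ) :
    sigma (A * rdiag n m s * Bᵀ)
      = sortedDesc (mfn (fun i => |s i|)) (mfn_card _) := by
  apply sortedDesc_congr
  rw [XXT_of_svd hnm hB s, specM_conj _ hA, specM_diagonal]
  unfold mfn
  rw [Multiset.map_map]
  refine congrArg (fun f => Multiset.map f Finset.univ.val) ?_
  funext i
  simp [Real.sqrt_mul_self_eq_abs]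

lemma svd_exists {n m : ℕ} (hnm : n ≤ m) (X : Matrix (Fin n) (Fin m) ℝ) :
    ∃ (A : Matrix (Fin n) (Fin n) ℝ) (B : Matrix (Fin m) (Fin m) ℝ),
      A * Aᵀ = 1 ∧ B * Bᵀ = 1 ∧ X = A * rdiag n m (sigma X) * Bᵀ := by
  have hGh : (X * Xᵀ).IsHermitian := isHermitian_XXT X
  obtain ⟨A, μ, hA, hμanti, hμmfn, hGd⟩ := exists_orth_diag_sorted hGh
  have hAt : Aᵀ * A = 1 := mul_eq_one_comm.mp hA
  have hμ0 : ∀ i, 0 ≤ μ i := by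
    intro i
    have h1 : μ i ∈ mfn hGh.eigenvalues := by
      rw [← hμmfn]
      exact Multiset.mem_map_of_mem _ (Finset.mem_univ i)
    obtain ⟨j, _, hj⟩ := Multiset.mem_map.mp h1
    rw [← hj]
    exact (posSemidef_XXT X).eigenvalues_nonneg j
  have hsig : sigma X = fun i => Real.sqrt (μ i) := by
    have h1 : (specM (X * Xᵀ)).map Real.sqrt = mfn (fun i => Real.sqrt (μ i)) := by
      rw [specM_herm hGh, ← hμmfn]
      unfold mfn
      rw [Multiset.map_map]
      rfl
    have h2 : Antitone (fun i => Real.sqrt (μ i)) := fun i j hij =>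
      Real.sqrt_le_sqrt (hμanti hij)
    exact (sortedDesc_unique h2 h1.symm (card_sqrt_specM X)).symm
  have hσsq : ∀ i, sigma X i * sigma X i = μ i := by
    intro i
    rw [hsig]
    exact Real.mul_self_sqrt (hμ0 i)
  have hYY : (Aᵀ * X) * (Aᵀ * X)ᵀ = Matrix.diagonal μ := by
    have h1 : (Aᵀ * X)ᵀ = Xᵀ * A := by
      rw [Matrix.transpose_mul, Matrix.transpose_transpose]
    rw [h1]
    calc Aᵀ * X * (Xᵀ * A) = Aᵀ * (X * Xᵀ) * A := by simp only [Matrix.mul_assoc]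
      _ = Aᵀ * (A * Matrix.diagonal μ * Aᵀ) * A := by rw [← hGd]
      _ = (Aᵀ * A) * Matrix.diagonal μ * (Aᵀ * A) := by simp only [Matrix.mul_assoc]
      _ = Matrix.diagonal μ := by rw [hAt, Matrix.one_mul, Matrix.mul_one]
  have hrow : ∀ i j : Fin n, ∑ q, (Aᵀ * X) i q * (Aᵀ * X) j q
      = if i = j then μ i else 0 := by
    intro i j
    have h1 := congrFun (congrFun hYY i) j
    rw [Matrix.mul_apply] at h1
    simp only [Matrix.transpose_apply] at h1
    rw [h1, Matrix.diagonal_apply]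
  set v : Fin m → EuclideanSpace ℝ (Fin m) := fun p =>
    if h : (p : ℕ) < n then WithLp.toLp 2 ((sigma X ⟨(p : ℕ), h⟩)⁻¹ • (fun q => (Aᵀ * X) ⟨(p : ℕ), h⟩ q))
    else 0 with hv
  set sS : Set (Fin m) := {p | ∃ h : (p : ℕ) < n, sigma X ⟨(p : ℕ), h⟩ ≠ 0} with hsS
  have hvinner : ∀ (p p' : Fin m) (h : (p : ℕ) < n) (h' : (p' : ℕ) < n),
      (sigma X ⟨(p : ℕ), h⟩ ≠ 0) → (sigma X ⟨(p' : ℕ), h'⟩ ≠ 0) →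
      (inner ℝ (v p) (v p') : ℝ) = if p = p' then 1 else 0 := by
    intro p p' h h' hs hs'
    set i : Fin n := ⟨(p : ℕ), h⟩
    set i' : Fin n := ⟨(p' : ℕ), h'⟩
    have heq : (inner ℝ (v p) (v p') : ℝ)
        = (sigma X i)⁻¹ * (sigma X i')⁻¹ * ∑ q, (Aᵀ * X) i q * (Aᵀ * X) i' q := by
      rw [PiLp.inner_apply]
      simp only [hv, dif_pos h, dif_pos h', RCLike.inner_apply, starRingEnd_apply]
      rw [Finset.mul_sum]
      refine Finset.sum_congr rfl fun q _ => ?_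
      simp only [PiLp.toLp_apply, PiLp.smul_apply, Pi.smul_apply, smul_eq_mul, star_trivial]
      ring
    rw [heq, hrow i i']
    by_cases hpp : p = p'
    · have hii : i = i' := Fin.ext (by simp [i, i', hpp])
      rw [if_pos hii, if_pos hpp, ← hii, ← hσsq i]
      field_simp
    · have hii : i ≠ i' := fun hc => hpp (Fin.ext (by
        have := congrArg (fun t : Fin n => (t : ℕ)) hc
        simpa [i, i'] using this))
      rw [if_neg hii, if_neg hpp, mul_zero]
  have horm : Orthonormal ℝ (sS.restrict v) := by
    rw [orthonormal_iff_ite]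
    rintro ⟨p, hp⟩ ⟨p', hp'⟩
    obtain ⟨h, hs⟩ := hp
    obtain ⟨h', hs'⟩ := hp'
    change inner ℝ (v p) (v p') = _
    rw [hvinner p p' h h' hs hs']
    by_cases hpp : p = p'
    · simp [hpp]
    · rw [if_neg hpp, if_neg (fun hc => hpp (Subtype.ext_iff.mp hc))]
  obtain ⟨b, hb⟩ := horm.exists_orthonormalBasis_extension_of_card_eq
    (by simp [finrank_euclideanSpace])
  set B : Matrix (Fin m) (Fin m) ℝ := Matrix.of fun p j => b j p with hBdef
  have hBt : Bᵀ * B = 1 := by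
    ext j k
    rw [Matrix.mul_apply]
    have h1 : ∑ p, Bᵀ j p * B p k = (inner ℝ (b j) (b k) : ℝ) := by
      rw [PiLp.inner_apply]
      refine Finset.sum_congr rfl fun p _ => ?_
      simp [hBdef, RCLike.inner_apply, starRingEnd_apply, mul_comm]
    rw [h1, orthonormal_iff_ite.mp b.orthonormal j k, Matrix.one_apply]
  have hB : B * Bᵀ = 1 := mul_eq_one_comm.mp hBt
  refine ⟨A, B, hA, hB, ?_⟩
  have key : Aᵀ * X = rdiag n m (sigma X) * Bᵀ := by
    ext i q
    have hilt : (i : ℕ) < m := lt_of_lt_of_le i.2 hnm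
    have hsum : ∑ k, rdiag n m (sigma X) i k * Bᵀ k q
        = sigma X i * b (⟨(i : ℕ), hilt⟩ : Fin m) q := by
      rw [Finset.sum_eq_single (⟨(i : ℕ), hilt⟩ : Fin m)]
      · simp [rdiag, hBdef]
      · intro k _ hk
        have : (k : ℕ) ≠ (i : ℕ) := fun hc => hk (Fin.ext (by simpa using hc))
        simp [rdiag, this]
      · simp
    have hiq : (rdiag n m (sigma X) * Bᵀ) i q = sigma X i * b (⟨(i : ℕ), hilt⟩ : Fin m) q := by
      rw [Matrix.mul_apply]
      exact hsum
    rw [hiq]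
    by_cases hσi : sigma X i = 0
    · have h2 : ∑ q', (Aᵀ * X) i q' * (Aᵀ * X) i q' = 0 := by
        rw [hrow i i, if_pos rfl, ← hσsq i, hσi, mul_zero]
      have hzero : (Aᵀ * X) i q = 0 := by
        have h3 := (Finset.sum_eq_zero_iff_of_nonneg
          (fun q' _ => mul_self_nonneg ((Aᵀ * X) i q'))).mp h2 q (Finset.mem_univ q)
        exact mul_self_eq_zero.mp h3
      rw [hzero, hσi, zero_mul]
    · have hib : ((⟨(i : ℕ), hilt⟩ : Fin m) : ℕ) < n := by simpa using i.2
      have hieta : (⟨((⟨(i : ℕ), hilt⟩ : Fin m) : ℕ), hib⟩ : Fin n) = i := Fin.ext (by simp)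
      have hmem : (⟨(i : ℕ), hilt⟩ : Fin m) ∈ sS := by
        refine ⟨hib, ?_⟩
        rw [hieta]
        exact hσi
      rw [hb _ hmem]
      simp only [hv, dif_pos hib, hieta, PiLp.toLp_apply, PiLp.smul_apply, Pi.smul_apply, smul_eq_mul]
      field_simp
  calc X = A * (Aᵀ * X) := by rw [← Matrix.mul_assoc, hA, Matrix.one_mul]
    _ = A * (rdiag n m (sigma X) * Bᵀ) := by rw [key]
    _ = A * rdiag n m (sigma X) * Bᵀ := by rw [Matrix.mul_assoc]

lemma orth_transpose {k : ℕ} {P : Matrix (Fin k) (Fin k) ℝ} (hP : P * Pᵀ = 1) :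
    Pᵀ * Pᵀᵀ = 1 := by
  rw [Matrix.transpose_transpose]
  exact mul_eq_one_comm.mp hP

lemma orth_mul {k : ℕ} {P Q : Matrix (Fin k) (Fin k) ℝ} (hP : P * Pᵀ = 1) (hQ : Q * Qᵀ = 1) :
    (P * Q) * (P * Q)ᵀ = 1 := by
  rw [Matrix.transpose_mul]
  calc P * Q * (Qᵀ * Pᵀ) = P * (Q * Qᵀ) * Pᵀ := by simp only [Matrix.mul_assoc]
    _ = 1 := by rw [hQ, Matrix.mul_one, hP]

lemma sq_row_sum {k : ℕ} {P : Matrix (Fin k) (Fin k) ℝ} (hP : P * Pᵀ = 1) (i : Fin k) :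
    ∑ j, P i j * P i j = 1 := by
  have h1 := congrFun (congrFun hP i) i
  rw [Matrix.mul_apply] at h1
  simp only [Matrix.transpose_apply] at h1
  rw [h1, Matrix.one_apply_eq]

lemma sq_col_sum {k : ℕ} {P : Matrix (Fin k) (Fin k) ℝ} (hP : P * Pᵀ = 1) (j : Fin k) :
    ∑ i, P i j * P i j = 1 := by
  have hPt : Pᵀ * Pᵀᵀ = 1 := orth_transpose hP
  simpa using sq_row_sum hPt j

lemma sum_castLE_le {n m : ℕ} (hnm : n ≤ m) (f : Fin m → ℝ) (hf : ∀ l, 0 ≤ f l) :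
    ∑ p : Fin n, f (Fin.castLE hnm p) ≤ ∑ l, f l := by
  calc ∑ p : Fin n, f (Fin.castLE hnm p)
      = ∑ l ∈ Finset.univ.image (Fin.castLE hnm), f l :=
        (Finset.sum_image (fun a _ b _ h => Fin.castLE_injective hnm h)).symm
    _ ≤ ∑ l, f l :=
        Finset.sum_le_sum_of_subset_of_nonneg (Finset.subset_univ _) (fun l _ _ => hf l)

lemma trace_rdiag_mid {n m : ℕ} (hnm : n ≤ m) (x y : Fin n → ℝ)
    (V : Matrix (Fin m) (Fin m) ℝ) (Uu : Matrix (Fin n) (Fin n) ℝ) :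
    Matrix.trace (rdiag n m x * V * (rdiag n m y)ᵀ * Uu)
      = ∑ i, ∑ p, x i * y p *
          (V (Fin.castLE hnm i) (Fin.castLE hnm p) * Uu p i) := by
  have h1 : ∀ (i : Fin n) (l : Fin m), (rdiag n m x * V) i l = x i * V (Fin.castLE hnm i) l := by
    intro i l
    rw [Matrix.mul_apply]
    rw [Finset.sum_eq_single (Fin.castLE hnm i)]
    · simp [rdiag, Fin.castLE]
    · intro k _ hk
      have : (k : ℕ) ≠ (i : ℕ) := fun hc => hk (Fin.ext (by simpa [Fin.castLE] using hc))
      simp [rdiag, this]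
    · simp
  have h2 : ∀ (i : Fin n) (p : Fin n), (rdiag n m x * V * (rdiag n m y)ᵀ) i p
      = x i * V (Fin.castLE hnm i) (Fin.castLE hnm p) * y p := by
    intro i p
    rw [Matrix.mul_apply]
    rw [Finset.sum_eq_single (Fin.castLE hnm p)]
    · rw [h1]
      simp [rdiag, Fin.castLE]
    · intro l _ hl
      have : (l : ℕ) ≠ (p : ℕ) := fun hc => hl (Fin.ext (by simpa [Fin.castLE] using hc))
      simp [rdiag, this]
    · simp
  unfold Matrix.trace
  rw [show Matrix.diag (rdiag n m x * V * (rdiag n m y)ᵀ * Uu)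
      = fun i => ∑ p, (rdiag n m x * V * (rdiag n m y)ᵀ) i p * Uu p i from rfl]
  refine Finset.sum_congr rfl fun i _ => Finset.sum_congr rfl fun p _ => ?_
  rw [h2]
  ring

lemma vonNeumann {n m : ℕ} (hnm : n ≤ m) (X Y : Matrix (Fin n) (Fin m) ℝ) :
    finner X Y ≤ ∑ i, sigma X i * sigma Y i := by
  obtain ⟨A, B, hA, hB, hX⟩ := svd_exists hnm X
  obtain ⟨C, E, hC, hE, hYs⟩ := svd_exists hnm Y
  set x := sigma X with hx
  set y := sigma Y with hy
  set V : Matrix (Fin m) (Fin m) ℝ := Bᵀ * E with hV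
  set Uu : Matrix (Fin n) (Fin n) ℝ := Cᵀ * A with hUu
  have hVo : V * Vᵀ = 1 := orth_mul (orth_transpose hB) hE
  have hVt : Vᵀ * Vᵀᵀ = 1 := orth_transpose hVo
  have hUo : Uu * Uuᵀ = 1 := orth_mul (orth_transpose hC) hA
  have hUt : Uuᵀ * Uuᵀᵀ = 1 := orth_transpose hUo
  have htr : finner X Y = Matrix.trace (rdiag n m x * V * (rdiag n m y)ᵀ * Uu) := by
    rw [finner_eq_trace]
    conv_lhs => rw [hX, hYs]
    have h1 : (C * rdiag n m y * Eᵀ)ᵀ = E * ((rdiag n m y)ᵀ * Cᵀ) := by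
      rw [Matrix.transpose_mul, Matrix.transpose_mul, Matrix.transpose_transpose]
    rw [h1]
    rw [show A * rdiag n m x * Bᵀ * (E * ((rdiag n m y)ᵀ * Cᵀ))
        = A * (rdiag n m x * Bᵀ * (E * ((rdiag n m y)ᵀ * Cᵀ))) by simp only [Matrix.mul_assoc]]
    rw [Matrix.trace_mul_comm A]
    congr 1
    simp only [hV, hUu, Matrix.mul_assoc]
  rw [htr, trace_rdiag_mid hnm]
  set c : Fin n → Fin n → ℝ := fun i p => V (Fin.castLE hnm i) (Fin.castLE hnm p) * Uu p i with hc
  have habs : ∀ t : ℝ, 0 ≤ t → t ^ 2 ≤ 1 → t ≤ 1 := by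
    intro t h0 h1; nlinarith
  have hrowb : ∀ i, ∑ p, |c i p| ≤ 1 := by
    intro i
    have hcs := Finset.sum_mul_sq_le_sq_mul_sq Finset.univ
      (fun p => |V (Fin.castLE hnm i) (Fin.castLE hnm p)|) (fun p => |Uu p i|)
    have h2 : ∑ p, |V (Fin.castLE hnm i) (Fin.castLE hnm p)| ^ 2 ≤ 1 := by
      have h3 : ∀ p : Fin n, |V (Fin.castLE hnm i) (Fin.castLE hnm p)| ^ 2
          = (fun l => V (Fin.castLE hnm i) l * V (Fin.castLE hnm i) l) (Fin.castLE hnm p) := by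
        intro p; rw [sq_abs]; ring
      rw [Finset.sum_congr rfl fun p _ => h3 p]
      refine le_trans (sum_castLE_le hnm _ (fun l => mul_self_nonneg _)) ?_
      rw [sq_row_sum hVo]
    have h4 : ∑ p, |Uu p i| ^ 2 = 1 := by
      have : ∀ p : Fin n, |Uu p i| ^ 2 = Uu p i * Uu p i := fun p => by rw [sq_abs]; ring
      rw [Finset.sum_congr rfl fun p _ => this p, sq_col_sum hUo]
    refine habs _ (Finset.sum_nonneg fun p _ => abs_nonneg _) ?_
    calc (∑ p, |c i p|) ^ 2
        = (∑ p, |V (Fin.castLE hnm i) (Fin.castLE hnm p)| * |Uu p i|) ^ 2 := by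
          congr 1
          exact Finset.sum_congr rfl fun p _ => by rw [hc, abs_mul]
      _ ≤ (∑ p, |V (Fin.castLE hnm i) (Fin.castLE hnm p)| ^ 2) * ∑ p, |Uu p i| ^ 2 := hcs
      _ ≤ 1 * 1 := by
          refine mul_le_mul h2 (le_of_eq h4) ?_ zero_le_one
          exact Finset.sum_nonneg fun p _ => sq_nonneg _
      _ = 1 := by norm_num
  have hcolb : ∀ p, ∑ i, |c i p| ≤ 1 := by
    intro p
    have hcs := Finset.sum_mul_sq_le_sq_mul_sq Finset.univ
      (fun i => |V (Fin.castLE hnm i) (Fin.castLE hnm p)|) (fun i => |Uu p i|)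
    have h2 : ∑ i, |V (Fin.castLE hnm i) (Fin.castLE hnm p)| ^ 2 ≤ 1 := by
      have h3 : ∀ i : Fin n, |V (Fin.castLE hnm i) (Fin.castLE hnm p)| ^ 2
          = (fun l => V l (Fin.castLE hnm p) * V l (Fin.castLE hnm p)) (Fin.castLE hnm i) := by
        intro i; rw [sq_abs]; ring
      rw [Finset.sum_congr rfl fun i _ => h3 i]
      refine le_trans (sum_castLE_le hnm
        (fun l => V l (Fin.castLE hnm p) * V l (Fin.castLE hnm p))
        (fun l => mul_self_nonneg _)) ?_
      rw [sq_col_sum hVo]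
    have h4 : ∑ i, |Uu p i| ^ 2 = 1 := by
      have : ∀ i : Fin n, |Uu p i| ^ 2 = Uu p i * Uu p i := fun i => by rw [sq_abs]; ring
      rw [Finset.sum_congr rfl fun i _ => this i, sq_row_sum hUo]
    refine habs _ (Finset.sum_nonneg fun i _ => abs_nonneg _) ?_
    calc (∑ i, |c i p|) ^ 2
        = (∑ i, |V (Fin.castLE hnm i) (Fin.castLE hnm p)| * |Uu p i|) ^ 2 := by
          congr 1
          exact Finset.sum_congr rfl fun i _ => by rw [hc, abs_mul]
      _ ≤ (∑ i, |V (Fin.castLE hnm i) (Fin.castLE hnm p)| ^ 2) * ∑ i, |Uu p i| ^ 2 := hcs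
      _ ≤ 1 * 1 := by
          refine mul_le_mul h2 (le_of_eq h4) ?_ zero_le_one
          exact Finset.sum_nonneg fun i _ => sq_nonneg _
      _ = 1 := by norm_num
  exact key_comb x y (sigma_antitone X) (sigma_antitone Y)
    (sigma_nonneg X) (sigma_nonneg Y) c hrowb hcolb

lemma frobSq_eq_sum_sigma {n m : ℕ} (hnm : n ≤ m) (X : Matrix (Fin n) (Fin m) ℝ) :
    finner X X = ∑ i, sigma X i * sigma X i := by
  obtain ⟨A, B, hA, hB, hX⟩ := svd_exists hnm X
  conv_lhs => rw [hX]
  rw [finner_conj hA hB, finner_rdiag hnm]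

/-- **Mirsky's inequality**. -/
lemma mirsky {n m : ℕ} (hnm : n ≤ m) (X Y : Matrix (Fin n) (Fin m) ℝ) :
    vnorm (sigma X - sigma Y) ≤ frobNorm (X - Y) := by
  rw [vnorm_eq_sqrt, frobNorm_eq_sqrt_finner]
  apply Real.sqrt_le_sqrt
  rw [finner_expand]
  have h1 : ∑ i, (sigma X - sigma Y) i * (sigma X - sigma Y) i
      = ∑ i, sigma X i * sigma X i + ∑ i, sigma Y i * sigma Y i
        - 2 * ∑ i, sigma X i * sigma Y i := by
    rw [← Finset.sum_add_distrib, Finset.mul_sum, ← Finset.sum_sub_distrib]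
    refine Finset.sum_congr rfl fun i _ => ?_
    simp only [Pi.sub_apply]
    ring
  rw [h1, frobSq_eq_sum_sigma hnm X, frobSq_eq_sum_sigma hnm Y]
  have h2 := vonNeumann hnm X Y
  linarith

lemma vnorm_nonneg' {k : ℕ} (x : Fin k → ℝ) : 0 ≤ vnorm x := Real.sqrt_nonneg _

lemma frobNorm_nonneg' {n m : ℕ} (X : Matrix (Fin n) (Fin m) ℝ) : 0 ≤ frobNorm X :=
  Real.sqrt_nonneg _

lemma vdist_bdd {k : ℕ} (x : Fin k → ℝ) (Q : Set (Fin k → ℝ)) :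
    BddBelow ((fun y => vnorm (x - y)) '' Q) := by
  refine ⟨0, fun r hr => ?_⟩
  obtain ⟨y, _, rfl⟩ := hr
  exact vnorm_nonneg' _

lemma frobdist_bdd {n m : ℕ} (X : Matrix (Fin n) (Fin m) ℝ)
    (S : Set (Matrix (Fin n) (Fin m) ℝ)) :
    BddBelow ((fun Z => frobNorm (X - Z)) '' S) := by
  refine ⟨0, fun r hr => ?_⟩
  obtain ⟨y, _, rfl⟩ := hr
  exact frobNorm_nonneg' _

lemma vdist_le {k : ℕ} (x : Fin k → ℝ) {Q : Set (Fin k → ℝ)} {y : Fin k → ℝ} (hy : y ∈ Q) :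
    vdistSet x Q ≤ vnorm (x - y) :=
  csInf_le (vdist_bdd x Q) ⟨y, hy, rfl⟩

lemma frobdist_le {n m : ℕ} (X : Matrix (Fin n) (Fin m) ℝ)
    {S : Set (Matrix (Fin n) (Fin m) ℝ)} {Y : Matrix (Fin n) (Fin m) ℝ} (hY : Y ∈ S) :
    frobDistSet X S ≤ frobNorm (X - Y) :=
  csInf_le (frobdist_bdd X S) ⟨Y, hY, rfl⟩

lemma sigma_mem {n m : ℕ} (hnm : n ≤ m) {S : Set (Fin n → ℝ)} (hS : AbsPermInv S)
    {Y : Matrix (Fin n) (Fin m) ℝ} (hY : Y ∈ lift n m S) : sigma Y ∈ S := by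
  obtain ⟨A, B, hA, hB, s, hs, rfl⟩ := hY
  rw [sigma_of_svd hnm hA hB]
  have h1 : mfn (sortedDesc (mfn fun i => |s i|) (mfn_card _)) = mfn (fun i => |s i|) :=
    mfn_sortedDesc _ _
  obtain ⟨π, hπ⟩ := exists_perm_of_mfn_eq h1
  have h2 := hS π (fun i => if 0 ≤ s (π i) then 1 else -1)
    (fun i => by split <;> [exact Or.inl rfl; exact Or.inr rfl]) s hs
  have h3 : (fun i => (if 0 ≤ s (π i) then (1:ℝ) else -1) * s (π i))
      = sortedDesc (mfn fun i => |s i|) (mfn_card _) := by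
    funext i
    rw [hπ i]
    split
    · rename_i h; rw [one_mul, abs_of_nonneg h]
    · rename_i h; rw [abs_of_neg (lt_of_not_ge h)]; ring
  rwa [h3] at h2

lemma frobDist_lift {n m : ℕ} (hnm : n ≤ m) {S : Set (Fin n → ℝ)} (hS : AbsPermInv S)
    (X : Matrix (Fin n) (Fin m) ℝ) :
    frobDistSet X (lift n m S) = vdistSet (sigma X) S := by
  obtain ⟨A, B, hA, hB, hX⟩ := svd_exists hnm X
  rcases S.eq_empty_or_nonempty with rfl | hne
  · have h1 : lift n m ∅ = ∅ := by
      ext Y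
      simp [lift]
    rw [h1]
    unfold frobDistSet vdistSet
    simp
  apply le_antisymm
  · apply le_csInf (hne.image _)
    rintro r ⟨s, hs, rfl⟩
    have hmem : A * rdiag n m s * Bᵀ ∈ lift n m S := ⟨A, B, hA, hB, s, hs, rfl⟩
    have heq : frobNorm (X - A * rdiag n m s * Bᵀ) = vnorm (sigma X - s) := by
      conv_lhs => rw [hX]
      exact frobNorm_conj_rdiag_sub hnm hA hB _ _
    calc frobDistSet X (lift n m S) ≤ frobNorm (X - A * rdiag n m s * Bᵀ) :=
          frobdist_le X hmem
      _ = vnorm (sigma X - s) := heq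
  · have hlift_ne : (lift n m S).Nonempty :=
      ⟨A * rdiag n m hne.choose * Bᵀ, A, B, hA, hB, hne.choose, hne.choose_spec, rfl⟩
    apply le_csInf (hlift_ne.image _)
    rintro r ⟨Y, hY, rfl⟩
    calc vdistSet (sigma X) S ≤ vnorm (sigma X - sigma Y) := vdist_le _ (sigma_mem hnm hS hY)
      _ ≤ frobNorm (X - Y) := mirsky hnm X Y

lemma proj_down {n m : ℕ} (hnm : n ≤ m) {S : Set (Fin n → ℝ)} (hS : AbsPermInv S)
    {X Y : Matrix (Fin n) (Fin m) ℝ} (hY : Y ∈ mprojSet (lift n m S) X) :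
    sigma Y ∈ vprojSet S (sigma X) := by
  obtain ⟨hYm, hYd⟩ := hY
  have hmem : sigma Y ∈ S := sigma_mem hnm hS hYm
  refine ⟨hmem, le_antisymm ?_ ?_⟩
  · calc vnorm (sigma X - sigma Y) ≤ frobNorm (X - Y) := mirsky hnm X Y
      _ = frobDistSet X (lift n m S) := hYd
      _ = vdistSet (sigma X) S := frobDist_lift hnm hS X
  · exact vdist_le _ hmem

lemma proj_up {n m : ℕ} (hnm : n ≤ m) {S : Set (Fin n → ℝ)} (hS : AbsPermInv S)
    {X : Matrix (Fin n) (Fin m) ℝ} {A : Matrix (Fin n) (Fin n) ℝ}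
    {B : Matrix (Fin m) (Fin m) ℝ} (hA : A * Aᵀ = 1) (hB : B * Bᵀ = 1)
    (hX : X = A * rdiag n m (sigma X) * Bᵀ) {s : Fin n → ℝ}
    (hs : s ∈ vprojSet S (sigma X)) :
    A * rdiag n m s * Bᵀ ∈ mprojSet (lift n m S) X := by
  refine ⟨⟨A, B, hA, hB, s, hs.1, rfl⟩, ?_⟩
  have heq : frobNorm (X - A * rdiag n m s * Bᵀ) = vnorm (sigma X - s) := by
    conv_lhs => rw [hX]
    exact frobNorm_conj_rdiag_sub hnm hA hB _ _
  rw [heq, hs.2, frobDist_lift hnm hS X]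

end SpecLift

/-- **Normal flatness lifts to spectral sets (singleton projections).** -/
theorem lift_normally_flat_singleton
    (n m : ℕ) (hnm : n ≤ m) (L M V U : Set (Fin n → ℝ))
    (hL : AbsPermInv L) (hM : AbsPermInv M) (hV : AbsPermInv V) (hU : AbsPermInv U)
    (hVo : IsOpen V) (hUo : IsOpen U) (hLV : L ⊆ V) (hMU : M ⊆ U)
    (hflat : ∀ x ∈ V ∩ U, vprojSet L x = ⋃ z ∈ vprojSet M x, vprojSet L z)
    (X : Matrix (Fin n) (Fin m) ℝ) (hX : X ∈ lift n m V ∩ lift n m U)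
    (Z W W' : Matrix (Fin n) (Fin m) ℝ)
    (hZ : mprojSet (lift n m M) X = {Z})
    (hW : mprojSet (lift n m L) X = {W})
    (hW' : mprojSet (lift n m L) Z = {W'}) :
    W = W' := by
  obtain ⟨A, B, hA, hB, hXsvd⟩ := SpecLift.svd_exists hnm X
  have hXV : SpecLift.sigma X ∈ V := SpecLift.sigma_mem hnm hV hX.1
  have hXU : SpecLift.sigma X ∈ U := SpecLift.sigma_mem hnm hU hX.2
  have hZmem : Z ∈ mprojSet (lift n m M) X := by rw [hZ]; rfl
  have hσZ : SpecLift.sigma Z ∈ vprojSet M (SpecLift.sigma X) :=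
    SpecLift.proj_down hnm hM hZmem
  have hZ' : A * rdiag n m (SpecLift.sigma Z) * Bᵀ ∈ mprojSet (lift n m M) X :=
    SpecLift.proj_up hnm hM hA hB hXsvd hσZ
  have hZeq : Z = A * rdiag n m (SpecLift.sigma Z) * Bᵀ := by
    have h1 : A * rdiag n m (SpecLift.sigma Z) * Bᵀ ∈ ({Z} :
        Set (Matrix (Fin n) (Fin m) ℝ)) := by rw [← hZ]; exact hZ'
    exact (Set.eq_of_mem_singleton h1).symm
  have hW'mem : W' ∈ mprojSet (lift n m L) Z := by rw [hW']; rfl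
  have hσW' : SpecLift.sigma W' ∈ vprojSet L (SpecLift.sigma Z) :=
    SpecLift.proj_down hnm hL hW'mem
  have hσW'X : SpecLift.sigma W' ∈ vprojSet L (SpecLift.sigma X) := by
    rw [hflat (SpecLift.sigma X) ⟨hXV, hXU⟩]
    exact Set.mem_biUnion hσZ hσW'
  have hWX : A * rdiag n m (SpecLift.sigma W') * Bᵀ ∈ mprojSet (lift n m L) X :=
    SpecLift.proj_up hnm hL hA hB hXsvd hσW'X
  have hWZ : A * rdiag n m (SpecLift.sigma W') * Bᵀ ∈ mprojSet (lift n m L) Z :=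
    SpecLift.proj_up hnm hL hA hB hZeq hσW'
  have e1 : A * rdiag n m (SpecLift.sigma W') * Bᵀ = W := by
    have := hW ▸ hWX
    exact Set.eq_of_mem_singleton this
  have e2 : A * rdiag n m (SpecLift.sigma W') * Bᵀ = W' := by
    have := hW' ▸ hWZ
    exact Set.eq_of_mem_singleton this
  rw [← e1, e2]

end
end

section
/- Let X = U·D·Vᵀ be a real n×n matrix with U, V orthogonal and D = diag(x) for a vector x ∈ ℝⁿ with x₁ ≥ x₂ ≥ … ≥ xₙ ≥ 0. Let 1 ≤ k ≤ n with x_k > 0, let D_k = diag(x₁,…,x_k,0,…,0), and set Y := U·D_k·Vᵀ. Then Y has rank k and ‖X − Y‖ = d(X, M_k), where M_k := {Z ∈ ℝ^{n×n} : rank Z = k}, ‖·‖ is the Frobenius norm, and d(X, M_k) := inf_{Z∈M_k}‖X − Z‖. -/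
open Matrix Finset

noncomputable section

local notation "⟪" x ", " y "⟫" => @inner ℝ _ _ x y

lemma enorm_sq {m : ℕ} (u : EuclideanSpace ℝ (Fin m)) : ‖u‖ ^ 2 = ∑ i, u i ^ 2 := by
  rw [EuclideanSpace.norm_eq, Real.sq_sqrt (by positivity)]
  simp [sq_abs]

section proj
variable {E : Type*} [NormedAddCommGroup E] [InnerProductSpace ℝ E]

lemma proj_pyth (W : Submodule ℝ E) [W.HasOrthogonalProjection] (v : E) :
    ‖v‖ ^ 2 = ‖(W.orthogonalProjection v : E)‖ ^ 2 + ‖v - W.orthogonalProjection v‖ ^ 2 := by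
  have h0 : ⟪(W.orthogonalProjection v : E), v - W.orthogonalProjection v⟫ = 0 :=
    (Submodule.sub_starProjection_mem_orthogonal (K := W) v) _ (W.orthogonalProjection v).2
  have := norm_add_sq_real (W.orthogonalProjection v : E) (v - W.orthogonalProjection v)
  rw [add_sub_cancel] at this
  rw [this, h0]; ring

lemma proj_min (W : Submodule ℝ E) [W.HasOrthogonalProjection] (v w : E) (hw : w ∈ W) :
    ‖v - W.orthogonalProjection v‖ ^ 2 ≤ ‖v - w‖ ^ 2 := by
  have h0 : ⟪v - W.orthogonalProjection v, (W.orthogonalProjection v : E) - w⟫ = 0 := by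
    rw [real_inner_comm]
    exact (Submodule.sub_starProjection_mem_orthogonal (K := W) v) _ (W.sub_mem (W.orthogonalProjection v).2 hw)
  have := norm_add_sq_real (v - W.orthogonalProjection v) ((W.orthogonalProjection v : E) - w)
  have hvw : v - W.orthogonalProjection v + ((W.orthogonalProjection v : E) - w) = v - w := by
    abel
  rw [hvw, h0] at this
  nlinarith [sq_nonneg ‖(W.orthogonalProjection v : E) - w‖]

lemma parseval {r : ℕ} (W : Submodule ℝ E) [W.HasOrthogonalProjection] [FiniteDimensional ℝ W]
    (b : OrthonormalBasis (Fin r) ℝ W) (v : E) :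
    ‖(W.orthogonalProjection v : E)‖ ^ 2 = ∑ s, ⟪((b s : E)), v⟫ ^ 2 := by
  set p : W := W.orthogonalProjection v with hp
  have h1 : ‖(p : E)‖ = ‖p‖ := rfl
  have h2 : ‖p‖ ^ 2 = ∑ s, (b.repr p s) ^ 2 := by
    rw [← b.repr.norm_map p, enorm_sq]
  have h3 : ∀ s, b.repr p s = ⟪((b s : E)), v⟫ := by
    intro s
    rw [b.repr_apply_apply, Submodule.coe_inner]
    have h0 : ⟪(b s : E), v - (p : E)⟫ = 0 :=
      (Submodule.sub_starProjection_mem_orthogonal (K := W) v) _ (b s).2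
    rw [inner_sub_right, sub_eq_zero] at h0
    exact h0.symm
  rw [h1, h2]
  exact Finset.sum_congr rfl fun s _ => by rw [h3]
end proj



lemma card_filter_lt_k {n k : ℕ} (hkn : k ≤ n) :
    (Finset.univ.filter fun j : Fin n => (j : ℕ) < k).card = k := by
  rw [← Fintype.card_subtype]
  have e : {j : Fin n // (j : ℕ) < k} ≃ Fin k :=
    { toFun := fun j => ⟨j.1.1, j.2⟩
      invFun := fun i => ⟨⟨i.1, lt_of_lt_of_le i.2 hkn⟩, i.2⟩
      left_inv := fun j => rfl
      right_inv := fun i => rfl }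
  rw [Fintype.card_congr e, Fintype.card_fin]

lemma weight_ineq {n k : ℕ} (hk1 : 1 ≤ k) (hkn : k ≤ n) (d t : Fin n → ℝ)
    (hd0 : ∀ i, 0 ≤ d i) (hmono : ∀ i j : Fin n, i ≤ j → d j ≤ d i)
    (ht0 : ∀ j, 0 ≤ t j) (ht1 : ∀ j, t j ≤ 1)
    (hsum : (n : ℝ) - k ≤ ∑ j, t j) :
    ∑ j : Fin n, (if k ≤ (j : ℕ) then d j ^ 2 else 0) ≤ ∑ j, d j ^ 2 * t j := by
  have hkpos : k - 1 < n := by omega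
  set c : ℝ := d ⟨k - 1, hkpos⟩ ^ 2 with hc
  have hc0 : 0 ≤ c := sq_nonneg _
  set A := Finset.univ.filter fun j : Fin n => (j : ℕ) < k with hA
  set B := Finset.univ.filter fun j : Fin n => ¬ (j : ℕ) < k with hB
  have hcardA : A.card = k := card_filter_lt_k hkn
  have hcardB : B.card = n - k := by
    have := Finset.card_filter_add_card_filter_not
      (s := (Finset.univ : Finset (Fin n))) (p := fun j : Fin n => (j : ℕ) < k)
    simp only [Finset.card_univ, Fintype.card_fin] at this
    rw [hB]
    have hA' := card_filter_lt_k (n := n) hkn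
    omega
  -- bounds on d
  have hdB : ∀ j ∈ B, d j ^ 2 ≤ c := by
    intro j hj
    simp only [hB, Finset.mem_filter] at hj
    have : (⟨k - 1, hkpos⟩ : Fin n) ≤ j := by
      simp [Fin.le_def]; omega
    have := hmono _ _ this
    nlinarith [hd0 j, hd0 (⟨k-1, hkpos⟩ : Fin n)]
  have hdA : ∀ j ∈ A, c ≤ d j ^ 2 := by
    intro j hj
    simp only [hA, Finset.mem_filter] at hj
    have : j ≤ (⟨k - 1, hkpos⟩ : Fin n) := by
      simp [Fin.le_def]; omega
    have := hmono _ _ this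
    nlinarith [hd0 j, hd0 (⟨k-1, hkpos⟩ : Fin n)]
  have hsplit : ∀ f : Fin n → ℝ, ∑ j, f j = ∑ j ∈ A, f j + ∑ j ∈ B, f j := by
    intro f
    rw [hA, hB]
    exact (Finset.sum_filter_add_sum_filter_not _ _ _).symm
  -- LHS equals sum over B of d^2
  have hLHS : ∑ j : Fin n, (if k ≤ (j : ℕ) then d j ^ 2 else 0) = ∑ j ∈ B, d j ^ 2 := by
    rw [hB, Finset.sum_filter]
    refine Finset.sum_congr rfl fun j _ => ?_
    by_cases h : (j : ℕ) < k
    · simp [h, Nat.not_le.mpr h]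
    · simp [h, Nat.not_lt.mp h]
  rw [hLHS, hsplit fun j => d j ^ 2 * t j]
  -- key chain
  have h1 : ∑ j ∈ B, d j ^ 2 * (1 - t j) ≤ c * ∑ j ∈ B, (1 - t j) := by
    rw [Finset.mul_sum]
    refine Finset.sum_le_sum fun j hj => ?_
    have := ht1 j
    exact mul_le_mul_of_nonneg_right (hdB j hj) (by linarith)
  have h2 : c * ∑ j ∈ A, t j ≤ ∑ j ∈ A, d j ^ 2 * t j := by
    rw [Finset.mul_sum]
    exact Finset.sum_le_sum fun j hj => mul_le_mul_of_nonneg_right (hdA j hj) (ht0 j)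
  have h3 : ∑ j ∈ B, (1 - t j) ≤ ∑ j ∈ A, t j := by
    have hsB : ∑ j ∈ B, (1 - t j) = (n - k : ℝ) - ∑ j ∈ B, t j := by
      rw [Finset.sum_sub_distrib, Finset.sum_const, hcardB, nsmul_eq_mul, mul_one]
      push_cast [Nat.cast_sub hkn]
      ring
    have hAB : ∑ j ∈ A, t j + ∑ j ∈ B, t j = ∑ j, t j := (hsplit t).symm
    rw [hsB]
    have : (n : ℝ) - k ≤ ∑ j ∈ A, t j + ∑ j ∈ B, t j := by rw [hAB]; exact hsum
    linarith
  have h4 : ∑ j ∈ B, d j ^ 2 - ∑ j ∈ B, d j ^ 2 * t j = ∑ j ∈ B, d j ^ 2 * (1 - t j) := by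
    rw [← Finset.sum_sub_distrib]
    exact Finset.sum_congr rfl fun j _ => by ring
  have := mul_le_mul_of_nonneg_left h3 hc0
  linarith

lemma frob_trace {n : ℕ} (A : Matrix (Fin n) (Fin n) ℝ) :
    ∑ i, ∑ j, A i j ^ 2 = (Aᵀ * A).trace := by
  rw [Matrix.trace, Finset.sum_comm]
  refine Finset.sum_congr rfl fun j _ => ?_
  simp [Matrix.diag, Matrix.mul_apply, Matrix.transpose_apply, sq]

lemma frobSq_conj {n : ℕ} (U V A : Matrix (Fin n) (Fin n) ℝ)
    (hU : Uᵀ * U = 1) (hV : Vᵀ * V = 1) :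
    ∑ i, ∑ j, (U * A * Vᵀ) i j ^ 2 = ∑ i, ∑ j, A i j ^ 2 := by
  rw [frob_trace, frob_trace]
  have h1 : (U * A * Vᵀ)ᵀ * (U * A * Vᵀ) = V * (Aᵀ * A) * Vᵀ := by
    simp only [Matrix.transpose_mul, Matrix.transpose_transpose]
    calc V * (Aᵀ * Uᵀ) * (U * A * Vᵀ) = V * (Aᵀ * ((Uᵀ * U) * (A * Vᵀ))) := by
          simp only [Matrix.mul_assoc]
      _ = V * (Aᵀ * A) * Vᵀ := by rw [hU, Matrix.one_mul, Matrix.mul_assoc, Matrix.mul_assoc]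
  rw [h1, Matrix.trace_mul_cycle, ← Matrix.mul_assoc, hV, Matrix.one_mul]

lemma frobSq_diagonal {n : ℕ} (w : Fin n → ℝ) :
    ∑ i, ∑ j, (Matrix.diagonal w) i j ^ 2 = ∑ i, w i ^ 2 := by
  refine Finset.sum_congr rfl fun i _ => ?_
  rw [Finset.sum_eq_single i (fun j _ hj => by simp [Matrix.diagonal_apply_ne _ (Ne.symm hj)])
    (by simp)]
  simp


lemma eckart_lower {n k : ℕ} (hk1 : 1 ≤ k) (hkn : k ≤ n) (d : Fin n → ℝ)
    (hmono : ∀ i j : Fin n, i ≤ j → d j ≤ d i) (hd0 : ∀ i, 0 ≤ d i)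
    (Z : Matrix (Fin n) (Fin n) ℝ) (hZ : Z.rank ≤ k) :
    ∑ i : Fin n, (if k ≤ (i : ℕ) then d i ^ 2 else 0) ≤
      ∑ i, ∑ j, (Matrix.diagonal d - Z) i j ^ 2 := by
  classical
  set E := EuclideanSpace ℝ (Fin n) with hE
  let e : (Fin n → ℝ) ≃ₗ[ℝ] E := (WithLp.linearEquiv 2 ℝ (Fin n → ℝ)).symm
  set W : Submodule ℝ E := (LinearMap.range Z.mulVecLin).map (e : (Fin n → ℝ) →ₗ[ℝ] E) with hW
  have hrW : Module.finrank ℝ W = Z.rank := by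
    rw [hW]
    exact LinearEquiv.finrank_map_eq e (LinearMap.range Z.mulVecLin)
  set r := Module.finrank ℝ W with hr
  have hrk : r ≤ k := by rw [hrW]; exact hZ
  let b : OrthonormalBasis (Fin r) ℝ W := stdOrthonormalBasis ℝ W
  let q : Fin r → E := fun s => ((b s : W) : E)
  have hq_norm : ∀ s, ∑ i, q s i ^ 2 = 1 := by
    intro s
    have h1 : ‖q s‖ = 1 := by
      have := b.orthonormal.1 s
      exact this
    rw [← enorm_sq, h1, one_pow]
  have hinner : ∀ (s : Fin r) (v : E), ⟪q s, v⟫ = ∑ i, q s i * v i := by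
    intro s v
    simp [PiLp.inner_apply, RCLike.inner_apply, E]
    exact Finset.sum_congr rfl fun i _ => mul_comm _ _
  -- column membership
  have hcol : ∀ j : Fin n, ∃ wj : E, wj ∈ W ∧ ∀ i, wj i = Z i j := by
    intro j
    refine ⟨e (Z *ᵥ Pi.single j 1), Submodule.mem_map_of_mem ⟨Pi.single j 1, rfl⟩, ?_⟩
    intro i
    show (Z *ᵥ Pi.single j 1) i = Z i j
    simp
  set t : Fin n → ℝ := fun j => 1 - ∑ s, q s j ^ 2 with ht
  -- projection of singles
  have hProjSq : ∀ (j : Fin n) (a : ℝ),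
      ‖(W.orthogonalProjection (EuclideanSpace.single j a) : E)‖ ^ 2
        = a ^ 2 * ∑ s, q s j ^ 2 := by
    intro j a
    rw [parseval W b]
    rw [Finset.mul_sum]
    refine Finset.sum_congr rfl fun s _ => ?_
    rw [hinner]
    rw [Finset.sum_eq_single j (fun i _ hij => by
      simp [EuclideanSpace.single_apply, hij]) (by simp)]
    simp [EuclideanSpace.single_apply]
    ring
  have hsingle_norm : ∀ (j : Fin n) (a : ℝ), ‖(EuclideanSpace.single j a : E)‖ ^ 2 = a ^ 2 := by
    intro j a
    rw [enorm_sq]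
    rw [Finset.sum_eq_single j (fun i _ hij => by simp [EuclideanSpace.single_apply, hij])
      (by simp)]
    simp [EuclideanSpace.single_apply]
  have ht0 : ∀ j, 0 ≤ t j := by
    intro j
    have h := proj_pyth W (EuclideanSpace.single j (1 : ℝ))
    rw [hProjSq j 1, hsingle_norm j 1] at h
    have := sq_nonneg ‖(EuclideanSpace.single j (1:ℝ) : E) -
      W.orthogonalProjection (EuclideanSpace.single j (1:ℝ))‖
    simp only [ht]
    nlinarith
  have ht1 : ∀ j, t j ≤ 1 := by
    intro j
    have : 0 ≤ ∑ s, q s j ^ 2 := Finset.sum_nonneg fun s _ => sq_nonneg _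
    simp only [ht]; linarith
  have hsum : (n : ℝ) - k ≤ ∑ j, t j := by
    have h1 : ∑ j, t j = (n : ℝ) - ∑ s, ∑ j, q s j ^ 2 := by
      simp only [ht]
      rw [Finset.sum_sub_distrib, Finset.sum_const, Finset.card_univ, Fintype.card_fin,
        nsmul_eq_mul, mul_one, Finset.sum_comm]
    rw [h1]
    have h2 : ∑ s, ∑ j, q s j ^ 2 = (r : ℝ) := by
      rw [Finset.sum_congr rfl fun s _ => hq_norm s]
      simp
    rw [h2]
    have : (r : ℝ) ≤ k := by exact_mod_cast hrk
    linarith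
  -- per-column bound
  have hcolbound : ∀ j : Fin n, d j ^ 2 * t j ≤ ∑ i, (Matrix.diagonal d - Z) i j ^ 2 := by
    intro j
    obtain ⟨wj, hwjW, hwji⟩ := hcol j
    set v : E := EuclideanSpace.single j (d j) with hv
    have h1 : ∑ i, (Matrix.diagonal d - Z) i j ^ 2 = ‖v - wj‖ ^ 2 := by
      rw [enorm_sq]
      refine Finset.sum_congr rfl fun i _ => ?_
      have hvi : (v - wj) i = v i - wj i := rfl
      rw [hvi, hwji i]
      congr 1
      rw [Matrix.sub_apply]
      congr 1
      by_cases hij : i = j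
      · subst hij; simp [hv, EuclideanSpace.single_apply, Matrix.diagonal_apply_eq]
      · simp [hv, EuclideanSpace.single_apply, Matrix.diagonal_apply_ne _ hij, hij]
    have h2 := proj_min W v wj hwjW
    have h3 := proj_pyth W v
    rw [hProjSq j (d j), hsingle_norm j (d j)] at h3
    rw [h1]
    simp only [ht]
    nlinarith
  calc ∑ i : Fin n, (if k ≤ (i : ℕ) then d i ^ 2 else 0)
      ≤ ∑ j, d j ^ 2 * t j :=
        weight_ineq hk1 hkn d t hd0 hmono ht0 ht1 hsum
    _ ≤ ∑ j, ∑ i, (Matrix.diagonal d - Z) i j ^ 2 :=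
        Finset.sum_le_sum fun j _ => hcolbound j
    _ = ∑ i, ∑ j, (Matrix.diagonal d - Z) i j ^ 2 := Finset.sum_comm

lemma card_subtype_lt_k {n k : ℕ} (hkn : k ≤ n) :
    Fintype.card {j : Fin n // (j : ℕ) < k} = k := by
  have e : {j : Fin n // (j : ℕ) < k} ≃ Fin k :=
    { toFun := fun j => ⟨j.1.1, j.2⟩
      invFun := fun i => ⟨⟨i.1, lt_of_lt_of_le i.2 hkn⟩, i.2⟩
      left_inv := fun j => rfl
      right_inv := fun i => rfl }
  rw [Fintype.card_congr e, Fintype.card_fin]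

/-- **Best rank-`k` approximation via truncated singular values.** -/
theorem truncation_is_nearest_rank_k
    (n : ℕ) (U V : Matrix (Fin n) (Fin n) ℝ) (hU : U * Uᵀ = 1) (hV : V * Vᵀ = 1)
    (x : Fin n → ℝ) (hx : ∀ i j : Fin n, i ≤ j → x j ≤ x i) (hx0 : ∀ i, 0 ≤ x i)
    (X : Matrix (Fin n) (Fin n) ℝ) (hX : X = U * Matrix.diagonal x * Vᵀ)
    (k : ℕ) (hk1 : 1 ≤ k) (hkn : k ≤ n)
    (hxk : 0 < x ⟨k - 1, by omega⟩)
    (Dk : Matrix (Fin n) (Fin n) ℝ)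
    (hDk : Dk = Matrix.diagonal fun i : Fin n => if (i : ℕ) < k then x i else 0) :
    (U * Dk * Vᵀ).rank = k ∧
      frobNorm (X - U * Dk * Vᵀ) =
        frobDistSet X {Z : Matrix (Fin n) (Fin n) ℝ | Z.rank = k} := by
  classical
  have hUU : Uᵀ * U = 1 := mul_eq_one_comm.mp hU
  have hVV : Vᵀ * V = 1 := mul_eq_one_comm.mp hV
  have hUdet : IsUnit U.det :=
    IsUnit.of_mul_eq_one Uᵀ.det (by rw [← Matrix.det_mul, hU, Matrix.det_one])
  have hVdet : IsUnit V.det :=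
    IsUnit.of_mul_eq_one Vᵀ.det (by rw [← Matrix.det_mul, hV, Matrix.det_one])
  have hUtdet : IsUnit Uᵀ.det := by rwa [Matrix.det_transpose]
  have hVtdet : IsUnit Vᵀ.det := by rwa [Matrix.det_transpose]
  -- rank of Y
  have hrank : (U * Dk * Vᵀ).rank = k := by
    rw [Matrix.rank_mul_eq_left_of_isUnit_det Vᵀ (U * Dk) hVtdet,
      Matrix.rank_mul_eq_right_of_isUnit_det U Dk hUdet, hDk, Matrix.rank_diagonal]
    have hiff : ∀ i : Fin n, ((if (i : ℕ) < k then x i else 0) ≠ 0) ↔ (i : ℕ) < k := by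
      intro i
      by_cases h : (i : ℕ) < k
      · have hik : i ≤ (⟨k - 1, by omega⟩ : Fin n) := by
          simp only [Fin.le_def]; omega
        have := hx i _ hik
        simp only [h, if_true, iff_true]
        intro h0
        rw [h0] at this
        exact absurd (lt_of_lt_of_le hxk this) (lt_irrefl 0)
      · simp [h]
    rw [Fintype.card_congr (Equiv.subtypeEquivRight hiff)]
    exact card_subtype_lt_k hkn
  refine ⟨hrank, ?_⟩
  set Y := U * Dk * Vᵀ with hY
  set D := Matrix.diagonal x with hD
  -- value of ‖X - Y‖²
  have hXY : X - Y = U * (D - Dk) * Vᵀ := by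
    rw [hX, hY, Matrix.mul_sub, Matrix.sub_mul]
  have hfrobXY : ∑ i, ∑ j, (X - Y) i j ^ 2
      = ∑ i : Fin n, (if k ≤ (i : ℕ) then x i ^ 2 else 0) := by
    rw [hXY, frobSq_conj U V (D - Dk) hUU hVV, hD, hDk, Matrix.diagonal_sub,
      frobSq_diagonal]
    refine Finset.sum_congr rfl fun i _ => ?_
    by_cases h : (i : ℕ) < k
    · simp [h, Nat.not_le.mpr h]
    · simp [h, Nat.not_lt.mp h]
  -- lower bound : for each Z of rank k
  have hlow : ∀ Z : Matrix (Fin n) (Fin n) ℝ, Z.rank = k →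
      frobNorm (X - Y) ≤ frobNorm (X - Z) := by
    intro Z hZk
    set Z' := Uᵀ * Z * V with hZ'
    have hZ'rank : Z'.rank ≤ k := by
      rw [hZ', Matrix.rank_mul_eq_left_of_isUnit_det V (Uᵀ * Z) hVdet,
        Matrix.rank_mul_eq_right_of_isUnit_det Uᵀ Z hUtdet, hZk]
    have hZrec : U * Z' * Vᵀ = Z := by
      rw [hZ']
      calc U * (Uᵀ * Z * V) * Vᵀ = (U * Uᵀ) * Z * (V * Vᵀ) := by
            simp only [Matrix.mul_assoc]
        _ = Z := by rw [hU, hV, Matrix.one_mul, Matrix.mul_one]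
    have hXZ : X - Z = U * (D - Z') * Vᵀ := by
      rw [Matrix.mul_sub, Matrix.sub_mul, hZrec, hX]
    have hsq : ∑ i, ∑ j, (X - Z) i j ^ 2 = ∑ i, ∑ j, (D - Z') i j ^ 2 := by
      rw [hXZ]
      exact frobSq_conj U V (D - Z') hUU hVV
    have hkey := eckart_lower hk1 hkn x hx hx0 Z' hZ'rank
    rw [frobNorm, frobNorm]
    apply Real.sqrt_le_sqrt
    rw [hfrobXY, hsq, hD]
    exact hkey
  -- assemble the sInf
  have hYmem : Y ∈ {Z : Matrix (Fin n) (Fin n) ℝ | Z.rank = k} := hrank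
  have hne : ((fun Z => frobNorm (X - Z)) ''
      {Z : Matrix (Fin n) (Fin n) ℝ | Z.rank = k}).Nonempty :=
    ⟨_, ⟨Y, hYmem, rfl⟩⟩
  have hbdd : BddBelow ((fun Z => frobNorm (X - Z)) ''
      {Z : Matrix (Fin n) (Fin n) ℝ | Z.rank = k}) := by
    refine ⟨0, ?_⟩
    rintro y ⟨Z, _, rfl⟩
    exact Real.sqrt_nonneg _
  rw [frobDistSet]
  refine le_antisymm ?_ (csInf_le hbdd ⟨Y, hYmem, rfl⟩)
  refine le_csInf hne ?_
  rintro y ⟨Z, hZS, rfl⟩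
  exact hlow Z hZS


end
end
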